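/- arXiv:0712.3996 — 4 statements merged into one kernel-verified Lean document; each statement's English description precedes it below -/
import Mathlib

section
/- Injectivity of the restriction map: For any n-tuple a of positive integers, integers 0 ≤ m ≤ m' ≤ |a|, and 𝓑 = Sint(a;m) ∪ Int(a;m) ∪ Int(a;m+1) ∪ … ∪ Int(a;m') (with the zero vector added when m = 0), the restriction map 𝒯(B_m^{m'}(a)) → ℝ^𝓑 is injective; that is, any TP-function on B_m^{m'}(a) is determined by its values on 𝓑. -/
/-- The `q`-th unit vector of `ℤ^n` (modelled with `ℕ` coordinates, since box
vectors are nonnegative). -/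
def unitv (n : ℕ) (q : Fin n) : Fin n → ℕ := fun i => if i = q then 1 else 0

/-- The size `|x| = x_1 + … + x_n` of a vector. -/
def vsize {n : ℕ} (x : Fin n → ℕ) : ℕ := ∑ i, x i

/-- The truncated box `B_m^{m'}(a) = {x : 0 ≤ x ≤ a, m ≤ |x| ≤ m'}`. -/
def tbox {n : ℕ} (a : Fin n → ℕ) (m m' : ℕ) : Set (Fin n → ℕ) :=
  {x | (∀ i, x i ≤ a i) ∧ m ≤ vsize x ∧ vsize x ≤ m'}

/-- The TP3-relations on a subset `B` of `ℤ^n`. -/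
def TP3 {n : ℕ} (B : Set (Fin n → ℕ)) (f : (Fin n → ℕ) → ℝ) : Prop :=
  ∀ (x : Fin n → ℕ) (i j k : Fin n), i < j → j < k →
    x + unitv n i + unitv n k ∈ B → x + unitv n j ∈ B →
    x + unitv n i + unitv n j ∈ B → x + unitv n k ∈ B →
    x + unitv n i ∈ B → x + unitv n j + unitv n k ∈ B →
    f (x + unitv n i + unitv n k) + f (x + unitv n j) =
      max (f (x + unitv n i + unitv n j) + f (x + unitv n k))
          (f (x + unitv n i) + f (x + unitv n j + unitv n k))

/-- The TP4-relations on a subset `B` of `ℤ^n`. -/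
def TP4 {n : ℕ} (B : Set (Fin n → ℕ)) (f : (Fin n → ℕ) → ℝ) : Prop :=
  ∀ (x : Fin n → ℕ) (i j k l : Fin n), i < j → j < k → k < l →
    x + unitv n i + unitv n k ∈ B → x + unitv n j + unitv n l ∈ B →
    x + unitv n i + unitv n j ∈ B → x + unitv n k + unitv n l ∈ B →
    x + unitv n i + unitv n l ∈ B → x + unitv n j + unitv n k ∈ B →
    f (x + unitv n i + unitv n k) + f (x + unitv n j + unitv n l) =
      max (f (x + unitv n i + unitv n j) + f (x + unitv n k + unitv n l))
          (f (x + unitv n i + unitv n l) + f (x + unitv n j + unitv n k))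

/-- A tropical Plücker function on `B`. -/
def IsTP {n : ℕ} (B : Set (Fin n → ℕ)) (f : (Fin n → ℕ) → ℝ) : Prop :=
  TP3 B f ∧ TP4 B f

/-- `x` is a fuzzy-interval (fint) in the box `B(a)`: it is a nonzero vector of the
box and `x_j = a_j` for every index `j` lying strictly between two indices of the
support of `x` (equivalently, strictly between `c(x)` and `d(x)`). -/
def IsFint {n : ℕ} (a x : Fin n → ℕ) : Prop :=
  (∀ i, x i ≤ a i) ∧ x ≠ 0 ∧
  ∀ i j k : Fin n, i < j → j < k → x i ≠ 0 → x k ≠ 0 → x j = a j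

/-- `x` is a sesquialteral fuzzy-interval (sint): not a fint, but the sum of two
fints `x', x''` with `d(x') < c(x'')` and `x'_i = a_i` for all `i < d(x')`. -/
def IsSint {n : ℕ} (a x : Fin n → ℕ) : Prop :=
  ¬ IsFint a x ∧
  ∃ x' x'' : Fin n → ℕ, IsFint a x' ∧ IsFint a x'' ∧ x = x' + x'' ∧
    (∀ i j : Fin n, x' i ≠ 0 → x'' j ≠ 0 → i < j) ∧
    (∀ i : Fin n, (∃ j, i < j ∧ x' j ≠ 0) → x' i = a i)

/-- The standard basis `𝓑 = Sint(a;m) ∪ Int(a;m) ∪ … ∪ Int(a;m')`, with the zero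
vector added when `m = 0`. -/
def stdBasis {n : ℕ} (a : Fin n → ℕ) (m m' : ℕ) : Set (Fin n → ℕ) :=
  {x | (IsSint a x ∧ vsize x = m) ∨ (IsFint a x ∧ m ≤ vsize x ∧ vsize x ≤ m') ∨
       (m = 0 ∧ x = 0)}

namespace TPaux

open Finset

variable {n : ℕ}

def subv (x : Fin n → ℕ) (e : Fin n) : Fin n → ℕ := fun t => if t = e then x t - 1 else x t
def addv (x : Fin n → ℕ) (j : Fin n) : Fin n → ℕ := fun t => if t = j then x t + 1 else x t

lemma sum_shift {f g : Fin n → ℕ} {e : Fin n} {c : ℕ}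
    (h : ∀ t, t ≠ e → f t = g t) (he : f e + c = g e) :
    (∑ t, f t) + c = ∑ t, g t := by
  classical
  rw [← Finset.add_sum_erase _ f (Finset.mem_univ e),
      ← Finset.add_sum_erase _ g (Finset.mem_univ e)]
  have H : ∑ t ∈ Finset.univ.erase e, f t = ∑ t ∈ Finset.univ.erase e, g t :=
    Finset.sum_congr rfl fun t ht => h t (Finset.ne_of_mem_erase ht)
  omega

lemma sum_cond_subv (w : Fin n → Prop) [DecidablePred w] (x : Fin n → ℕ) (e : Fin n)
    (hxe : x e ≠ 0) (hwe : w e) :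
    (∑ t, if w t then subv x e t else 0) + 1 = ∑ t, if w t then x t else 0 := by
  refine sum_shift (e := e) (fun t ht => by simp [subv, ht]) ?_
  simp only [subv, if_pos hwe, if_pos rfl, if_true]
  omega

lemma sum_cond_subv_ne (w : Fin n → Prop) [DecidablePred w] (x : Fin n → ℕ) (e : Fin n)
    (hwe : ¬ w e) :
    (∑ t, if w t then subv x e t else 0) = ∑ t, if w t then x t else 0 := by
  refine Finset.sum_congr rfl fun t _ => ?_
  by_cases ht : t = e
  · subst ht; simp [hwe]
  · simp [subv, ht]

lemma sum_cond_addv (w : Fin n → Prop) [DecidablePred w] (x : Fin n → ℕ) (j : Fin n)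
    (hwj : w j) :
    (∑ t, if w t then x t else 0) + 1 = ∑ t, if w t then addv x j t else 0 := by
  refine sum_shift (e := j) (fun t ht => by simp [addv, ht]) ?_
  simp [addv, hwj]

lemma sum_cond_addv_ne (w : Fin n → Prop) [DecidablePred w] (x : Fin n → ℕ) (j : Fin n)
    (hwj : ¬ w j) :
    (∑ t, if w t then x t else 0) = ∑ t, if w t then addv x j t else 0 := by
  refine Finset.sum_congr rfl fun t _ => ?_
  by_cases ht : t = j
  · subst ht; simp [hwj]
  · simp [addv, ht]

lemma vsize_subv (x : Fin n → ℕ) (e : Fin n) (hxe : x e ≠ 0) :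
    vsize (subv x e) + 1 = vsize x := by
  refine sum_shift (e := e) (fun t ht => by simp [subv, ht]) ?_
  simp only [subv, if_pos rfl, if_true]
  omega

lemma vsize_addv (x : Fin n → ℕ) (j : Fin n) :
    vsize x + 1 = vsize (addv x j) := by
  refine sum_shift (e := j) (fun t ht => by simp [addv, ht]) ?_
  simp [addv]

lemma subv_le {a x : Fin n → ℕ} (h : ∀ i, x i ≤ a i) (e : Fin n) :
    ∀ i, subv x e i ≤ a i := by
  intro i; have := h i; simp only [subv]; split <;> omega

lemma addv_le {a x : Fin n → ℕ} (h : ∀ i, x i ≤ a i) {j : Fin n} (hj : x j < a j) :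
    ∀ i, addv x j i ≤ a i := by
  intro i; have := h i
  by_cases hi : i = j
  · subst hi; simp only [addv]; simp only [eq_self_iff_true, if_true]; omega
  · simpa [addv, hi] using this

lemma addv_unitv (z : Fin n → ℕ) (j : Fin n) : z + unitv n j = addv z j := by
  funext t
  by_cases h : t = j <;> simp [addv, unitv, h, Pi.add_apply]

lemma addv_subv_cancel (z : Fin n → ℕ) (e : Fin n) (h : z e ≠ 0) :
    addv (subv z e) e = z := by
  funext t
  simp only [addv, subv]
  split_ifs with h1
  · subst h1; omega
  · rfl

lemma comm_ss (z : Fin n → ℕ) (e f : Fin n) :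
    subv (subv z e) f = subv (subv z f) e := by
  funext t
  simp only [subv]
  split_ifs <;> omega

lemma comm_aa (z : Fin n → ℕ) (i j : Fin n) :
    addv (addv z i) j = addv (addv z j) i := by
  funext t
  simp only [addv]
  split_ifs <;> omega

lemma comm_as (z : Fin n → ℕ) {e j : Fin n} (h : e ≠ j) :
    addv (subv z e) j = subv (addv z j) e := by
  funext t
  simp only [addv, subv]
  by_cases h1 : t = j <;> by_cases h2 : t = e
  · exact absurd ((h1.symm.trans h2).symm) h
  · subst h1; rw [if_neg h2, if_neg h2]
  · subst h2; rw [if_neg h, if_neg h]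
  · simp [h1, h2]

lemma cmov (z : Fin n → ℕ) (e j t : Fin n) (h1 : t ≠ e) (h2 : t ≠ j) :
    addv (subv z e) j t = z t := by
  simp [addv, subv, h1, h2]

lemma addv_apply_self (z : Fin n → ℕ) (j : Fin n) : addv z j j = z j + 1 := by
  simp [addv]

lemma subv_apply_ne (z : Fin n → ℕ) {e t : Fin n} (h : t ≠ e) : subv z e t = z t := by
  simp [subv, h]

lemma addv_apply_ne (z : Fin n → ℕ) {j t : Fin n} (h : t ≠ j) : addv z j t = z t := by
  simp [addv, h]

lemma vsize_eq_zero {x : Fin n → ℕ} (h : vsize x = 0) : x = 0 := by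
  funext t
  have := Finset.sum_eq_zero_iff.1 h t (Finset.mem_univ t)
  simpa using this


section measures

variable (a : Fin n → ℕ)

/-- mass strictly to the right of the first deficient position -/
def Tm (x : Fin n → ℕ) : ℕ := ∑ t, if ∃ u, u < t ∧ x u < a u then x t else 0

/-- deficiency at positions having `P`-support strictly to the left and support
strictly to the right -/
def PhiP (x : Fin n → ℕ) (P : Fin n → Prop) [DecidablePred P] : ℕ :=
  ∑ t, if (∃ i, i < t ∧ P i ∧ x i ≠ 0) ∧ (∃ k, t < k ∧ x k ≠ 0) then a t - x t else 0

def PhiT (x : Fin n → ℕ) : ℕ := PhiP a x (fun i => ∃ u, u < i ∧ x u < a u)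

def Sgt (p : Fin n) (x : Fin n → ℕ) : ℕ := ∑ t, if p < t then x t else 0

lemma PhiP_le (x : Fin n → ℕ) (P : Fin n → Prop) [DecidablePred P] :
    PhiP a x P ≤ ∑ i, a i := by
  unfold PhiP
  refine Finset.sum_le_sum fun t _ => ?_
  split <;> omega

lemma PhiT_le (x : Fin n → ℕ) : PhiT a x ≤ ∑ i, a i := PhiP_le a x _

lemma PhiT_congr (x : Fin n → ℕ) (P : Fin n → Prop) [DecidablePred P]
    (h : ∀ i, (∃ u, u < i ∧ x u < a u) ↔ P i) : PhiT a x = PhiP a x P := by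
  unfold PhiT PhiP
  refine Finset.sum_congr rfl fun t _ => ?_
  refine if_congr (and_congr ?_ Iff.rfl) rfl rfl
  exact exists_congr fun i => and_congr_right fun _ => and_congr_left fun _ => h i

lemma Tm_le {x : Fin n → ℕ} {p : Fin n} (h1 : ∀ u, u < p → x u = a u) :
    Tm a x ≤ Sgt p x := by
  unfold Tm Sgt
  refine Finset.sum_le_sum fun t _ => ?_
  by_cases hpt : p < t
  · rw [if_pos hpt]; split <;> omega
  · rw [if_neg hpt]
    have : ¬ ∃ u, u < t ∧ x u < a u := by
      rintro ⟨u, hu, hlt⟩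
      have : u < p := lt_of_lt_of_le hu (not_lt.1 hpt)
      rw [h1 u this] at hlt; omega
    rw [if_neg this]

lemma Tm_eq {x : Fin n → ℕ} {p : Fin n} (h1 : ∀ u, u < p → x u = a u)
    (h2 : x p < a p) : Tm a x = Sgt p x := by
  unfold Tm Sgt
  refine Finset.sum_congr rfl fun t _ => ?_
  by_cases hpt : p < t
  · rw [if_pos hpt, if_pos ⟨p, hpt, h2⟩]
  · rw [if_neg hpt]
    have : ¬ ∃ u, u < t ∧ x u < a u := by
      rintro ⟨u, hu, hlt⟩
      have : u < p := lt_of_lt_of_le hu (not_lt.1 hpt)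
      rw [h1 u this] at hlt; omega
    rw [if_neg this]


lemma phiP_lt_left (x : Fin n → ℕ) (P : Fin n → Prop) [DecidablePred P]
    {e j k0 : Fin n} (hej : e < j) (hPe : P e) (hxe : x e ≠ 0)
    (hbel : ∀ u, u < e → P u → x u = 0) (hja : x j < a j)
    (hk0 : j < k0) (hxk0 : x k0 ≠ 0) :
    PhiP a (addv (subv x e) j) P < PhiP a x P := by
  unfold PhiP
  set x' := addv (subv x e) j with hx'
  have hco : ∀ t, t ≠ e → t ≠ j → x' t = x t := by
    intro t h1 h2; simp [hx', addv, subv, h1, h2]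
  have hcj : x' j = x j + 1 := by
    simp [hx', addv, subv, hej.ne']
  refine Finset.sum_lt_sum (fun t _ => ?_) ⟨j, Finset.mem_univ j, ?_⟩
  · by_cases htj : t = j
    · subst htj
      have hC : (∃ i, i < t ∧ P i ∧ x i ≠ 0) ∧ (∃ k, t < k ∧ x k ≠ 0) :=
        ⟨⟨e, hej, hPe, hxe⟩, ⟨k0, hk0, hxk0⟩⟩
      rw [if_pos hC]
      split
      · rw [hcj]; omega
      · omega
    · by_cases hte : t ≤ e
      · have : ¬ ((∃ i, i < t ∧ P i ∧ x' i ≠ 0) ∧ (∃ k, t < k ∧ x' k ≠ 0)) := by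
          rintro ⟨⟨i, hit, hPi, hxi⟩, -⟩
          have hie : i < e := lt_of_lt_of_le hit hte
          rw [hco i hie.ne (hie.trans hej).ne] at hxi
          exact hxi (hbel i hie hPi)
        rw [if_neg this]
        exact Nat.zero_le _
      · push_neg at hte
        rw [hco t hte.ne' htj]
        have himp : ((∃ i, i < t ∧ P i ∧ x' i ≠ 0) ∧ (∃ k, t < k ∧ x' k ≠ 0)) →
            ((∃ i, i < t ∧ P i ∧ x i ≠ 0) ∧ (∃ k, t < k ∧ x k ≠ 0)) := by
          rintro ⟨-, ⟨k, htk, hxk⟩⟩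
          refine ⟨⟨e, hte, hPe, hxe⟩, ?_⟩
          rcases lt_or_gt_of_ne htj with h | h
          · exact ⟨k0, h.trans hk0, hxk0⟩
          · have hkj : k ≠ j := (h.trans htk).ne'
            have hke : k ≠ e := ((hej.trans h).trans htk).ne'
            rw [hco k hke hkj] at hxk
            exact ⟨k, htk, hxk⟩
        split
        · rename_i hc; rw [if_pos (himp hc)]
        · exact Nat.zero_le _
  · have hC : (∃ i, i < j ∧ P i ∧ x i ≠ 0) ∧ (∃ k, j < k ∧ x k ≠ 0) :=
      ⟨⟨e, hej, hPe, hxe⟩, ⟨k0, hk0, hxk0⟩⟩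
    rw [if_pos hC]
    split
    · rw [hcj]; omega
    · omega

lemma phiP_lt_right (x : Fin n → ℕ) (P : Fin n → Prop) [DecidablePred P]
    {e j i0 : Fin n} (hje : j < e) (hxe : x e ≠ 0)
    (habv : ∀ u, e < u → x u = 0) (hja : x j < a j)
    (hi0 : i0 < j) (hPi0 : P i0) (hxi0 : x i0 ≠ 0) :
    PhiP a (addv (subv x e) j) P < PhiP a x P := by
  unfold PhiP
  set x' := addv (subv x e) j with hx'
  have hco : ∀ t, t ≠ e → t ≠ j → x' t = x t := by
    intro t h1 h2; simp [hx', addv, subv, h1, h2]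
  have hcj : x' j = x j + 1 := by
    simp [hx', addv, subv, hje.ne]
  refine Finset.sum_lt_sum (fun t _ => ?_) ⟨j, Finset.mem_univ j, ?_⟩
  · by_cases htj : t = j
    · subst htj
      have hC : (∃ i, i < t ∧ P i ∧ x i ≠ 0) ∧ (∃ k, t < k ∧ x k ≠ 0) :=
        ⟨⟨i0, hi0, hPi0, hxi0⟩, ⟨e, hje, hxe⟩⟩
      rw [if_pos hC]
      split
      · rw [hcj]; omega
      · omega
    · by_cases hte : e ≤ t
      · have : ¬ ((∃ i, i < t ∧ P i ∧ x' i ≠ 0) ∧ (∃ k, t < k ∧ x' k ≠ 0)) := by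
          rintro ⟨-, ⟨k, htk, hxk⟩⟩
          have hek : e < k := lt_of_le_of_lt hte htk
          rw [hco k hek.ne' (hje.trans hek).ne'] at hxk
          exact hxk (habv k hek)
        rw [if_neg this]
        exact Nat.zero_le _
      · push_neg at hte
        rw [hco t hte.ne htj]
        have himp : ((∃ i, i < t ∧ P i ∧ x' i ≠ 0) ∧ (∃ k, t < k ∧ x' k ≠ 0)) →
            ((∃ i, i < t ∧ P i ∧ x i ≠ 0) ∧ (∃ k, t < k ∧ x k ≠ 0)) := by
          rintro ⟨⟨i, hit, hPi, hxi⟩, -⟩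
          refine ⟨?_, ⟨e, hte, hxe⟩⟩
          rcases lt_or_gt_of_ne htj with h | h
          · have hij : i ≠ j := (hit.trans h).ne
            have hie : i ≠ e := ((hit.trans h).trans hje).ne
            rw [hco i hie hij] at hxi
            exact ⟨i, hit, hPi, hxi⟩
          · exact ⟨i0, hi0.trans h, hPi0, hxi0⟩
        split
        · rename_i hc; rw [if_pos (himp hc)]
        · exact Nat.zero_le _
  · have hC : (∃ i, i < j ∧ P i ∧ x i ≠ 0) ∧ (∃ k, j < k ∧ x k ≠ 0) :=
      ⟨⟨i0, hi0, hPi0, hxi0⟩, ⟨e, hje, hxe⟩⟩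
    rw [if_pos hC]
    split
    · rw [hcj]; omega
    · omega

end measures

end TPaux


open TPaux Finset

/-- **Injectivity of the restriction map** (Proposition 1): any TP-function on the
truncated box `B_m^{m'}(a)` is determined by its values on the standard basis
`𝓑 = Sint(a;m) ∪ Int(a;m) ∪ … ∪ Int(a;m')` (with the zero vector added when
`m = 0`). -/
theorem restriction_injective {n : ℕ} (a : Fin n → ℕ) (ha : ∀ i, 0 < a i)
    (m m' : ℕ) (hmm : m ≤ m') (hm' : m' ≤ vsize a)
    (f₁ f₂ : (Fin n → ℕ) → ℝ)
    (hf₁ : IsTP (tbox a m m') f₁) (hf₂ : IsTP (tbox a m m') f₂)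
    (hagree : ∀ x ∈ stdBasis a m m', f₁ x = f₂ x) :
    ∀ x ∈ tbox a m m', f₁ x = f₂ x := by

  classical
  set K := (∑ i, a i) + 1 with hK
  have hPhiTK : ∀ z : Fin n → ℕ, PhiT a z < K := fun z => by
    have := PhiT_le a z; omega
  have hPhiPK : ∀ z : Fin n → ℕ, PhiP a z (fun _ => True) < K := fun z => by
    have := PhiP_le a z (fun _ => True); omega
  have vmov : ∀ (z : Fin n → ℕ) (e j : Fin n), z e ≠ 0 →
      vsize (addv (subv z e) j) = vsize z := by
    intro z e j hz
    rw [← vsize_addv (subv z e) j, vsize_subv z e hz]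
  have bmov : ∀ (z : Fin n → ℕ) (e j : Fin n), (∀ i, z i ≤ a i) → z j < a j →
      ∀ i, addv (subv z e) j i ≤ a i := by
    intro z e j hb hj
    refine addv_le (subv_le hb e) ?_
    have h1 : subv z e j ≤ z j := by simp only [subv]; split <;> omega
    omega
  have memtb : ∀ z : Fin n → ℕ, (∀ i, z i ≤ a i) → m ≤ vsize z → vsize z ≤ m' →
      z ∈ tbox a m m' := fun z h1 h2 h3 => ⟨h1, h2, h3⟩
  -- ========== LEVEL m ==========
  have levelm : ∀ N (x : Fin n → ℕ), x ∈ tbox a m m' → vsize x = m →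
      Tm a x * K + PhiT a x ≤ N → f₁ x = f₂ x := by
    intro N
    induction N using Nat.strong_induction_on with
    | _ N IH =>
    intro x hx hvm hN
    obtain ⟨hxb, hxge, hxle⟩ := hx
    by_cases hfint : IsFint a x
    · exact hagree x (Or.inr (Or.inl ⟨hfint, hvm.ge, hvm.le.trans hmm⟩))
    by_cases hx0 : x = 0
    · refine hagree x (Or.inr (Or.inr ⟨?_, hx0⟩))
      rw [← hvm, hx0]; simp [vsize]
    -- the first deficient position p
    have hpex : ∃ u, x u < a u := by
      by_contra hcon; push_neg at hcon
      exact hfint ⟨hxb, hx0, fun i j k _ _ _ _ =>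
        le_antisymm (hxb j) (hcon j)⟩
    set Sp := Finset.univ.filter (fun u => x u < a u) with hSp
    have hSpne : Sp.Nonempty := by
      obtain ⟨u0, hu0⟩ := hpex; exact ⟨u0, by simp [hSp, hu0]⟩
    set p := Sp.min' hSpne with hpdef
    have hp : x p < a p := (Finset.mem_filter.1 (Sp.min'_mem hSpne)).2
    have hpmin : ∀ u, u < p → x u = a u := by
      intro u hu
      by_contra hne
      have h1 : x u < a u := lt_of_le_of_ne (hxb u) hne
      have h2 : p ≤ u := Finset.min'_le _ _ (by simp [hSp, h1])
      exact absurd hu (not_lt.2 h2)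
    -- q : minimal support after p
    by_cases hqex : ∃ t, p < t ∧ x t ≠ 0
    swap
    · push_neg at hqex
      refine absurd ⟨hxb, hx0, fun i j k hij hjk hi hk => ?_⟩ hfint
      have hkp : k ≤ p := by
        by_contra hh; push_neg at hh; exact hk (hqex k hh)
      exact hpmin j (lt_of_lt_of_le hjk hkp)
    set Sq := Finset.univ.filter (fun t => p < t ∧ x t ≠ 0) with hSq
    have hSqne : Sq.Nonempty := by
      obtain ⟨t0, ht0⟩ := hqex; exact ⟨t0, by simp [hSq, ht0.1, ht0.2]⟩
    set q := Sq.min' hSqne with hqdef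
    have hq : p < q ∧ x q ≠ 0 := (Finset.mem_filter.1 (Sq.min'_mem hSqne)).2
    have hqmin : ∀ t, p < t → t < q → x t = 0 := by
      intro t h1 h2
      by_contra hne
      have h3 : q ≤ t := Finset.min'_le _ _ (by simp [hSq, h1, hne])
      exact absurd h2 (not_lt.2 h3)
    -- d : maximal support
    set Sd := Finset.univ.filter (fun t => x t ≠ 0) with hSd
    have hSdne : Sd.Nonempty := ⟨q, by simp [hSd, hq.2]⟩
    set d := Sd.max' hSdne with hddef
    have hd : x d ≠ 0 := (Finset.mem_filter.1 (Sd.max'_mem hSdne)).2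
    have hdmax : ∀ t, x t ≠ 0 → t ≤ d :=
      fun t ht => Finset.le_max' _ _ (by simp [hSd, ht])
    -- r : minimal deficient position after q having support after it
    by_cases hrex : ∃ t, q < t ∧ x t < a t ∧ ∃ k, t < k ∧ x k ≠ 0
    swap
    · -- terminal case : x is a sint (or fint)
      push_neg at hrex
      by_cases hz : ∀ u, u ≤ p → x u = 0
      · refine absurd ⟨hxb, hx0, fun i j k hij hjk hi hk => ?_⟩ hfint
        have hpi : p < i := by
          by_contra hh; push_neg at hh; exact hi (hz i hh)
        have hqi : q ≤ i := Finset.min'_le _ _ (by simp [hSq, hpi, hi])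
        by_contra hja
        have hja' : x j < a j := lt_of_le_of_ne (hxb j) hja
        exact hk (hrex j (lt_of_le_of_lt hqi hij) hja' k hjk)
      · push_neg at hz
        obtain ⟨u1, hu1p, hu1⟩ := hz
        set x1 : Fin n → ℕ := fun i => if i ≤ p then x i else 0 with hx1
        set x2 : Fin n → ℕ := fun i => if i ≤ p then 0 else x i with hx2
        have hsplit : x = x1 + x2 := by
          funext i
          by_cases h : i ≤ p <;> simp [hx1, hx2, h, Pi.add_apply]
        have hx1f : IsFint a x1 := by
          refine ⟨fun i => ?_, ?_, ?_⟩
          · by_cases h : i ≤ p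
            · simpa [hx1, h] using hxb i
            · simp [hx1, h]
          · intro hz1
            apply hu1
            have := congrFun hz1 u1
            simpa [hx1, hu1p] using this
          · intro i j k hij hjk hi hk
            have hkp : k ≤ p := by
              by_contra hkp
              simp [hx1, hkp] at hk
            have hjp : j < p := lt_of_lt_of_le hjk hkp
            simp only [hx1]
            rw [if_pos hjp.le]
            exact hpmin j hjp
        have hx2f : IsFint a x2 := by
          refine ⟨fun i => ?_, ?_, ?_⟩
          · by_cases h : i ≤ p
            · simp [hx2, h]
            · simpa [hx2, h] using hxb i
          · intro hz2
            apply hq.2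
            have := congrFun hz2 q
            simpa [hx2, not_le.2 hq.1] using this
          · intro i j k hij hjk hi hk
            have hip : ¬ i ≤ p := by
              intro h; simp [hx2, h] at hi
            push_neg at hip
            have hi' : x i ≠ 0 := by simpa [hx2, not_le.2 hip] using hi
            have hjp : ¬ j ≤ p := not_le.2 (hip.trans hij)
            have hkp : ¬ k ≤ p := not_le.2 ((hip.trans hij).trans hjk)
            have hk' : x k ≠ 0 := by simpa [hx2, hkp] using hk
            have hqi : q ≤ i := Finset.min'_le _ _ (by simp [hSq, hip, hi'])
            simp only [hx2]
            rw [if_neg hjp]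
            by_contra hja
            have hja' : x j < a j := lt_of_le_of_ne (hxb j) hja
            exact hk' (hrex j (lt_of_le_of_lt hqi hij) hja' k hjk)
        refine hagree x (Or.inl ⟨⟨hfint, x1, x2, hx1f, hx2f, hsplit, ?_, ?_⟩, hvm⟩)
        · intro i j hi hj
          have h1 : i ≤ p := by
            by_contra hh; simp [hx1, hh] at hi
          have h2 : ¬ j ≤ p := by
            intro hh; simp [hx2, hh] at hj
          push_neg at h2
          exact lt_of_le_of_lt h1 h2
        · intro i ⟨j, hij, hj⟩
          have h1 : j ≤ p := by
            by_contra hh; simp [hx1, hh] at hj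
          have h2 : i < p := lt_of_lt_of_le hij h1
          simp only [hx1]
          rw [if_pos h2.le]
          exact hpmin i h2
    -- the reduction case
    set Sr := Finset.univ.filter (fun t => q < t ∧ x t < a t ∧ ∃ k, t < k ∧ x k ≠ 0) with hSr
    have hSrne : Sr.Nonempty := by
      obtain ⟨t0, ht0⟩ := hrex
      exact ⟨t0, by simp only [hSr, Finset.mem_filter, Finset.mem_univ, true_and]; exact ht0⟩
    set r := Sr.min' hSrne with hrdef
    have hr := (Finset.mem_filter.1 (Sr.min'_mem hSrne)).2
    obtain ⟨hqr, hra, k0, hk0r, hk0⟩ := hr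
    have hpq : p < q := hq.1
    have hrd : r < d := lt_of_lt_of_le hk0r (hdmax k0 hk0)
    have hpr : p < r := hpq.trans hqr
    have hpd : p < d := hpr.trans hrd
    have hqd : q < d := hqr.trans hrd
    -- companions
    set W := addv (subv x q) p with hW
    set C3 := addv (subv W d) r with hC3
    set Cpq := addv (subv x d) p with hCpq
    set Crd := addv (subv x q) r with hCrd
    set Cqr := addv (subv x d) r with hCqr
    set y := subv (subv x q) d with hy
    -- basic coordinate facts
    have hWr : W r = x r := by
      rw [hW, cmov x q p r (ne_of_gt hqr) (ne_of_gt hpr)]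
    have hWd : W d = x d := by
      rw [hW, cmov x q p d (ne_of_gt hqd) (ne_of_gt hpd)]
    have hWd0 : W d ≠ 0 := by rw [hWd]; exact hd
    have hWb : ∀ i, W i ≤ a i := by rw [hW]; exact bmov x q p hxb hp
    have hWv : vsize W = m := by rw [hW, vmov x q p hq.2, hvm]
    -- function equalities
    have step0 : addv y q = subv x d := by
      rw [hy, comm_ss]
      refine addv_subv_cancel _ _ ?_
      rw [subv_apply_ne x (ne_of_lt hqd)]; exact hq.2
    have E1 : y + unitv n q + unitv n d = x := by
      rw [addv_unitv, addv_unitv, step0, addv_subv_cancel _ _ hd]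
    have step1 : addv y p = subv W d := by
      rw [hy, hW]
      exact comm_as _ (ne_of_gt hpd)
    have E2 : y + unitv n p + unitv n r = C3 := by
      rw [addv_unitv, addv_unitv, step1, hC3]
    have E3 : y + unitv n p + unitv n q = Cpq := by
      rw [addv_unitv, addv_unitv, step1, comm_as _ (ne_of_gt hqd), hW, comm_aa,
        addv_subv_cancel x q hq.2, hCpq, comm_as x (ne_of_gt hpd)]
    have E4 : y + unitv n r + unitv n d = Crd := by
      rw [addv_unitv, addv_unitv, hy, comm_as _ (ne_of_gt hrd)]
      refine addv_subv_cancel _ _ ?_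
      rw [hCrd] at *
      rw [cmov x q r d (ne_of_gt hqd) (ne_of_gt hrd)]
      exact hd
    have E5 : y + unitv n p + unitv n d = W := by
      rw [addv_unitv, addv_unitv, step1, addv_subv_cancel _ _ hWd0]
    have E6 : y + unitv n q + unitv n r = Cqr := by
      rw [addv_unitv, addv_unitv, step0, hCqr]
    -- memberships
    have memOf : ∀ z : Fin n → ℕ, (∀ i, z i ≤ a i) → vsize z = m → z ∈ tbox a m m' :=
      fun z h1 h2 => memtb z h1 (le_of_eq h2.symm) (h2.le.trans hmm)
    have mem_x : x ∈ tbox a m m' := ⟨hxb, hxge, hxle⟩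
    have hvC3 : vsize C3 = m := by rw [hC3, vmov W d r hWd0, hWv]
    have mem_C3 : C3 ∈ tbox a m m' := by
      refine memOf C3 ?_ hvC3
      rw [hC3]
      exact bmov W d r hWb (by rw [hWr]; exact hra)
    have hvCpq : vsize Cpq = m := by rw [hCpq, vmov x d p hd, hvm]
    have mem_Cpq : Cpq ∈ tbox a m m' := by
      refine memOf Cpq ?_ hvCpq
      rw [hCpq]; exact bmov x d p hxb hp
    have hvCrd : vsize Crd = m := by rw [hCrd, vmov x q r hq.2, hvm]
    have mem_Crd : Crd ∈ tbox a m m' := by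
      refine memOf Crd ?_ hvCrd
      rw [hCrd]; exact bmov x q r hxb hra
    have hvCqr : vsize Cqr = m := by rw [hCqr, vmov x d r hd, hvm]
    have mem_Cqr : Cqr ∈ tbox a m m' := by
      refine memOf Cqr ?_ hvCqr
      rw [hCqr]; exact bmov x d r hxb hra
    have mem_W : W ∈ tbox a m m' := memOf W hWb hWv
    -- Sgt computations
    have Ssub : ∀ (z : Fin n → ℕ) (e : Fin n), z e ≠ 0 → p < e →
        Sgt p (subv z e) + 1 = Sgt p z := by
      intro z e h1 h2
      unfold Sgt
      exact sum_cond_subv (fun t => p < t) z e h1 h2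
    have Sadd : ∀ (z : Fin n → ℕ) (j : Fin n), p < j →
        Sgt p z + 1 = Sgt p (addv z j) := by
      intro z j h2
      unfold Sgt
      exact sum_cond_addv (fun t => p < t) z j h2
    have SaddP : ∀ z : Fin n → ℕ, Sgt p z = Sgt p (addv z p) := by
      intro z
      unfold Sgt
      exact sum_cond_addv_ne (fun t => p < t) z p (lt_irrefl p)
    have hSW : Sgt p W + 1 = Sgt p x := by
      rw [hW, ← SaddP (subv x q)]
      exact Ssub x q hq.2 hpq
    have hSC3 : Sgt p C3 + 1 = Sgt p x := by
      have h1 : Sgt p (subv W d) + 1 = Sgt p W := Ssub W d hWd0 hpd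
      have h2 : Sgt p (subv W d) + 1 = Sgt p C3 := by rw [hC3]; exact Sadd _ r hpr
      omega
    have hSCpq : Sgt p Cpq + 1 = Sgt p x := by
      rw [hCpq, ← SaddP (subv x d)]
      exact Ssub x d hd hpd
    have hSCrd : Sgt p Crd = Sgt p x := by
      have h1 : Sgt p (subv x q) + 1 = Sgt p x := Ssub x q hq.2 hpq
      have h2 : Sgt p (subv x q) + 1 = Sgt p Crd := by rw [hCrd]; exact Sadd _ r hpr
      omega
    have hSCqr : Sgt p Cqr = Sgt p x := by
      have h1 : Sgt p (subv x d) + 1 = Sgt p x := Ssub x d hd hpd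
      have h2 : Sgt p (subv x d) + 1 = Sgt p Cqr := by rw [hCqr]; exact Sadd _ r hpr
      omega
    -- Tm comparisons
    have hTmx : Tm a x = Sgt p x := Tm_eq a hpmin hp
    have belowfact : ∀ (z : Fin n → ℕ) (e j : Fin n), p < e → p < j →
        ∀ u, u < p → addv (subv z e) j u = z u := by
      intro z e j h1 h2 u hu
      exact cmov z e j u (ne_of_lt (hu.trans h1)) (ne_of_lt (hu.trans h2))
    have belW : ∀ u, u < p → W u = a u := by
      intro u hu
      rw [hW, cmov x q p u (ne_of_lt (hu.trans hpq)) (ne_of_lt hu)]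
      exact hpmin u hu
    have belC3 : ∀ u, u < p → C3 u = a u := by
      intro u hu
      rw [hC3, belowfact W d r hpd hpr u hu]
      exact belW u hu
    have belCpq : ∀ u, u < p → Cpq u = a u := by
      intro u hu
      rw [hCpq, cmov x d p u (ne_of_lt (hu.trans hpd)) (ne_of_lt hu)]
      exact hpmin u hu
    have belCrd : ∀ u, u < p → Crd u = a u := by
      intro u hu
      rw [hCrd, belowfact x q r hpq hpr u hu]
      exact hpmin u hu
    have belCqr : ∀ u, u < p → Cqr u = a u := by
      intro u hu
      rw [hCqr, belowfact x d r hpd hpr u hu]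
      exact hpmin u hu
    have TmltW : Tm a W < Tm a x := by
      have h1 := Tm_le (a := a) belW
      omega
    have TmltC3 : Tm a C3 < Tm a x := by
      have h1 := Tm_le (a := a) belC3
      omega
    have TmltCpq : Tm a Cpq < Tm a x := by
      have h1 := Tm_le (a := a) belCpq
      omega
    have hCrdp : Crd p < a p := by
      rw [hCrd, cmov x q r p (ne_of_lt hpq) (ne_of_lt hpr)]
      exact hp
    have hCqrp : Cqr p < a p := by
      rw [hCqr, cmov x d r p (ne_of_lt hpd) (ne_of_lt hpr)]
      exact hp
    have TmeqCrd : Tm a Crd = Tm a x := by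
      rw [Tm_eq a belCrd hCrdp, hSCrd, ← hTmx]
    have TmeqCqr : Tm a Cqr = Tm a x := by
      rw [Tm_eq a belCqr hCqrp, hSCqr, ← hTmx]
    -- PhiT comparisons
    have hPeq : ∀ z : Fin n → ℕ, (∀ u, u < p → z u = a u) → z p < a p →
        PhiT a z = PhiP a z (fun i => p < i) := by
      intro z h1 h2
      refine PhiT_congr a z _ (fun i => ⟨?_, fun h => ⟨p, h, h2⟩⟩)
      rintro ⟨u, hui, huu⟩
      by_contra hh
      push_neg at hh
      have h3 : u < p := lt_of_lt_of_le hui hh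
      rw [h1 u h3] at huu
      omega
    have hPhix : PhiT a x = PhiP a x (fun i => p < i) := hPeq x hpmin hp
    have PhiltCrd : PhiT a Crd < PhiT a x := by
      rw [hPhix, hPeq Crd belCrd hCrdp, hCrd]
      exact phiP_lt_left a x (fun i => p < i) hqr hpq hq.2
        (fun u hu hp' => hqmin u hp' hu) hra hrd hd
    have PhiltCqr : PhiT a Cqr < PhiT a x := by
      rw [hPhix, hPeq Cqr belCqr hCqrp, hCqr]
      refine phiP_lt_right a x (fun i => p < i) hrd hd ?_ hra hqr hpq hq.2
      intro u hu
      by_contra hne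
      exact absurd (hdmax u hne) (not_le.2 hu)
    -- measure arithmetic
    have meas1 : ∀ z : Fin n → ℕ, Tm a z < Tm a x →
        Tm a z * K + PhiT a z < Tm a x * K + PhiT a x := by
      intro z h
      have h2 : PhiT a z < K := hPhiTK z
      have h3 : (Tm a z + 1) * K ≤ Tm a x * K := Nat.mul_le_mul_right K h
      have h4 : (Tm a z + 1) * K = Tm a z * K + K := by ring
      omega
    have meas2 : ∀ z : Fin n → ℕ, Tm a z = Tm a x → PhiT a z < PhiT a x →
        Tm a z * K + PhiT a z < Tm a x * K + PhiT a x := by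
      intro z h1 h2
      rw [h1]
      omega
    have val : ∀ z : Fin n → ℕ, z ∈ tbox a m m' → vsize z = m →
        Tm a z * K + PhiT a z < Tm a x * K + PhiT a x → f₁ z = f₂ z :=
      fun z h1 h2 h3 => IH _ (lt_of_lt_of_le h3 hN) z h1 h2 le_rfl
    have vC3 : f₁ C3 = f₂ C3 := val C3 mem_C3 hvC3 (meas1 C3 TmltC3)
    have vCpq : f₁ Cpq = f₂ Cpq := val Cpq mem_Cpq hvCpq (meas1 Cpq TmltCpq)
    have vW : f₁ W = f₂ W := val W mem_W hWv (meas1 W TmltW)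
    have vCrd : f₁ Crd = f₂ Crd := val Crd mem_Crd hvCrd (meas2 Crd TmeqCrd PhiltCrd)
    have vCqr : f₁ Cqr = f₂ Cqr := val Cqr mem_Cqr hvCqr (meas2 Cqr TmeqCqr PhiltCqr)
    -- TP4
    have h41 := hf₁.2 y p q r d hpq hqr hrd
      (by rw [E2]; exact mem_C3) (by rw [E1]; exact mem_x)
      (by rw [E3]; exact mem_Cpq) (by rw [E4]; exact mem_Crd)
      (by rw [E5]; exact mem_W) (by rw [E6]; exact mem_Cqr)
    have h42 := hf₂.2 y p q r d hpq hqr hrd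
      (by rw [E2]; exact mem_C3) (by rw [E1]; exact mem_x)
      (by rw [E3]; exact mem_Cpq) (by rw [E4]; exact mem_Crd)
      (by rw [E5]; exact mem_W) (by rw [E6]; exact mem_Cqr)
    rw [E1, E2, E3, E4, E5, E6] at h41 h42
    rw [vC3, vCpq, vCrd, vW, vCqr] at h41
    linarith [h41, h42]
  -- ========== GENERAL LEVEL ==========
  have main : ∀ N (x : Fin n → ℕ), x ∈ tbox a m m' →
      (vsize x - m) * K + PhiP a x (fun _ => True) ≤ N → f₁ x = f₂ x := by
    intro N
    induction N using Nat.strong_induction_on with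
    | _ N IH =>
    intro x hx hN
    obtain ⟨hxb, hxge, hxle⟩ := hx
    rcases eq_or_lt_of_le hxge with heq | hlt
    · exact levelm _ x ⟨hxb, hxge, hxle⟩ heq.symm le_rfl
    by_cases hfint : IsFint a x
    · exact hagree x (Or.inr (Or.inl ⟨hfint, hxge, hxle⟩))
    have hx0 : x ≠ 0 := by
      intro h
      rw [h] at hlt
      simp only [vsize, Pi.zero_apply, Finset.sum_const_zero] at hlt
      omega
    have htriple : ∃ i j k : Fin n, i < j ∧ j < k ∧ x i ≠ 0 ∧ x k ≠ 0 ∧ x j ≠ a j := by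
      by_contra hcon
      push_neg at hcon
      exact hfint ⟨hxb, hx0, fun i j k h1 h2 h3 h4 => hcon i j k h1 h2 h3 h4⟩
    obtain ⟨i1, j1, k1, hij, hjk, hi1, hk1, hj1⟩ := htriple
    have hj1a : x j1 < a j1 := lt_of_le_of_ne (hxb j1) hj1
    set Se := Finset.univ.filter (fun t => x t ≠ 0) with hSe
    have hSene : Se.Nonempty := ⟨i1, by simp [hSe, hi1]⟩
    set e1 := Se.min' hSene with he1def
    set e2 := Se.max' hSene with he2def
    have he1 : x e1 ≠ 0 := (Finset.mem_filter.1 (Se.min'_mem hSene)).2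
    have he2 : x e2 ≠ 0 := (Finset.mem_filter.1 (Se.max'_mem hSene)).2
    have he1min : ∀ u, u < e1 → x u = 0 := by
      intro u hu; by_contra hne
      exact absurd hu (not_lt.2 (Finset.min'_le _ _ (by simp [hSe, hne])))
    have he2max : ∀ t, x t ≠ 0 → t ≤ e2 := fun t ht =>
      Finset.le_max' _ _ (by simp [hSe, ht])
    have h1j : e1 < j1 := lt_of_le_of_lt (Finset.min'_le _ _ (by simp [hSe, hi1])) hij
    have hj2 : j1 < e2 := lt_of_lt_of_le hjk (he2max k1 hk1)
    have h12 : e1 < e2 := h1j.trans hj2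
    set y := subv (subv x e1) e2 with hy
    set Cl := addv (subv x e2) j1 with hCl
    set Cr := addv (subv x e1) j1 with hCr
    set D1 := subv x e1 with hD1
    set D2 := subv x e2 with hD2
    set C0 := addv (subv D1 e2) j1 with hC0
    have hD1e2 : D1 e2 ≠ 0 := by
      rw [hD1, subv_apply_ne x (ne_of_gt h12)]; exact he2
    have hD1j1 : D1 j1 < a j1 := by
      rw [hD1, subv_apply_ne x (ne_of_gt h1j)]; exact hj1a
    -- function equalities
    have stepA : addv y e1 = D2 := by
      rw [hy, comm_ss, hD2]
      refine addv_subv_cancel _ _ ?_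
      rw [subv_apply_ne x (ne_of_lt h12)]
      exact he1
    have G1 : y + unitv n e1 + unitv n e2 = x := by
      rw [addv_unitv, addv_unitv, stepA, hD2, addv_subv_cancel _ _ he2]
    have G2 : y + unitv n j1 = C0 := by
      rw [addv_unitv, hy, hC0, hD1]
    have G3 : y + unitv n e1 + unitv n j1 = Cl := by
      rw [addv_unitv, addv_unitv, stepA, hD2, hCl]
    have G4 : y + unitv n e2 = D1 := by
      rw [addv_unitv, hy, hD1]
      refine addv_subv_cancel _ _ ?_
      rw [subv_apply_ne x (ne_of_gt h12)]
      exact he2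
    have G5 : y + unitv n e1 = D2 := by
      rw [addv_unitv, stepA]
    have G6 : y + unitv n j1 + unitv n e2 = Cr := by
      rw [addv_unitv, addv_unitv, hy, comm_as _ (ne_of_gt hj2), hCr]
      refine addv_subv_cancel _ _ ?_
      rw [cmov x e1 j1 e2 (ne_of_gt h12) (ne_of_gt hj2)]
      exact he2
    -- memberships
    have mem_x : x ∈ tbox a m m' := ⟨hxb, hxge, hxle⟩
    have hvD1 : vsize D1 + 1 = vsize x := by rw [hD1]; exact vsize_subv x e1 he1
    have hvD2 : vsize D2 + 1 = vsize x := by rw [hD2]; exact vsize_subv x e2 he2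
    have hvC0 : vsize C0 + 1 = vsize x := by
      rw [hC0, vmov D1 e2 j1 hD1e2]
      exact hvD1
    have hvCl : vsize Cl = vsize x := by rw [hCl]; exact vmov x e2 j1 he2
    have hvCr : vsize Cr = vsize x := by rw [hCr]; exact vmov x e1 j1 he1
    have mem_D1 : D1 ∈ tbox a m m' := by
      refine ⟨by rw [hD1]; exact subv_le hxb e1, by omega, by omega⟩
    have mem_D2 : D2 ∈ tbox a m m' := by
      refine ⟨by rw [hD2]; exact subv_le hxb e2, by omega, by omega⟩
    have mem_C0 : C0 ∈ tbox a m m' := by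
      refine ⟨?_, by omega, by omega⟩
      rw [hC0]
      refine bmov D1 e2 j1 ?_ hD1j1
      rw [hD1]; exact subv_le hxb e1
    have mem_Cl : Cl ∈ tbox a m m' := by
      refine ⟨by rw [hCl]; exact bmov x e2 j1 hxb hj1a, by omega, by omega⟩
    have mem_Cr : Cr ∈ tbox a m m' := by
      refine ⟨by rw [hCr]; exact bmov x e1 j1 hxb hj1a, by omega, by omega⟩
    -- measures
    have PhiltCl : PhiP a Cl (fun _ => True) < PhiP a x (fun _ => True) := by
      rw [hCl]
      refine phiP_lt_right a x (fun _ => True) hj2 he2 ?_ hj1a h1j trivial he1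
      intro u hu
      by_contra hne
      exact absurd (he2max u hne) (not_le.2 hu)
    have PhiltCr : PhiP a Cr (fun _ => True) < PhiP a x (fun _ => True) := by
      rw [hCr]
      exact phiP_lt_left a x (fun _ => True) h1j trivial he1
        (fun u hu _ => he1min u hu) hj1a hj2 he2
    have measS : ∀ z : Fin n → ℕ, vsize z = vsize x →
        PhiP a z (fun _ => True) < PhiP a x (fun _ => True) →
        (vsize z - m) * K + PhiP a z (fun _ => True) <
          (vsize x - m) * K + PhiP a x (fun _ => True) := by
      intro z h1 h2
      rw [h1]
      omega
    have measD : ∀ z : Fin n → ℕ, vsize z + 1 = vsize x →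
        (vsize z - m) * K + PhiP a z (fun _ => True) <
          (vsize x - m) * K + PhiP a x (fun _ => True) := by
      intro z h1
      have h2 : PhiP a z (fun _ => True) < K := hPhiPK z
      have h3 : vsize z - m + 1 = vsize x - m := by omega
      have h4 : (vsize z - m + 1) * K = (vsize z - m) * K + K := by ring
      have h5 : (vsize z - m + 1) * K ≤ (vsize x - m) * K := le_of_eq (by rw [h3])
      omega
    have val : ∀ z : Fin n → ℕ, z ∈ tbox a m m' →
        (vsize z - m) * K + PhiP a z (fun _ => True) <
          (vsize x - m) * K + PhiP a x (fun _ => True) → f₁ z = f₂ z :=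
      fun z h1 h3 => IH _ (lt_of_lt_of_le h3 hN) z h1 le_rfl
    have vC0 : f₁ C0 = f₂ C0 := val C0 mem_C0 (measD C0 hvC0)
    have vD1 : f₁ D1 = f₂ D1 := val D1 mem_D1 (measD D1 hvD1)
    have vD2 : f₁ D2 = f₂ D2 := val D2 mem_D2 (measD D2 hvD2)
    have vCl : f₁ Cl = f₂ Cl := val Cl mem_Cl (measS Cl hvCl PhiltCl)
    have vCr : f₁ Cr = f₂ Cr := val Cr mem_Cr (measS Cr hvCr PhiltCr)
    -- TP3
    have h31 := hf₁.1 y e1 j1 e2 h1j hj2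
      (by rw [G1]; exact mem_x) (by rw [G2]; exact mem_C0)
      (by rw [G3]; exact mem_Cl) (by rw [G4]; exact mem_D1)
      (by rw [G5]; exact mem_D2) (by rw [G6]; exact mem_Cr)
    have h32 := hf₂.1 y e1 j1 e2 h1j hj2
      (by rw [G1]; exact mem_x) (by rw [G2]; exact mem_C0)
      (by rw [G3]; exact mem_Cl) (by rw [G4]; exact mem_D1)
      (by rw [G5]; exact mem_D2) (by rw [G6]; exact mem_Cr)
    rw [G1, G3, G6, G2, G4, G5] at h31 h32
    rw [vC0, vCl, vD1, vD2, vCr] at h31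
    linarith [h31, h32]
  intro x hx
  exact main _ x hx le_rfl
end

section
/- TP3 implies TP4 on truncated boxes of positive width: Let f be a function on B = B_m^{m'}(a) with m < m'. If f satisfies all TP3-relations on B (i.e., f(x+1_i+1_k)+f(x+1_j) = max{f(x+1_i+1_j)+f(x+1_k), f(x+1_i)+f(x+1_j+1_k)} for all x and i < j < k with all six argument vectors in B), then f also satisfies all TP4-relations on B (i.e., f(x+1_i+1_k)+f(x+1_j+1_ℓ) = max{f(x+1_i+1_j)+f(x+1_k+1_ℓ), f(x+1_i+1_ℓ)+f(x+1_j+1_k)} for all x and i < j < k < ℓ with all six argument vectors in B); hence f is a TP-function. -/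
lemma tp_key (a b c d e h pi pj pk pl : ℝ)
    (h1 : b + pj = max (a + pk) (pi + d))
    (h2 : c + pj = max (a + pl) (pi + e))
    (h3 : c + pk = max (b + pl) (pi + h))
    (h4 : e + pk = max (d + pl) (pj + h)) :
    b + e = max (a + h) (c + d) := by
  have h1a : a + pk ≤ b + pj := h1 ▸ le_max_left _ _
  have h1b : pi + d ≤ b + pj := h1 ▸ le_max_right _ _
  have h2a : a + pl ≤ c + pj := h2 ▸ le_max_left _ _
  have h2b : pi + e ≤ c + pj := h2 ▸ le_max_right _ _
  have h3a : b + pl ≤ c + pk := h3 ▸ le_max_left _ _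
  have h3b : pi + h ≤ c + pk := h3 ▸ le_max_right _ _
  have h4a : d + pl ≤ e + pk := h4 ▸ le_max_left _ _
  have h4b : pj + h ≤ e + pk := h4 ▸ le_max_right _ _
  have hc1 : b + pj = a + pk ∨ b + pj = pi + d := by
    rcases max_choice (a + pk) (pi + d) with hc | hc
    · exact Or.inl (h1.trans hc)
    · exact Or.inr (h1.trans hc)
  have hc3 : c + pk = b + pl ∨ c + pk = pi + h := by
    rcases max_choice (b + pl) (pi + h) with hc | hc
    · exact Or.inl (h3.trans hc)
    · exact Or.inr (h3.trans hc)
  have hc4 : e + pk = d + pl ∨ e + pk = pj + h := by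
    rcases max_choice (d + pl) (pj + h) with hc | hc
    · exact Or.inl (h4.trans hc)
    · exact Or.inr (h4.trans hc)
  apply le_antisymm
  · rcases hc1 with e1 | e1 <;> rcases hc4 with e4 | e4
    · exact le_max_of_le_right (by linarith)
    · exact le_max_of_le_left (by linarith)
    · exact le_max_of_le_right (by linarith)
    · exact le_max_of_le_right (by linarith)
  · apply max_le
    · linarith
    · rcases hc3 with e3 | e3
      · linarith
      · linarith

lemma tp_key_up (a b c d e h Pi Pj Pk Pl : ℝ)
    (h1 : Pj + e = max (Pk + h) (c + Pi))
    (h2 : Pj + d = max (Pl + h) (b + Pi))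
    (h3 : Pk + d = max (Pl + e) (a + Pi))
    (h4 : Pk + b = max (Pl + c) (a + Pj)) :
    b + e = max (a + h) (c + d) := by
  have := tp_key h e d c b a Pi Pj Pk Pl
    (by rw [add_comm e Pj, add_comm h Pk, add_comm Pi c]; exact h1)
    (by rw [add_comm d Pj, add_comm h Pl, add_comm Pi b]; exact h2)
    (by rw [add_comm d Pk, add_comm e Pl, add_comm Pi a]; exact h3)
    (by rw [add_comm b Pk, add_comm c Pl, add_comm Pj a]; exact h4)
  rw [add_comm b e, add_comm a h, add_comm c d]; exact this

lemma vsize_add {n : ℕ} (x y : Fin n → ℕ) : vsize (x + y) = vsize x + vsize y := by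
  simp [vsize, Finset.sum_add_distrib]

lemma vsize_unitv {n : ℕ} (q : Fin n) : vsize (unitv n q) = 1 := by
  simp [vsize, unitv]

/-- from a pair membership, first single. -/
lemma mem_single1 {n : ℕ} {a x : Fin n → ℕ} {m m' : ℕ} {q r : Fin n}
    (h : x + unitv n q + unitv n r ∈ tbox a m m') (hm : m ≤ vsize x + 1) :
    x + unitv n q ∈ tbox a m m' := by
  refine ⟨fun t => le_trans ?_ (h.1 t), ?_, ?_⟩
  · show (x + unitv n q) t ≤ (x + unitv n q + unitv n r) t
    simp only [Pi.add_apply]; omega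
  · rw [vsize_add, vsize_unitv]; omega
  · have := h.2.2
    rw [vsize_add, vsize_add, vsize_unitv, vsize_unitv] at this
    rw [vsize_add, vsize_unitv]; omega

/-- from a pair membership, second single. -/
lemma mem_single2 {n : ℕ} {a x : Fin n → ℕ} {m m' : ℕ} {q r : Fin n}
    (h : x + unitv n q + unitv n r ∈ tbox a m m') (hm : m ≤ vsize x + 1) :
    x + unitv n r ∈ tbox a m m' := by
  refine ⟨fun t => le_trans ?_ (h.1 t), ?_, ?_⟩
  · show (x + unitv n r) t ≤ (x + unitv n q + unitv n r) t
    simp only [Pi.add_apply]; omega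
  · rw [vsize_add, vsize_unitv]; omega
  · have := h.2.2
    rw [vsize_add, vsize_add, vsize_unitv, vsize_unitv] at this
    rw [vsize_add, vsize_unitv]; omega

/-- triple membership from two pair memberships, when one can go a level up. -/
lemma mem_triple {n : ℕ} {a x : Fin n → ℕ} {m m' : ℕ} {i j k : Fin n}
    (hjk : j ≠ k)
    (h1 : x + unitv n i + unitv n j ∈ tbox a m m')
    (h2 : x + unitv n i + unitv n k ∈ tbox a m m')
    (hm : vsize x + 3 ≤ m') :
    x + unitv n i + unitv n j + unitv n k ∈ tbox a m m' := by
  refine ⟨fun q => ?_, ?_, ?_⟩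
  · by_cases hq : q = k
    · have heq : (x + unitv n i + unitv n j + unitv n k) q
          = (x + unitv n i + unitv n k) q := by
        simp [Pi.add_apply, unitv, hq, Ne.symm hjk]
      rw [heq]; exact h2.1 q
    · have heq : (x + unitv n i + unitv n j + unitv n k) q
          = (x + unitv n i + unitv n j) q := by
        simp [Pi.add_apply, unitv, hq]
      rw [heq]; exact h1.1 q
  · have := h1.2.1
    rw [vsize_add, vsize_add, vsize_unitv, vsize_unitv] at this
    rw [vsize_add, vsize_add, vsize_add, vsize_unitv, vsize_unitv, vsize_unitv]
    omega
  · rw [vsize_add, vsize_add, vsize_add, vsize_unitv, vsize_unitv, vsize_unitv]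
    omega

/-- **TP3 implies TP4 on truncated boxes of positive width** (Proposition 2):
if `m < m'` and a function `f` on `B = B_m^{m'}(a)` satisfies all TP3-relations
on `B`, then it also satisfies all TP4-relations on `B`; hence `f` is a
TP-function. -/
theorem tp3_implies_tp4 {n : ℕ} (a : Fin n → ℕ) (ha : ∀ i, 0 < a i)
    (m m' : ℕ) (hmm : m < m') (hm' : m' ≤ vsize a)
    (f : (Fin n → ℕ) → ℝ) (h3 : TP3 (tbox a m m') f) :
    TP4 (tbox a m m') f ∧ IsTP (tbox a m m') f := by

  have h4 : TP4 (tbox a m m') f := by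
    intro x i j k l hij hjk hkl hik' hjl' hij' hkl' hil' hjk'
    have hsz : vsize (x + unitv n i + unitv n k) = vsize x + 2 := by
      rw [vsize_add, vsize_add, vsize_unitv, vsize_unitv]
    have hmlow : m ≤ vsize x + 2 := by rw [← hsz]; exact hik'.2.1
    have hmup : vsize x + 2 ≤ m' := by rw [← hsz]; exact hik'.2.2
    rcases Nat.lt_or_ge m (vsize x + 2) with hcase | hcase
    · -- down case: singles are in B
      have hms : m ≤ vsize x + 1 := by omega
      have hi : x + unitv n i ∈ tbox a m m' := mem_single1 hik' hms
      have hj : x + unitv n j ∈ tbox a m m' := mem_single1 hjl' hms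
      have hk : x + unitv n k ∈ tbox a m m' := mem_single1 hkl' hms
      have hl : x + unitv n l ∈ tbox a m m' := mem_single2 hkl' hms
      have E1 := h3 x i j k hij hjk hik' hj hij' hk hi hjk'
      have E2 := h3 x i j l hij (hjk.trans hkl) hil' hj hij' hl hi hjl'
      have E3 := h3 x i k l (hij.trans hjk) hkl hil' hk hik' hl hi hkl'
      have E4 := h3 x j k l hjk hkl hjl' hk hjk' hl hj hkl'
      exact tp_key _ _ _ _ _ _ _ _ _ _ E1 E2 E3 E4
    · -- up case: triples are in B
      have hm3 : vsize x + 3 ≤ m' := by omega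
      have Tijk : x + unitv n i + unitv n j + unitv n k ∈ tbox a m m' :=
        mem_triple hjk.ne hij' hik' hm3
      have Tijl : x + unitv n i + unitv n j + unitv n l ∈ tbox a m m' :=
        mem_triple (hjk.trans hkl).ne hij' hil' hm3
      have Tikl : x + unitv n i + unitv n k + unitv n l ∈ tbox a m m' :=
        mem_triple hkl.ne hik' hil' hm3
      have Tjkl : x + unitv n j + unitv n k + unitv n l ∈ tbox a m m' :=
        mem_triple hkl.ne hjk' hjl' hm3
      have eA : x + unitv n l + unitv n i + unitv n k
          = x + unitv n i + unitv n k + unitv n l := by ring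
      have eB : x + unitv n l + unitv n j = x + unitv n j + unitv n l := by ring
      have eC : x + unitv n l + unitv n i + unitv n j
          = x + unitv n i + unitv n j + unitv n l := by ring
      have eD : x + unitv n l + unitv n k = x + unitv n k + unitv n l := by ring
      have eE : x + unitv n l + unitv n i = x + unitv n i + unitv n l := by ring
      have eF : x + unitv n l + unitv n j + unitv n k
          = x + unitv n j + unitv n k + unitv n l := by ring
      have eG : x + unitv n k + unitv n i + unitv n l
          = x + unitv n i + unitv n k + unitv n l := by ring
      have eH : x + unitv n k + unitv n j = x + unitv n j + unitv n k := by ring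
      have eI : x + unitv n k + unitv n i + unitv n j
          = x + unitv n i + unitv n j + unitv n k := by ring
      have eJ : x + unitv n k + unitv n i = x + unitv n i + unitv n k := by ring
      have eK : x + unitv n k + unitv n j + unitv n l
          = x + unitv n j + unitv n k + unitv n l := by ring
      have eL : x + unitv n j + unitv n i + unitv n l
          = x + unitv n i + unitv n j + unitv n l := by ring
      have eM : x + unitv n j + unitv n i + unitv n k
          = x + unitv n i + unitv n j + unitv n k := by ring
      have eN : x + unitv n j + unitv n i = x + unitv n i + unitv n j := by ring
      have E1 := h3 (x + unitv n l) i j k hij hjk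
        (by rw [eA]; exact Tikl) (by rw [eB]; exact hjl') (by rw [eC]; exact Tijl)
        (by rw [eD]; exact hkl') (by rw [eE]; exact hil') (by rw [eF]; exact Tjkl)
      rw [eA, eC, eF, eB, eD, eE] at E1
      have E2 := h3 (x + unitv n k) i j l hij (hjk.trans hkl)
        (by rw [eG]; exact Tikl) (by rw [eH]; exact hjk') (by rw [eI]; exact Tijk)
        hkl' (by rw [eJ]; exact hik') (by rw [eK]; exact Tjkl)
      rw [eG, eI, eK, eH, eJ] at E2
      have E3 := h3 (x + unitv n j) i k l (hij.trans hjk) hkl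
        (by rw [eL]; exact Tijl) hjk' (by rw [eM]; exact Tijk)
        hjl' (by rw [eN]; exact hij') Tjkl
      rw [eL, eM, eN] at E3
      have E4 := h3 (x + unitv n i) j k l hjk hkl
        Tijl hik' Tijk hil' hij' Tikl
      exact tp_key_up _ _ _ _ _ _ _ _ _ _ E1 E2 E3 E4
  exact ⟨h4, h3, h4⟩
end

section
/- Super-TP4 inequality for flow-generated functions: For any real n×m' matrix W and the function f = f_w on C_0^{m'}, the inequality f(Xik)+f(Xjℓ) ≥ max{f(Xij)+f(Xkℓ), f(Xiℓ)+f(Xjk)} holds for all 1 ≤ i < j < k < ℓ ≤ n and X ⊆ [n]∖{i,j,k,ℓ} with |X| ≤ m'−2. -/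
/-- The TP3-relations for a function on the truncated Boolean cube
`C_m^{m'} = {S ⊆ [n] : m ≤ |S| ≤ m'}` (subsets of `[n] = {1,…,n}` modelled as
finsets of naturals contained in `Icc 1 n`): for `i < j < k` outside `X`, the
six sets `Xik, Xj, Xij, Xk, Xi, Xjk` lie in `C_m^{m'}` exactly when
`m ≤ |X| + 1` and `|X| + 2 ≤ m'`. -/
def TP3B (n m m' : ℕ) (f : Finset ℕ → ℝ) : Prop :=
  ∀ (X : Finset ℕ) (i j k : ℕ), X ⊆ Finset.Icc 1 n →
    1 ≤ i → i < j → j < k → k ≤ n →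
    i ∉ X → j ∉ X → k ∉ X →
    m ≤ X.card + 1 → X.card + 2 ≤ m' →
    f (X ∪ {i, k}) + f (X ∪ {j}) =
      max (f (X ∪ {i, j}) + f (X ∪ {k})) (f (X ∪ {i}) + f (X ∪ {j, k}))

/-- The TP4-relations for a function on the truncated Boolean cube `C_m^{m'}`:
for `i < j < k < l` outside `X`, the six sets involved (all of size `|X|+2`)
lie in `C_m^{m'}` exactly when `m ≤ |X| + 2 ≤ m'`. -/
def TP4B (n m m' : ℕ) (f : Finset ℕ → ℝ) : Prop :=
  ∀ (X : Finset ℕ) (i j k l : ℕ), X ⊆ Finset.Icc 1 n →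
    1 ≤ i → i < j → j < k → k < l → l ≤ n →
    i ∉ X → j ∉ X → k ∉ X → l ∉ X →
    m ≤ X.card + 2 → X.card + 2 ≤ m' →
    f (X ∪ {i, k}) + f (X ∪ {j, l}) =
      max (f (X ∪ {i, j}) + f (X ∪ {k, l})) (f (X ∪ {i, l}) + f (X ∪ {j, k}))

/-- A tropical Plücker function on the truncated Boolean cube `C_m^{m'}`. -/
def IsTPBool (n m m' : ℕ) (f : Finset ℕ → ℝ) : Prop :=
  TP3B n m m' f ∧ TP4B n m m' f

/-- One step of a directed edge in the grid `Γ_{n,m'}`: from `v_{pq}` one can go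
to `v_{p−1,q}` or to `v_{p,q+1}`. -/
def gridStep (u v : ℕ × ℕ) : Prop :=
  (v.1 + 1 = u.1 ∧ v.2 = u.2) ∨ (v.1 = u.1 ∧ v.2 = u.2 + 1)

/-- A (directed) path in the grid `Γ_{n,m'}` from a source `s_p = v_{p,1}` to a
sink `t_q = v_{1,q}`; vertices `v_{pq}` are recorded as pairs `(p,q)` with
`1 ≤ p ≤ n` and `1 ≤ q ≤ m'`. -/
structure GridPath (n m' : ℕ) where
  verts : List (ℕ × ℕ)
  nonempty : verts ≠ []
  range : ∀ v ∈ verts, 1 ≤ v.1 ∧ v.1 ≤ n ∧ 1 ≤ v.2 ∧ v.2 ≤ m'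
  chain : verts.Chain' gridStep
  src : (verts.head nonempty).2 = 1
  snk : (verts.getLast nonempty).1 = 1

/-- `F` is an admissible flow for `S ⊆ [n]`: a collection of pairwise
vertex-disjoint source-to-sink paths whose sinks are exactly `t_1, …, t_{|F|}`
(the `i`-th path ending at `t_{i+1}`) and whose beginning sources are exactly
`{s_p : p ∈ S}`. -/
def AdmissibleFor (n m' : ℕ) (S : Finset ℕ) (F : List (GridPath n m')) : Prop :=
  F.Pairwise (fun P Q => ∀ v ∈ P.verts, v ∉ Q.verts) ∧
  (∀ (i : ℕ) (h : i < F.length),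
      ((F.get ⟨i, h⟩).verts.getLast (F.get ⟨i, h⟩).nonempty).2 = i + 1) ∧
  F.length = S.card ∧
  (∀ p : ℕ, p ∈ S ↔ ∃ P ∈ F, (P.verts.head P.nonempty).1 = p)

/-- The weight of a path: the sum of the weights `w p q` over its vertices. -/
def pathWeight {n m' : ℕ} (w : ℕ → ℕ → ℝ) (P : GridPath n m') : ℝ :=
  (P.verts.map (fun v => w v.1 v.2)).sum

/-- The weight of a flow: the sum of the weights of its paths. -/
def flowWeight {n m' : ℕ} (w : ℕ → ℕ → ℝ) (F : List (GridPath n m')) : ℝ :=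
  (F.map (pathWeight w)).sum

/-- The set of weights of admissible flows for `S` in the grid `Γ_{n,m'}` with
vertex weighting `w`; the value `f_w(S)` is the greatest element of this set. -/
def flowValues (n m' : ℕ) (w : ℕ → ℕ → ℝ) (S : Finset ℕ) : Set ℝ :=
  {t | ∃ F : List (GridPath n m'), AdmissibleFor n m' S F ∧ flowWeight w F = t}

namespace SuperTP4

/-- A vertical block in column `q` from row `hi` down to row `lo`. -/
def colBlock (q lo : ℕ) : ℕ → List (ℕ × ℕ)
  | hi => if _ : lo < hi then (hi, q) :: colBlock q lo (hi - 1) else [(lo, q)]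

lemma colBlock_of_lt {q lo hi : ℕ} (h : lo < hi) :
    colBlock q lo hi = (hi, q) :: colBlock q lo (hi - 1) := by
  rw [colBlock]; simp [h]

lemma colBlock_of_ge {q lo hi : ℕ} (h : ¬ lo < hi) :
    colBlock q lo hi = [(lo, q)] := by
  rw [colBlock]; simp [h]

lemma colBlock_ne_nil {q lo hi : ℕ} : colBlock q lo hi ≠ [] := by
  by_cases h : lo < hi
  · rw [colBlock_of_lt h]; simp
  · rw [colBlock_of_ge h]; simp

lemma head?_colBlock {q lo hi : ℕ} (h : lo ≤ hi) :
    (colBlock q lo hi).head? = some (hi, q) := by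
  rcases lt_or_eq_of_le h with h' | h'
  · rw [colBlock_of_lt h']; rfl
  · subst h'; rw [colBlock_of_ge (by omega)]; rfl

lemma head_colBlock {q lo hi : ℕ} (h : lo ≤ hi) (hne : colBlock q lo hi ≠ []) :
    (colBlock q lo hi).head hne = (hi, q) := by
  have := List.head?_eq_head hne
  rw [head?_colBlock h] at this
  exact (Option.some_injective _ this).symm

lemma getLast?_colBlock {q lo : ℕ} : ∀ hi : ℕ,
    (colBlock q lo hi).getLast? = some (lo, q) := by
  intro hi
  induction hi using Nat.strong_induction_on with
  | _ hi ih =>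
    by_cases h : lo < hi
    · rw [colBlock_of_lt h, List.getLast?_cons, ih (hi - 1) (by omega)]
      simp [List.getLast?_eq_getLast (colBlock_ne_nil (q := q) (lo := lo) (hi := hi - 1)),
        Option.getD]
    · rw [colBlock_of_ge h]; rfl

lemma getLast_colBlock {q lo hi : ℕ} (hne : colBlock q lo hi ≠ []) :
    (colBlock q lo hi).getLast hne = (lo, q) := by
  have := List.getLast?_eq_getLast hne
  rw [getLast?_colBlock] at this
  exact (Option.some_injective _ this).symm

lemma mem_colBlock {q lo hi : ℕ} (h : lo ≤ hi) {v : ℕ × ℕ} :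
    v ∈ colBlock q lo hi ↔ v.2 = q ∧ lo ≤ v.1 ∧ v.1 ≤ hi := by
  induction hi using Nat.strong_induction_on with
  | _ hi ih =>
    by_cases h' : lo < hi
    · rw [colBlock_of_lt h']
      simp only [List.mem_cons, ih (hi - 1) (by omega) (by omega)]
      constructor
      · rintro (rfl | ⟨h1, h2, h3⟩) <;> simp_all <;> omega
      · rintro ⟨h1, h2, h3⟩
        rcases Nat.lt_or_ge v.1 hi with h4 | h4
        · right; exact ⟨h1, h2, by omega⟩
        · left; have : v.1 = hi := by omega
          exact Prod.ext this h1
    · rw [colBlock_of_ge h']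
      have : lo = hi := by omega
      subst this
      constructor
      · intro hv; simp at hv; subst hv; simp
      · rintro ⟨h1, h2, h3⟩
        have : v.1 = lo := by omega
        simp [Prod.ext_iff, this, h1]

lemma chain'_colBlock {q lo hi : ℕ} : (colBlock q lo hi).Chain' gridStep := by
  induction hi using Nat.strong_induction_on with
  | _ hi ih =>
    by_cases h : lo < hi
    · rw [colBlock_of_lt h]
      refine List.isChain_cons.2 ⟨?_, ih (hi - 1) (by omega)⟩
      intro y hy
      rw [head?_colBlock (by omega)] at hy
      cases hy
      left; constructor <;> simp <;> omega
    · rw [colBlock_of_ge h]; exact List.isChain_singleton _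

lemma sum_colBlock {q lo hi : ℕ} (h : lo ≤ hi) (f : ℕ × ℕ → ℝ) :
    ((colBlock q lo hi).map f).sum = ∑ p ∈ Finset.Icc lo hi, f (p, q) := by
  induction hi using Nat.strong_induction_on with
  | _ hi ih =>
    by_cases h' : lo < hi
    · rw [colBlock_of_lt h']
      have h2 : lo ≤ hi - 1 := by omega
      have : Finset.Icc lo hi = insert hi (Finset.Icc lo (hi - 1)) := by
        ext x; simp; omega
      rw [this, Finset.sum_insert (by simp; omega)]
      simp [ih (hi - 1) (by omega) h2]
    · have : lo = hi := by omega
      subst this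
      rw [colBlock_of_ge h']
      simp

end SuperTP4


namespace SuperTP4

/-- The heights function of a staircase path: `heights hi hs 0 = hi` (the source row),
`heights hi hs (t+1)` is the row at which the path crosses from column `t+1` to
column `t+2` (and `1` beyond the end). -/
def heights (hi : ℕ) (hs : List ℕ) : ℕ → ℕ
  | 0 => hi
  | t + 1 => hs.getD t 1

@[simp] lemma heights_zero {hi : ℕ} {hs : List ℕ} : heights hi hs 0 = hi := rfl

lemma heights_succ {hi : ℕ} {hs : List ℕ} {t : ℕ} : heights hi hs (t + 1) = hs.getD t 1 := rfl

lemma heights_cons {hi lo : ℕ} {hs : List ℕ} {t : ℕ} :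
    heights hi (lo :: hs) (t + 1) = heights lo hs t := by
  cases t <;> rfl

/-- Validity of staircase data: weakly decreasing, and all heights at least 1. -/
def okH (hi : ℕ) (hs : List ℕ) : Prop :=
  (∀ t, heights hi hs (t + 1) ≤ heights hi hs t) ∧ (∀ t, 1 ≤ heights hi hs t)

lemma okH_cons {hi lo : ℕ} {hs : List ℕ} :
    okH hi (lo :: hs) ↔ lo ≤ hi ∧ okH lo hs := by
  constructor
  · rintro ⟨h1, h2⟩
    refine ⟨h1 0, ⟨fun t => ?_, fun t => ?_⟩⟩
    · have := h1 (t + 1); rwa [heights_cons, heights_cons] at this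
    · have := h2 (t + 1); rwa [heights_cons] at this
  · rintro ⟨hle, h1, h2⟩
    constructor
    · intro t
      cases t with
      | zero => exact hle
      | succ t => rw [heights_cons, heights_cons]; exact h1 t
    · intro t
      cases t with
      | zero => exact le_trans (h2 0) hle
      | succ t => rw [heights_cons]; exact h2 t

lemma okH_mono {hi : ℕ} {hs : List ℕ} (h : okH hi hs) {t t' : ℕ} (htt : t ≤ t') :
    heights hi hs t' ≤ heights hi hs t := by
  induction t' with
  | zero => simp_all
  | succ t' ih =>
    rcases Nat.lt_or_ge t (t' + 1) with h' | h'
    · exact le_trans (h.1 t') (ih (by omega))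
    · have : t = t' + 1 := by omega
      subst this; rfl

lemma heights_one_le {hi : ℕ} {hs : List ℕ} (h : okH hi hs) (t : ℕ) :
    1 ≤ heights hi hs t := h.2 t

lemma heights_of_big {hi : ℕ} {hs : List ℕ} {t : ℕ} (h : hs.length ≤ t) :
    heights hi hs (t + 1) = 1 := by
  rw [heights_succ, List.getD_eq_default]
  exact h

/-- The staircase path with source `(hi, q)`, crossing heights `hs`,
and sink `(1, q + hs.length)`. -/
def build : ℕ → ℕ → List ℕ → List (ℕ × ℕ)
  | q, hi, [] => colBlock q 1 hi
  | q, hi, lo :: rest => colBlock q lo hi ++ build (q + 1) lo rest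

lemma build_ne_nil {q hi : ℕ} {hs : List ℕ} : build q hi hs ≠ [] := by
  cases hs with
  | nil => exact colBlock_ne_nil
  | cons lo rest =>
    rw [build]
    intro h
    exact colBlock_ne_nil (List.append_eq_nil_iff.mp h).1

lemma head?_build {q hi : ℕ} {hs : List ℕ} (h : okH hi hs) :
    (build q hi hs).head? = some (hi, q) := by
  cases hs with
  | nil => exact head?_colBlock (h.2 0)
  | cons lo rest =>
    rw [build, List.head?_append, head?_colBlock (okH_cons.1 h).1]
    rfl

lemma head_build {q hi : ℕ} {hs : List ℕ} (h : okH hi hs) (hne : build q hi hs ≠ []) :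
    (build q hi hs).head hne = (hi, q) := by
  have := List.head?_eq_head hne
  rw [head?_build h] at this
  exact (Option.some_injective _ this).symm

lemma getLast?_build {hi : ℕ} {hs : List ℕ} : ∀ q, (build q hi hs).getLast? = some (1, q + hs.length) := by
  induction hs generalizing hi with
  | nil => intro q; simpa [build] using getLast?_colBlock (q := q) (lo := 1) hi
  | cons lo rest ih =>
    intro q
    rw [build, List.getLast?_append_of_ne_nil _ build_ne_nil, ih q.succ]
    simp; omega

lemma getLast_build {q hi : ℕ} {hs : List ℕ} (hne : build q hi hs ≠ []) :
    (build q hi hs).getLast hne = (1, q + hs.length) := by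
  have := List.getLast?_eq_getLast hne
  rw [getLast?_build] at this
  exact (Option.some_injective _ this).symm

lemma chain'_build {hi : ℕ} {hs : List ℕ} (h : okH hi hs) : ∀ q, (build q hi hs).Chain' gridStep := by
  induction hs generalizing hi with
  | nil => intro q; exact chain'_colBlock
  | cons lo rest ih =>
    intro q
    rw [build]; unfold List.Chain'; rw [List.isChain_append]
    refine ⟨chain'_colBlock, ih (okH_cons.1 h).2 (q + 1), ?_⟩
    intro x hx y hy
    rw [getLast?_colBlock] at hx
    rw [head?_build (okH_cons.1 h).2] at hy
    cases hx; cases hy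
    right; exact ⟨rfl, rfl⟩

lemma mem_build {hi : ℕ} {hs : List ℕ} (h : okH hi hs) {v : ℕ × ℕ} : ∀ q,
    (v ∈ build q hi hs ↔ q ≤ v.2 ∧ v.2 ≤ q + hs.length ∧
      heights hi hs (v.2 + 1 - q) ≤ v.1 ∧ v.1 ≤ heights hi hs (v.2 - q)) := by
  induction hs generalizing hi with
  | nil =>
    intro q
    have h1n : (1:ℕ) ≤ hi := h.2 0
    rw [build, mem_colBlock h1n]
    constructor
    · rintro ⟨h1, h2, h3⟩
      subst h1
      exact ⟨le_refl _, by simp, by simp [heights_succ, h2], by simpa using h3⟩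
    · rintro ⟨h1, h2, h3, h4⟩
      simp at h2
      have hq : v.2 = q := by omega
      rw [hq] at h3 h4 ⊢
      simp [heights_succ] at h3
      exact ⟨rfl, h3, by simpa using h4⟩
  | cons lo rest ih =>
    intro q
    obtain ⟨hle, hok⟩ := okH_cons.1 h
    rw [build, List.mem_append, mem_colBlock hle, ih hok (q + 1)]
    constructor
    · rintro (⟨h1, h2, h3⟩ | ⟨h1, h2, h3, h4⟩)
      · subst h1
        refine ⟨le_refl _, by simp, ?_, ?_⟩
        · simpa [Nat.sub_self, heights_succ] using h2
        · simpa [Nat.sub_self] using h3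
      · refine ⟨by omega, by simp; omega, ?_, ?_⟩
        · have e : v.2 + 1 - q = (v.2 + 1 - (q + 1)) + 1 := by omega
          rw [e, heights_cons]
          exact h3
        · have e : v.2 - q = (v.2 - (q + 1)) + 1 := by omega
          rw [e, heights_cons]
          exact h4
    · rintro ⟨h1, h2, h3, h4⟩
      rcases Nat.lt_or_ge q v.2 with h5 | h5
      · right
        refine ⟨by omega, by simp at h2 ⊢; omega, ?_, ?_⟩
        · have e : v.2 + 1 - q = (v.2 + 1 - (q + 1)) + 1 := by omega
          rw [e, heights_cons] at h3
          exact h3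
        · have e : v.2 - q = (v.2 - (q + 1)) + 1 := by omega
          rw [e, heights_cons] at h4
          exact h4
      · left
        have hq : v.2 = q := by omega
        rw [hq] at h3 h4
        simp [Nat.sub_self] at h4
        have e : q + 1 - q = 1 := by omega
        rw [e] at h3
        rw [heights_cons] at h3
        exact ⟨hq, by simpa using h3, h4⟩

lemma sum_build {hi : ℕ} {hs : List ℕ} (h : okH hi hs) (f : ℕ × ℕ → ℝ) : ∀ q,
    ((build q hi hs).map f).sum =
      ∑ m ∈ Finset.range (hs.length + 1),
        ∑ p ∈ Finset.Icc (heights hi hs (m + 1)) (heights hi hs m), f (p, q + m) := by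
  induction hs generalizing hi with
  | nil =>
    intro q
    have h1n : (1:ℕ) ≤ hi := h.2 0
    rw [build, sum_colBlock h1n]
    simp [heights_succ]
  | cons lo rest ih =>
    intro q
    obtain ⟨hle, hok⟩ := okH_cons.1 h
    rw [build, List.map_append, List.sum_append, sum_colBlock hle, ih hok (q + 1)]
    conv_rhs => rw [Finset.sum_range_succ']
    rw [add_comm]
    congr 1
    · apply Finset.sum_congr rfl
      intro k _
      rw [show (k:ℕ) + 1 + 1 = (k + 1) + 1 from rfl, heights_cons, heights_cons]
      apply Finset.sum_congr rfl
      intro p _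
      have e : q + 1 + k = q + (k + 1) := by omega
      rw [e]

/-- Structure theorem: every grid path (chain of grid steps ending at row 1,
with all rows at least 1) is a staircase. -/
lemma exists_build (v : List (ℕ × ℕ)) (hne : v ≠ []) (hch : v.Chain' gridStep)
    (hlast : (v.getLast hne).1 = 1) (hrows : ∀ x ∈ v, 1 ≤ x.1) :
    ∃ hs, okH (v.head hne).1 hs ∧ v = build (v.head hne).2 (v.head hne).1 hs := by
  induction v with
  | nil => exact absurd rfl hne
  | cons x rest ih =>
    cases rest with
    | nil =>
      have hx1 : x.1 = 1 := by simpa using hlast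
      refine ⟨[], ?_, ?_⟩
      · constructor <;> intro t <;> cases t <;> simp [heights_succ, hx1]
      · simp only [List.head_cons]
        rw [build, colBlock_of_ge (by omega)]
        simp [Prod.ext_iff, hx1]
    | cons y rest' =>
      have hne' : (y :: rest') ≠ [] := by simp
      have hch' : (y :: rest').Chain' gridStep := (List.isChain_cons_cons.1 hch).2
      have hstep : gridStep x y := (List.isChain_cons_cons.1 hch).1
      have hlast' : ((y :: rest').getLast hne').1 = 1 := by
        rwa [List.getLast_cons hne'] at hlast
      have hrows' : ∀ z ∈ (y :: rest'), 1 ≤ z.1 := fun z hz => hrows z (by simp [hz])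
      obtain ⟨hs, hok, hv⟩ := ih hne' hch' hlast' hrows'
      simp only [List.head_cons] at hv hok ⊢
      rcases hstep with ⟨h1, h2⟩ | ⟨h1, h2⟩
      · -- vertical step : y = (x.1 - 1, x.2)
        refine ⟨hs, ?_, ?_⟩
        · constructor
          · intro t
            cases t with
            | zero =>
              have := okH_mono hok (le_refl 1)
              calc heights x.1 hs 1 = heights y.1 hs 1 := by cases hs <;> rfl
                _ ≤ y.1 := hok.1 0
                _ ≤ x.1 := by omega
            | succ t =>
              have := hok.1 (t + 1)
              cases hs <;> simpa [heights_succ] using this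
          · intro t
            cases t with
            | zero => exact hrows x (by simp)
            | succ t => have := hok.2 (t + 1); cases hs <;> simpa [heights_succ] using this
        · -- x :: rest = build x.2 x.1 hs
          have hcons : ∀ (q hi : ℕ) (hs : List ℕ), okH hi hs →
              build q (hi + 1) hs = (hi + 1, q) :: build q hi hs := by
            intro q hi hs₀ hok₀
            cases hs₀ with
            | nil =>
              rw [build, build, colBlock_of_lt (by have := hok₀.2 0; simp at this; omega)]
              simp
            | cons lo t =>
              rw [build, build, colBlock_of_lt (by have := (okH_cons.1 hok₀).1; omega)]
              simp
          rw [show x.1 = y.1 + 1 from by omega, hcons x.2 y.1 hs hok]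
          rw [h2] at hv
          rw [hv]
          simp [List.cons.injEq, Prod.ext_iff]
          omega
      · -- horizontal step : y = (x.1, x.2 + 1)
        refine ⟨x.1 :: hs, ?_, ?_⟩
        · rw [okH_cons]; exact ⟨le_refl _, h1 ▸ hok⟩
        · rw [build, colBlock_of_ge (by omega), hv, h1, h2]
          simp

end SuperTP4


namespace SuperTP4

/-- Number of elements of `M` that are `≥ u`. -/
def cntGe (M : Multiset ℕ) (u : ℕ) : ℕ := Multiset.card (M.filter (fun x => u ≤ x))

/-- Number of elements of `M` that are `> u`. -/
def cntGt (M : Multiset ℕ) (u : ℕ) : ℕ := Multiset.card (M.filter (fun x => u < x))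

/-- The `(t+1)`-st largest element of `M` (where `t < card M`). -/
noncomputable def sel (M : Multiset ℕ) (t : ℕ) : ℕ := sInf {u | cntGt M u ≤ t}

lemma cntGe_add {M M' : Multiset ℕ} {u : ℕ} : cntGe (M + M') u = cntGe M u + cntGe M' u := by
  simp [cntGe, Multiset.filter_add]

lemma cntGt_add {M M' : Multiset ℕ} {u : ℕ} : cntGt (M + M') u = cntGt M u + cntGt M' u := by
  simp [cntGt, Multiset.filter_add]

lemma cntGt_le_cntGe {M : Multiset ℕ} {u : ℕ} : cntGt M u ≤ cntGe M u :=
  Multiset.card_le_card (Multiset.monotone_filter_right _ (fun x hx => le_of_lt hx))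

lemma cntGe_le_card {M : Multiset ℕ} {u : ℕ} : cntGe M u ≤ Multiset.card M :=
  Multiset.card_le_card (Multiset.filter_le _ M)

lemma cntGe_succ {M : Multiset ℕ} {u : ℕ} : cntGe M (u + 1) = cntGt M u := by
  have e : Multiset.filter (fun x => u + 1 ≤ x) M = Multiset.filter (fun x => u < x) M :=
    Multiset.filter_congr (fun x _ => by omega)
  rw [cntGe, cntGt, e]

lemma cntGt_anti {M : Multiset ℕ} {u v : ℕ} (h : u ≤ v) : cntGt M v ≤ cntGt M u :=
  Multiset.card_le_card (Multiset.monotone_filter_right _ (fun x hx => by omega))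

lemma cntGe_anti {M : Multiset ℕ} {u v : ℕ} (h : u ≤ v) : cntGe M v ≤ cntGe M u :=
  Multiset.card_le_card (Multiset.monotone_filter_right _ (fun x hx => by omega))

lemma cntGe_eq_add_count {M : Multiset ℕ} {u : ℕ} : cntGe M u = cntGt M u + M.count u := by
  simp only [cntGe, cntGt]
  rw [Multiset.count_eq_card_filter_eq]
  rw [← Multiset.card_add, Multiset.filter_add_filter]
  have e1 : Multiset.filter (fun a => u < a ∨ u = a) M = Multiset.filter (fun x => u ≤ x) M := by
    apply Multiset.filter_congr; intro x _; constructor <;> omega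
  have e2 : Multiset.filter (fun a => u < a ∧ u = a) M = 0 := by
    rw [Multiset.filter_eq_nil]; intro a _ h; omega
  rw [e1, e2]
  simp

lemma sel_nonempty {M : Multiset ℕ} {t : ℕ} : {u | cntGt M u ≤ t}.Nonempty := by
  refine ⟨M.sum, ?_⟩
  have : cntGt M M.sum = 0 := by
    simp only [cntGt]
    rw [Multiset.card_eq_zero, Multiset.filter_eq_nil]
    intro a ha h
    exact absurd (Multiset.single_le_sum (fun x _ => Nat.zero_le x) a ha) (by omega)
  simp [Set.mem_setOf_eq, this]

lemma sel_spec1 {M : Multiset ℕ} {t : ℕ} : cntGt M (sel M t) ≤ t :=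
  Nat.sInf_mem (sel_nonempty)

lemma sel_spec2 {M : Multiset ℕ} {t : ℕ} (ht : t < Multiset.card M) :
    t < cntGe M (sel M t) := by
  rcases Nat.eq_zero_or_pos (sel M t) with h | h
  · rw [h]
    have : cntGe M 0 = Multiset.card M := by
      unfold cntGe
      congr 1
      exact Multiset.filter_eq_self.2 (fun a _ => Nat.zero_le a)
    omega
  · have hx : sel M t - 1 ∉ {u | cntGt M u ≤ t} :=
      Nat.notMem_of_lt_sInf (show sel M t - 1 < sel M t by omega)
    simp only [Set.mem_setOf_eq, not_le] at hx
    have : cntGe M (sel M t) = cntGt M (sel M t - 1) := by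
      rw [← cntGe_succ]
      congr 1
      omega
    omega

lemma le_sel_of_cntGe {M : Multiset ℕ} {t v : ℕ} (h : t < cntGe M v) : v ≤ sel M t := by
  by_contra hc
  push_neg at hc
  have h2 : cntGe M v ≤ cntGt M (sel M t) :=
    Multiset.card_le_card (Multiset.monotone_filter_right _ (fun x hx => by omega))
  have := sel_spec1 (M := M) (t := t)
  omega

lemma lt_sel_of_cntGt {M : Multiset ℕ} {t v : ℕ} (h : t < cntGt M v) : v < sel M t := by
  by_contra hc
  push_neg at hc
  have h2 : cntGt M v ≤ cntGt M (sel M t) := cntGt_anti hc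
  have := sel_spec1 (M := M) (t := t)
  omega

lemma sel_le_of_cntGt {M : Multiset ℕ} {t v : ℕ} (h : cntGt M v ≤ t) : sel M t ≤ v :=
  Nat.sInf_le h

lemma sel_eq_iff {M : Multiset ℕ} {t v : ℕ} (ht : t < Multiset.card M) :
    sel M t = v ↔ cntGt M v ≤ t ∧ t < cntGe M v := by
  constructor
  · rintro rfl
    exact ⟨sel_spec1, sel_spec2 ht⟩
  · rintro ⟨h1, h2⟩
    exact le_antisymm (sel_le_of_cntGt h1) (le_sel_of_cntGe h2)

lemma sel_mem {M : Multiset ℕ} {t : ℕ} (ht : t < Multiset.card M) : sel M t ∈ M := by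
  have h1 := sel_spec1 (M := M) (t := t)
  have h2 := sel_spec2 ht
  rw [cntGe_eq_add_count] at h2
  have : 0 < M.count (sel M t) := by omega
  exact Multiset.count_pos.1 this

/-- Selecting all the order statistics recovers the multiset. -/
lemma sel_complete (M : Multiset ℕ) :
    (Multiset.range (Multiset.card M)).map (sel M) = M := by
  apply Multiset.ext.2
  intro v
  rw [Multiset.count_map]
  have e : Multiset.filter (fun t => v = sel M t) (Multiset.range (Multiset.card M)) =
      (Finset.filter (fun t => v = sel M t) (Finset.range (Multiset.card M))).val := rfl
  rw [e]
  have e2 : Finset.filter (fun t => v = sel M t) (Finset.range (Multiset.card M)) =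
      Finset.Ico (cntGt M v) (cntGe M v) := by
    ext t
    simp only [Finset.mem_filter, Finset.mem_range, Finset.mem_Ico]
    constructor
    · rintro ⟨h1, h2⟩
      have := (sel_eq_iff h1).1 h2.symm
      omega
    · rintro ⟨h1, h2⟩
      have ht : t < Multiset.card M := lt_of_lt_of_le h2 cntGe_le_card
      exact ⟨ht, ((sel_eq_iff ht).2 ⟨h1, h2⟩).symm⟩
  rw [e2]
  have : (Finset.Ico (cntGt M v) (cntGe M v)).card = cntGe M v - cntGt M v := Nat.card_Ico _ _
  have hc := cntGe_eq_add_count (M := M) (u := v)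
  simp only [Finset.card_val] at *
  omega

end SuperTP4


namespace SuperTP4

/-- Abstract data of an admissible flow with `N` paths in the `n`-row grid:
`H i q` is the row at which the `i`-th path (ending at sink `t_{i+1}`) crosses
from column `q` to column `q+1` (with `H i 0` its source row, and `1` past its sink). -/
structure FlowData (n N : ℕ) where
  H : ℕ → ℕ → ℕ
  mono : ∀ i q, H i (q + 1) ≤ H i q
  one_le : ∀ i q, 1 ≤ H i q
  le_n : ∀ i q, H i q ≤ n
  top : ∀ i q, i + 1 ≤ q → H i q = 1
  disj : ∀ i j q, i < j → j < N → 1 ≤ q → q ≤ i + 1 → H i (q - 1) < H j q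

namespace FlowData

variable {n N : ℕ}

lemma mono' (D : FlowData n N) (i : ℕ) {q q' : ℕ} (h : q ≤ q') : D.H i q' ≤ D.H i q := by
  induction q' with
  | zero => simp_all
  | succ q' ih =>
    rcases Nat.lt_or_ge q (q' + 1) with h' | h'
    · exact le_trans (D.mono i q') (ih (by omega))
    · have : q = q' + 1 := by omega
      subst this; rfl

/-- The multiset of crossing heights of the flow at level `q` (boundary between
columns `q` and `q+1`); for `q = 0` this is the multiset of sources. -/
def levM (D : FlowData n N) (q : ℕ) : Multiset ℕ :=
  (Finset.Ico q N).val.map (fun i => D.H i q)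

lemma card_levM (D : FlowData n N) (q : ℕ) : Multiset.card (D.levM q) = N - q := by
  simp [levM]

lemma cntGe_levM (D : FlowData n N) (q u : ℕ) :
    cntGe (D.levM q) u = ((Finset.Ico q N).filter (fun i => u ≤ D.H i q)).card := by
  rw [cntGe, levM, ← Multiset.countP_eq_card_filter, Multiset.countP_map]
  rfl

lemma cntGt_levM (D : FlowData n N) (q u : ℕ) :
    cntGt (D.levM q) u = ((Finset.Ico q N).filter (fun i => u < D.H i q)).card := by
  rw [cntGt, levM, ← Multiset.countP_eq_card_filter, Multiset.countP_map]
  rfl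

lemma mem_levM_imp (D : FlowData n N) {q v : ℕ} (h : v ∈ D.levM q) :
    1 ≤ v ∧ v ≤ n := by
  rw [levM, Multiset.mem_map] at h
  obtain ⟨i, _, rfl⟩ := h
  exact ⟨D.one_le i q, D.le_n i q⟩

/-- Interlacing: the count drops by at most one (and strictly) from one level
to the next. -/
lemma cntGe_le_cntGt_succ (D : FlowData n N) {q : ℕ} (hq : 1 ≤ q) (u : ℕ) :
    cntGe (D.levM (q - 1)) u ≤ cntGt (D.levM q) u + 1 := by
  rw [cntGe_levM, cntGt_levM]
  set S := (Finset.Ico (q - 1) N).filter (fun i => u ≤ D.H i (q - 1)) with hS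
  set T := (Finset.Ico q N).filter (fun i => u < D.H i q) with hT
  set S' := S.filter (fun i => i + 1 < N) with hS'
  have h1 : S ⊆ insert (N - 1) S' := by
    intro i hi
    rcases Nat.lt_or_ge (i + 1) N with h | h
    · exact Finset.mem_insert_of_mem (Finset.mem_filter.2 ⟨hi, h⟩)
    · have hiN : i < N := by
        have := (Finset.mem_Ico.1 (Finset.mem_filter.1 hi).1).2
        exact this
      have : i = N - 1 := by omega
      simp [this]
  have h2 : S'.card ≤ T.card := by
    apply Finset.card_le_card_of_injOn (fun i => i + 1)
    · intro i hi
      obtain ⟨hiS, hiN⟩ := Finset.mem_filter.1 hi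
      obtain ⟨hiI, hiu⟩ := Finset.mem_filter.1 hiS
      have hiI' := Finset.mem_Ico.1 hiI
      refine Finset.mem_filter.2 ⟨Finset.mem_Ico.2 (by beta_reduce; omega), ?_⟩
      calc u ≤ D.H i (q - 1) := hiu
        _ < D.H (i + 1) q := D.disj i (i + 1) q (by omega) (by omega) hq (by omega)
    · intro a _ b _ hab
      simpa using hab
  calc S.card ≤ (insert (N - 1) S').card := Finset.card_le_card h1
    _ ≤ S'.card + 1 := Finset.card_insert_le _ _
    _ ≤ T.card + 1 := by omega

lemma cntGe_succ_le (D : FlowData n N) (q u : ℕ) :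
    cntGe (D.levM (q + 1)) u ≤ cntGe (D.levM q) u := by
  rw [cntGe_levM, cntGe_levM]
  apply Finset.card_le_card
  intro i hi
  obtain ⟨hiI, hiu⟩ := Finset.mem_filter.1 hi
  have hiI' := Finset.mem_Ico.1 hiI
  refine Finset.mem_filter.2 ⟨Finset.mem_Ico.2 (by omega), ?_⟩
  exact le_trans (le_trans hiu (D.mono i q)) (le_refl _)

/-- The weight of one path of the flow data. -/
noncomputable def pathW (D : FlowData n N) (w : ℕ → ℕ → ℝ) (i : ℕ) : ℝ :=
  ∑ q ∈ Finset.Icc 1 (i + 1), ∑ p ∈ Finset.Icc (D.H i q) (D.H i (q - 1)), w p q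

/-- The total weight of the flow, written via level counts. -/
noncomputable def Eterm (D : FlowData n N) (w : ℕ → ℕ → ℝ) : ℝ :=
  ∑ q ∈ Finset.Icc 1 N, ∑ p ∈ Finset.Icc 1 n,
    ((cntGe (D.levM (q - 1)) p : ℝ) - (cntGe (D.levM q) (p + 1) : ℝ)) * w p q

/-- Column occupancy identity. -/
lemma column_card (D : FlowData n N) {q p : ℕ} (hq : 1 ≤ q) (hp : 1 ≤ p) :
    ((Finset.Ico (q - 1) N).filter (fun i => D.H i q ≤ p ∧ p ≤ D.H i (q - 1))).card
      + cntGe (D.levM q) (p + 1)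
    = cntGe (D.levM (q - 1)) p := by
  rw [cntGe_levM, cntGe_levM]
  have hB : (Finset.Ico q N).filter (fun i => p + 1 ≤ D.H i q)
      = (Finset.Ico (q - 1) N).filter (fun i => q ≤ i ∧ p + 1 ≤ D.H i q) := by
    ext i
    simp only [Finset.mem_filter, Finset.mem_Ico]
    constructor
    · rintro ⟨⟨h1, h2⟩, h3⟩; exact ⟨⟨by omega, h2⟩, h1, h3⟩
    · rintro ⟨⟨h1, h2⟩, h3, h4⟩; exact ⟨⟨h3, h2⟩, h4⟩
  rw [hB]
  rw [← Finset.card_union_of_disjoint, ← Finset.filter_or]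
  · apply Finset.card_nbij id
    · intro i hi
      simp only [Finset.mem_coe, id, Finset.mem_filter, Finset.mem_Ico] at hi ⊢
      obtain ⟨h1, h2 | h2⟩ := hi
      · exact ⟨h1, h2.2⟩
      · exact ⟨h1, le_trans (by omega) (le_trans h2.2 (D.mono' i (by omega)))⟩
    · intro a _ b _ h; exact h
    · intro i hi
      simp only [Finset.coe_filter, Set.mem_image, Set.mem_setOf_eq, Finset.mem_Ico] at hi ⊢
      obtain ⟨⟨h1, h2⟩, h3⟩ := hi
      refine ⟨i, ⟨⟨by omega, h2⟩, ?_⟩, rfl⟩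
      rcases Nat.lt_or_ge i q with h4 | h4
      · left
        have : D.H i q = 1 := D.top i q (by omega)
        exact ⟨by omega, h3⟩
      · rcases Nat.lt_or_ge p (D.H i q) with h5 | h5
        · right; exact ⟨h4, by omega⟩
        · left; exact ⟨h5, h3⟩
  · rw [Finset.disjoint_filter]
    rintro i _ ⟨h1, h2⟩ ⟨_, h3⟩
    omega

/-- Summing interval sums over an index set. -/
lemma sum_intervals {s : Finset ℕ} {lo hi : ℕ → ℕ} {u : Finset ℕ}
    (hsub : ∀ i ∈ s, Finset.Icc (lo i) (hi i) ⊆ u) (g : ℕ → ℝ) :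
    ∑ i ∈ s, ∑ p ∈ Finset.Icc (lo i) (hi i), g p
      = ∑ p ∈ u, ((s.filter (fun i => lo i ≤ p ∧ p ≤ hi i)).card : ℝ) * g p := by
  have step : ∀ i ∈ s, ∑ p ∈ Finset.Icc (lo i) (hi i), g p
      = ∑ p ∈ u, if lo i ≤ p ∧ p ≤ hi i then g p else 0 := by
    intro i hi'
    rw [← Finset.sum_filter]
    congr 1
    ext p
    simp only [Finset.mem_filter, Finset.mem_Icc]
    constructor
    · intro hp; exact ⟨hsub i hi' (Finset.mem_Icc.2 hp), hp⟩
    · rintro ⟨_, hp⟩; exact hp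
  rw [Finset.sum_congr rfl step, Finset.sum_comm]
  apply Finset.sum_congr rfl
  intro p _
  rw [Finset.sum_ite, Finset.sum_const_zero, add_zero, Finset.sum_const]
  simp [mul_comm]

/-- The total weight of a flow equals its `Eterm`. -/
lemma sum_pathW (D : FlowData n N) (hn : 1 ≤ n) (w : ℕ → ℕ → ℝ) :
    ∑ i ∈ Finset.range N, D.pathW w i = D.Eterm w := by
  unfold pathW Eterm
  have step1 : ∀ i ∈ Finset.range N,
      ∑ q ∈ Finset.Icc 1 (i + 1), ∑ p ∈ Finset.Icc (D.H i q) (D.H i (q - 1)), w p q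
      = ∑ q ∈ Finset.Icc 1 N, if q ≤ i + 1 then (∑ p ∈ Finset.Icc (D.H i q) (D.H i (q - 1)), w p q) else 0 := by
    intro i hi
    rw [← Finset.sum_filter]
    congr 1
    ext q
    simp only [Finset.mem_filter, Finset.mem_Icc, Finset.mem_range] at hi ⊢
    omega
  rw [Finset.sum_congr rfl step1, Finset.sum_comm]
  apply Finset.sum_congr rfl
  intro q hq
  have hq1 : 1 ≤ q := (Finset.mem_Icc.1 hq).1
  have e1 : ∑ i ∈ Finset.range N, (if q ≤ i + 1 then (∑ p ∈ Finset.Icc (D.H i q) (D.H i (q - 1)), w p q) else 0)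
      = ∑ i ∈ Finset.Ico (q - 1) N, ∑ p ∈ Finset.Icc (D.H i q) (D.H i (q - 1)), w p q := by
    rw [← Finset.sum_filter]
    congr 1
    ext i
    simp only [Finset.mem_filter, Finset.mem_range, Finset.mem_Ico]
    omega
  rw [e1]
  rw [sum_intervals (u := Finset.Icc 1 n) (fun i _ => ?_) (fun p => w p q)]
  · apply Finset.sum_congr rfl
    intro p hp
    have hp1 : 1 ≤ p := (Finset.mem_Icc.1 hp).1
    congr 1
    have := D.column_card (q := q) (p := p) hq1 hp1
    have hcast : ((((Finset.Ico (q - 1) N).filter (fun i => D.H i q ≤ p ∧ p ≤ D.H i (q - 1))).card : ℝ))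
        = (cntGe (D.levM (q - 1)) p : ℝ) - (cntGe (D.levM q) (p + 1) : ℝ) := by
      have := congrArg (fun x : ℕ => (x : ℝ)) this
      push_cast at this ⊢
      linarith
    exact hcast
  · intro x hx
    simp only [Finset.mem_Icc] at hx ⊢
    exact ⟨le_trans (D.one_le i q) hx.1, le_trans hx.2 (D.le_n i (q - 1))⟩

end FlowData

end SuperTP4


namespace SuperTP4

open FlowData

lemma pathW_of_build {n N : ℕ} (D : FlowData n N) (w : ℕ → ℕ → ℝ) (i : ℕ) {hi : ℕ} {hs : List ℕ}
    (hok : okH hi hs) (hlen : hs.length = i) (hagree : ∀ q, heights hi hs q = D.H i q) :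
    ((build 1 hi hs).map (fun v => w v.1 v.2)).sum = D.pathW w i := by
  rw [sum_build hok _ 1, pathW, hlen, ← Finset.Ico_add_one_right_eq_Icc, Finset.sum_Ico_eq_sum_range]
  have e : i + 1 + 1 - 1 = i + 1 := by omega
  rw [e]
  apply Finset.sum_congr rfl
  intro m _
  have e1 : 1 + m - 1 = m := by omega
  have e2 : 1 + m = m + 1 := by omega
  rw [e1, e2, hagree, hagree]

lemma flowWeight_eq {n m' N : ℕ} (w : ℕ → ℕ → ℝ) (F : List (GridPath n m'))
    (hlenF : F.length = N) (D : FlowData n N)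
    (hverts : ∀ (i : Fin F.length), ∃ hi hs, okH hi hs ∧ hs.length = (i : ℕ) ∧
      (∀ q, heights hi hs q = D.H i q) ∧ (F.get i).verts = build 1 hi hs) :
    flowWeight w F = ∑ i ∈ Finset.range N, D.pathW w i := by
  subst hlenF
  have e : F.map (pathWeight w) = List.ofFn (fun i => pathWeight w (F.get i)) := by
    conv_lhs => rw [← List.ofFn_get F]
    rw [List.map_ofFn]
    rfl
  rw [flowWeight, e, List.sum_ofFn]
  rw [← Fin.sum_univ_eq_sum_range (fun i => D.pathW w i) F.length]
  apply Finset.sum_congr rfl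
  intro i _
  obtain ⟨hi, hs, hok, hlen, hagree, hv⟩ := hverts i
  rw [pathWeight, hv]
  exact pathW_of_build D w i hok hlen hagree

/-- Extraction of abstract flow data from an admissible flow. -/
lemma exists_flowData {n m' : ℕ} (hn : 1 ≤ n) (w : ℕ → ℕ → ℝ) (S : Finset ℕ)
    (F : List (GridPath n m')) (hadm : AdmissibleFor n m' S F) :
    ∃ D : FlowData n S.card,
      flowWeight w F = ∑ i ∈ Finset.range S.card, D.pathW w i ∧
      D.levM 0 = S.val := by
  obtain ⟨hpw, hsnk, hlen, hsrc⟩ := hadm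
  have hbuild0 : ∀ (i : ℕ) (h : i < F.length), ∃ hd hs, okH hd hs ∧ hs.length = i ∧
      (F.get ⟨i, h⟩).verts = build 1 hd hs := by
    intro i h
    set P := F.get ⟨i, h⟩ with hP
    obtain ⟨hs, hok, hv⟩ := exists_build P.verts P.nonempty P.chain P.snk
      (fun x hx => (P.range x hx).1)
    rw [P.src] at hv
    refine ⟨(P.verts.head P.nonempty).1, hs, hok, ?_, hv⟩
    -- length from the sink condition
    have h5 : P.verts.getLast? = some (1, 1 + hs.length) := by
      rw [hv]; exact getLast?_build 1
    have h6 := List.getLast?_eq_getLast P.nonempty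
    rw [h5] at h6
    have h7 : ((F.get ⟨i, h⟩).verts.getLast (F.get ⟨i, h⟩).nonempty) = (1, 1 + hs.length) :=
      (Option.some_injective _ h6.symm)
    have h8 := hsnk i h
    rw [h7] at h8
    simp at h8
    omega
  choose hd hs hok hslen hbuild using hbuild0
  set Hf : ℕ → ℕ → ℕ := fun i q =>
    if h : i < F.length then heights (hd i h) (hs i h) q else 1 with hHfdef
  have hHf : ∀ (i : ℕ) (h : i < F.length) (q : ℕ), Hf i q = heights (hd i h) (hs i h) q := by
    intro i h q
    simp only [hHfdef, h, dif_pos]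
  have hmem : ∀ (i : ℕ) (h : i < F.length) (v : ℕ × ℕ), v ∈ (F.get ⟨i, h⟩).verts ↔
      (1 ≤ v.2 ∧ v.2 ≤ 1 + i ∧ Hf i (v.2 + 1 - 1) ≤ v.1 ∧ v.1 ≤ Hf i (v.2 - 1)) := by
    intro i h v
    rw [hbuild i h, mem_build (hok i h) 1, hHf i h, hHf i h, hslen i h]
  have hone : ∀ (i q : ℕ), 1 ≤ Hf i q := by
    intro i q
    by_cases h : i < F.length
    · rw [hHf i h]; exact heights_one_le (hok i h) q
    · simp [hHfdef, h]
  have hmono : ∀ (i : ℕ) {q q' : ℕ}, q ≤ q' → Hf i q' ≤ Hf i q := by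
    intro i q q' hqq
    by_cases h : i < F.length
    · rw [hHf i h, hHf i h]; exact okH_mono (hok i h) hqq
    · simp [hHfdef, h]
  have htop : ∀ (i q : ℕ), i + 1 ≤ q → Hf i q = 1 := by
    intro i q hiq
    by_cases h : i < F.length
    · rw [hHf i h]
      have e : q - 1 + 1 = q := by omega
      rw [← e]
      exact heights_of_big (by rw [hslen i h]; omega)
    · simp [hHfdef, h]
  -- vertex disjointness
  have hdisj : ∀ (a b : ℕ), a < b → (hb : b < F.length) →
      ∀ q, 1 ≤ q → q ≤ a + 1 → Hf a (q - 1) < Hf b q := by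
    intro a b hab hb
    have ha : a < F.length := by omega
    have hpair : ∀ v ∈ (F.get ⟨a, ha⟩).verts, v ∉ (F.get ⟨b, hb⟩).verts :=
      List.pairwise_iff_get.1 hpw ⟨a, ha⟩ ⟨b, hb⟩ (by simpa using hab)
    have key : ∀ d q, q + d = a + 1 → 1 ≤ q → Hf a (q - 1) < Hf b q := by
      intro d
      induction d with
      | zero =>
        intro q hq hq1
        have hqa : q = a + 1 := by omega
        by_contra hc
        push_neg at hc
        have hAi : Hf a q = 1 := htop a q (by omega)
        have hvb : ((Hf b q, q) : ℕ × ℕ) ∈ (F.get ⟨b, hb⟩).verts := by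
          rw [hmem b hb]
          refine ⟨by omega, by simp; omega, ?_, ?_⟩
          · simp only [Nat.add_sub_cancel]
            exact le_refl _
          · exact hmono b (by omega)
        have hva : ((Hf b q, q) : ℕ × ℕ) ∈ (F.get ⟨a, ha⟩).verts := by
          rw [hmem a ha]
          have := hone b q
          refine ⟨by omega, by simp; omega, ?_, ?_⟩
          · simp only [Nat.add_sub_cancel]; omega
          · exact hc
        exact hpair _ hva hvb
      | succ d ih =>
        intro q hq hq1
        have IH := ih (q + 1) (by omega) (by omega)
        simp only [Nat.add_sub_cancel] at IH
        by_contra hc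
        push_neg at hc
        have hlt : Hf a q < Hf b q := by
          have := hmono b (show q ≤ q + 1 by omega)
          omega
        have hvb : ((Hf b q, q) : ℕ × ℕ) ∈ (F.get ⟨b, hb⟩).verts := by
          rw [hmem b hb]
          refine ⟨by omega, by simp; omega, ?_, ?_⟩
          · simp only [Nat.add_sub_cancel]
            exact le_refl _
          · exact hmono b (by omega)
        have hva : ((Hf b q, q) : ℕ × ℕ) ∈ (F.get ⟨a, ha⟩).verts := by
          rw [hmem a ha]
          refine ⟨by omega, by simp; omega, ?_, ?_⟩
          · simp only [Nat.add_sub_cancel]; omega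
          · exact hc
        exact hpair _ hva hvb
    intro q hq1 hqa
    exact key (a + 1 - q) q (by omega) hq1
  have hle_n : ∀ i q, Hf i q ≤ n := by
    intro i q
    by_cases h : i < F.length
    · rcases Nat.eq_zero_or_pos q with hq | hq
      · subst hq
        have hh : ((F.get ⟨i, h⟩).verts.head (F.get ⟨i, h⟩).nonempty) ∈ (F.get ⟨i, h⟩).verts :=
          List.head_mem _
        have hr := ((F.get ⟨i, h⟩).range _ hh).2.1
        have he : ((F.get ⟨i, h⟩).verts.head (F.get ⟨i, h⟩).nonempty).1 = Hf i 0 := by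
          rw [hHf i h]
          have h9 : (F.get ⟨i, h⟩).verts.head (F.get ⟨i, h⟩).nonempty
              = (hd i h, 1) := by
            have := head?_build (q := 1) (hok i h)
            rw [← hbuild i h] at this
            have h6 := List.head?_eq_head (F.get ⟨i, h⟩).nonempty
            rw [this] at h6
            exact (Option.some_injective _ h6.symm)
          rw [h9]
          rfl
        rw [← he]
        exact hr
      · rcases Nat.lt_or_ge i q with h2 | h2
        · have : Hf i q = 1 := htop i q (by omega)
          omega
        · have hv : ((Hf i q, q) : ℕ × ℕ) ∈ (F.get ⟨i, h⟩).verts := by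
            rw [hmem i h]
            refine ⟨by omega, by simp; omega, ?_, ?_⟩
            · simp only [Nat.add_sub_cancel]; exact le_refl _
            · exact hmono i (by omega)
          exact ((F.get ⟨i, h⟩).range _ hv).2.1
    · have : Hf i q = 1 := by simp [hHfdef, h]
      omega
  set D : FlowData n S.card :=
    { H := Hf
      mono := fun i q => hmono i (by omega)
      one_le := hone
      le_n := hle_n
      top := htop
      disj := fun a b q hab hbN h1q hqa => hdisj a b hab (by omega) q h1q hqa } with hDdef
  have hDH : ∀ i q, D.H i q = Hf i q := fun _ _ => rfl
  refine ⟨D, ?_, ?_⟩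
  · apply flowWeight_eq w F hlen D
    intro i
    refine ⟨hd i i.2, hs i i.2, hok i i.2, hslen i i.2, ?_, ?_⟩
    · intro q
      exact (hHf i i.2 q).symm
    · have : F.get i = F.get ⟨(i : ℕ), i.2⟩ := by congr
      rw [this]
      exact hbuild i i.2
  · -- levM D 0 = S.val
    have hhead : ∀ (i : ℕ) (h : i < F.length),
        ((F.get ⟨i, h⟩).verts.head (F.get ⟨i, h⟩).nonempty).1 = Hf i 0 := by
      intro i h
      have h9 : (F.get ⟨i, h⟩).verts.head (F.get ⟨i, h⟩).nonempty = (hd i h, 1) := by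
        have hb := head?_build (q := 1) (hok i h)
        rw [← hbuild i h] at hb
        have h6 := List.head?_eq_head (F.get ⟨i, h⟩).nonempty
        rw [hb] at h6
        exact (Option.some_injective _ h6.symm)
      rw [h9, hHf i h]
      rfl
    have hinj : Set.InjOn (fun i => Hf i 0) (Finset.range S.card) := by
      have key : ∀ a b, a < b → b < S.card → Hf a 0 < Hf b 0 := by
        intro a b h hbN
        have h1 := hdisj a b h (by omega) 1 (le_refl _) (by omega)
        have h2 : Hf b 1 ≤ Hf b 0 := hmono b (by omega)
        simp only [Nat.sub_self] at h1
        omega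
      intro a ha b hb hab
      simp only [Finset.coe_sort_coe, Finset.mem_coe, Finset.mem_range] at ha hb
      simp only at hab
      by_contra hne
      rcases Nat.lt_or_ge a b with h | h
      · have := key a b h hb; omega
      · have hba : b < a := by omega
        have := key b a hba ha; omega
    have himg : S = Finset.image (fun i => Hf i 0) (Finset.range S.card) := by
      ext p
      rw [hsrc p, Finset.mem_image]
      constructor
      · rintro ⟨P, hPF, hPp⟩
        obtain ⟨i, hi⟩ := List.mem_iff_get.1 hPF
        refine ⟨(i : ℕ), Finset.mem_range.2 (by omega), ?_⟩
        have e : F.get i = F.get ⟨(i : ℕ), i.2⟩ := by congr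
        rw [e] at hi
        rw [← hhead (i : ℕ) i.2, hi]
        exact hPp
      · rintro ⟨i, hi, rfl⟩
        have hi' : i < F.length := by
          rw [hlen]; exact Finset.mem_range.1 hi
        exact ⟨F.get ⟨i, hi'⟩, List.get_mem F ⟨i, hi'⟩, hhead i hi'⟩
    rw [levM]
    have e0 : Finset.Ico 0 S.card = Finset.range S.card := by
      ext x; simp
    rw [e0]
    conv_rhs => rw [himg]
    rw [Finset.image_val_of_injOn hinj]

end SuperTP4


namespace SuperTP4

namespace FlowData

variable {n N : ℕ}

/-- Merged level multisets of two flows. -/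
def mlev (D D' : FlowData n N) (q : ℕ) : Multiset ℕ := D.levM q + D'.levM q

lemma card_mlev (D D' : FlowData n N) (q : ℕ) :
    Multiset.card (mlev D D' q) = 2 * (N - q) := by
  simp [mlev, card_levM]
  omega

lemma mem_mlev_imp (D D' : FlowData n N) {q v : ℕ} (h : v ∈ mlev D D' q) :
    1 ≤ v ∧ v ≤ n := by
  rw [mlev, Multiset.mem_add] at h
  rcases h with h | h
  · exact D.mem_levM_imp h
  · exact D'.mem_levM_imp h

/-- New heights obtained by merging two flows and taking alternate order
statistics (`off = 1`: odd ranks from the top; `off = 0`: even ranks). -/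
noncomputable def gsel (D D' : FlowData n N) (off i q : ℕ) : ℕ :=
  if q ≤ i ∧ i < N then sel (mlev D D' q) (2 * (N - 1 - i) + off) else 1

lemma gsel_pos_branch (D D' : FlowData n N) {off i q : ℕ} (h1 : q ≤ i) (h2 : i < N) :
    gsel D D' off i q = sel (mlev D D' q) (2 * (N - 1 - i) + off) := by
  simp [gsel, h1, h2]

lemma gsel_idx_lt (D D' : FlowData n N) {off i q : ℕ} (hoff : off ≤ 1) (h1 : q ≤ i) (h2 : i < N) :
    2 * (N - 1 - i) + off < Multiset.card (mlev D D' q) := by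
  rw [card_mlev]
  omega

lemma gsel_mem (D D' : FlowData n N) {off i q : ℕ} (hoff : off ≤ 1) (h1 : q ≤ i) (h2 : i < N) :
    gsel D D' off i q ∈ mlev D D' q := by
  rw [gsel_pos_branch D D' h1 h2]
  exact sel_mem (gsel_idx_lt D D' hoff h1 h2)

lemma gsel_one_le (D D' : FlowData n N) {off : ℕ} (hoff : off ≤ 1) (i q : ℕ) :
    1 ≤ gsel D D' off i q := by
  by_cases h : q ≤ i ∧ i < N
  · exact (mem_mlev_imp D D' (gsel_mem D D' hoff h.1 h.2)).1
  · simp [gsel, h]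

lemma gsel_le_n (D D' : FlowData n N) {off : ℕ} (hoff : off ≤ 1) (hn : 1 ≤ n) (i q : ℕ) :
    gsel D D' off i q ≤ n := by
  by_cases h : q ≤ i ∧ i < N
  · exact (mem_mlev_imp D D' (gsel_mem D D' hoff h.1 h.2)).2
  · simp [gsel, h]
    omega

lemma cntGe_mlev_succ_le (D D' : FlowData n N) (q u : ℕ) :
    cntGe (mlev D D' (q + 1)) u ≤ cntGe (mlev D D' q) u := by
  rw [mlev, mlev, cntGe_add, cntGe_add]
  have := D.cntGe_succ_le q u
  have := D'.cntGe_succ_le q u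
  omega

lemma cntGe_mlev_interlace (D D' : FlowData n N) {q : ℕ} (hq : 1 ≤ q) (u : ℕ) :
    cntGe (mlev D D' (q - 1)) u ≤ cntGt (mlev D D' q) u + 2 := by
  rw [mlev, mlev, cntGe_add, cntGt_add]
  have := D.cntGe_le_cntGt_succ hq u
  have := D'.cntGe_le_cntGt_succ hq u
  omega

lemma gsel_mono (D D' : FlowData n N) {off : ℕ} (hoff : off ≤ 1) (i q : ℕ) :
    gsel D D' off i (q + 1) ≤ gsel D D' off i q := by
  by_cases h : q + 1 ≤ i ∧ i < N
  · rw [gsel_pos_branch D D' h.1 h.2, gsel_pos_branch D D' (by omega) h.2]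
    set t := 2 * (N - 1 - i) + off with ht
    set v := sel (mlev D D' (q + 1)) t with hv
    have hvalid : t < Multiset.card (mlev D D' (q + 1)) := gsel_idx_lt D D' hoff h.1 h.2
    have h2 := sel_spec2 hvalid
    have h3 : t < cntGe (mlev D D' q) v :=
      lt_of_lt_of_le h2 (cntGe_mlev_succ_le D D' q v)
    exact le_sel_of_cntGe h3
  · have e : gsel D D' off i (q + 1) = 1 := by
      by_cases h2 : i < N
      · have : ¬ (q + 1 ≤ i) := by tauto
        simp [gsel, this]
      · simp [gsel, h2]
    rw [e]
    exact gsel_one_le D D' hoff i q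

lemma gsel_disj (D D' : FlowData n N) {off : ℕ} (hoff : off ≤ 1) :
    ∀ i j q, i < j → j < N → 1 ≤ q → q ≤ i + 1 →
      gsel D D' off i (q - 1) < gsel D D' off j q := by
  intro i j q hij hjN h1q hqi
  have hiN : i < N := by omega
  rw [gsel_pos_branch D D' (by omega) hiN, gsel_pos_branch D D' (by omega) hjN]
  set ti := 2 * (N - 1 - i) + off with hti
  set tj := 2 * (N - 1 - j) + off with htj
  have htij : tj + 2 ≤ ti := by omega
  set v := sel (mlev D D' (q - 1)) ti with hv
  have hvalid : ti < Multiset.card (mlev D D' (q - 1)) := by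
    rw [card_mlev]
    omega
  have h2 : ti < cntGe (mlev D D' (q - 1)) v := sel_spec2 hvalid
  have h3 := cntGe_mlev_interlace D D' h1q v
  have h4 : tj < cntGt (mlev D D' q) v := by omega
  exact lt_sel_of_cntGt h4

/-- The merged flow data. -/
noncomputable def merged (D D' : FlowData n N) (hn : 1 ≤ n) (off : ℕ) (hoff : off ≤ 1) :
    FlowData n N where
  H := gsel D D' off
  mono := fun i q => gsel_mono D D' hoff i q
  one_le := fun i q => gsel_one_le D D' hoff i q
  le_n := fun i q => gsel_le_n D D' hoff hn i q
  top := fun i q hiq => by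
    have : ¬ (q ≤ i ∧ i < N) := by omega
    simp [gsel, this]
  disj := fun i j q hij hjN h1q hqi => gsel_disj D D' hoff i j q hij hjN h1q hqi

/-- Merging preserves the level multisets. -/
lemma merged_levM (D D' : FlowData n N) (hn : 1 ≤ n) (q : ℕ) :
    (merged D D' hn 1 (by omega)).levM q + (merged D D' hn 0 (by omega)).levM q
      = mlev D D' q := by
  have hlev : ∀ off (hoff : off ≤ 1), (merged D D' hn off hoff).levM q
      = Multiset.map (sel (mlev D D' q))
          ((Finset.Ico q N).val.map (fun i => 2 * (N - 1 - i) + off)) := by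
    intro off hoff
    rw [levM, Multiset.map_map]
    apply Multiset.map_congr rfl
    intro i hi
    have hi' := Finset.mem_Ico.1 (Finset.mem_def.2 hi)
    simp only [Function.comp_apply]
    exact gsel_pos_branch D D' hi'.1 hi'.2
  rw [hlev 1 (by omega), hlev 0 (by omega), ← Multiset.map_add]
  have hidx : (Finset.Ico q N).val.map (fun i => 2 * (N - 1 - i) + 1)
      + (Finset.Ico q N).val.map (fun i => 2 * (N - 1 - i) + 0)
      = (Finset.range (2 * (N - q))).val := by
    have hinj1 : Set.InjOn (fun i => 2 * (N - 1 - i) + 1) (Finset.Ico q N) := by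
      intro a ha b hb hab
      simp only [Finset.coe_sort_coe, Finset.mem_coe, Finset.mem_Ico] at ha hb
      simp only at hab
      omega
    have hinj0 : Set.InjOn (fun i => 2 * (N - 1 - i) + 0) (Finset.Ico q N) := by
      intro a ha b hb hab
      simp only [Finset.coe_sort_coe, Finset.mem_coe, Finset.mem_Ico] at ha hb
      simp only at hab
      omega
    rw [← Finset.image_val_of_injOn hinj1, ← Finset.image_val_of_injOn hinj0]
    have hdisj : Disjoint ((Finset.Ico q N).image (fun i => 2 * (N - 1 - i) + 1))
        ((Finset.Ico q N).image (fun i => 2 * (N - 1 - i) + 0)) := by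
      rw [Finset.disjoint_left]
      intro t ht1 ht0
      obtain ⟨a, ha, hat⟩ := Finset.mem_image.1 ht1
      obtain ⟨b, hb, hbt⟩ := Finset.mem_image.1 ht0
      omega
    rw [show (Finset.image (fun i => 2 * (N - 1 - i) + 1) (Finset.Ico q N)).val
        + (Finset.image (fun i => 2 * (N - 1 - i) + 0) (Finset.Ico q N)).val
        = ((Finset.image (fun i => 2 * (N - 1 - i) + 1) (Finset.Ico q N)).disjUnion
            (Finset.image (fun i => 2 * (N - 1 - i) + 0) (Finset.Ico q N)) hdisj).val from rfl]
    congr 1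
    rw [Finset.disjUnion_eq_union]
    ext t
    simp only [Finset.mem_union, Finset.mem_image, Finset.mem_Ico, Finset.mem_range]
    constructor
    · rintro (⟨a, ha, rfl⟩ | ⟨a, ha, rfl⟩) <;> omega
    · intro ht
      rcases Nat.even_or_odd t with ⟨c, hc⟩ | ⟨c, hc⟩
      · right; exact ⟨N - 1 - c, by omega, by omega⟩
      · left; exact ⟨N - 1 - c, by omega, by omega⟩
  rw [hidx]
  have : (Finset.range (2 * (N - q))).val = Multiset.range (2 * (N - q)) := rfl
  rw [this, ← card_mlev D D' q]
  exact sel_complete _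

/-- Merging preserves total weight. -/
lemma merged_weight (D D' : FlowData n N) (hn : 1 ≤ n) (w : ℕ → ℕ → ℝ) :
    (merged D D' hn 1 (by omega)).Eterm w + (merged D D' hn 0 (by omega)).Eterm w
      = D.Eterm w + D'.Eterm w := by
  unfold Eterm
  rw [← Finset.sum_add_distrib, ← Finset.sum_add_distrib]
  apply Finset.sum_congr rfl
  intro q _
  rw [← Finset.sum_add_distrib, ← Finset.sum_add_distrib]
  apply Finset.sum_congr rfl
  intro p _
  rw [← add_mul, ← add_mul]
  congr 1
  have h1 : ∀ u r, cntGe ((merged D D' hn 1 (by omega)).levM r) u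
      + cntGe ((merged D D' hn 0 (by omega)).levM r) u
      = cntGe (D.levM r) u + cntGe (D'.levM r) u := by
    intro u r
    have := merged_levM D D' hn r
    have e1 : cntGe ((merged D D' hn 1 (by omega)).levM r) u
        + cntGe ((merged D D' hn 0 (by omega)).levM r) u
        = cntGe (mlev D D' r) u := by
      rw [← cntGe_add, this]
    rw [e1, mlev, cntGe_add]
  have e1 := h1 p (q - 1)
  have e2 := h1 (p + 1) q
  push_cast
  have c1 : ((cntGe ((merged D D' hn 1 (by omega)).levM (q-1)) p : ℝ))
      + (cntGe ((merged D D' hn 0 (by omega)).levM (q-1)) p : ℝ)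
      = (cntGe (D.levM (q-1)) p : ℝ) + (cntGe (D'.levM (q-1)) p : ℝ) := by
    exact_mod_cast congrArg (fun x : ℕ => (x : ℝ)) e1
  have c2 : ((cntGe ((merged D D' hn 1 (by omega)).levM q) (p+1) : ℝ))
      + (cntGe ((merged D D' hn 0 (by omega)).levM q) (p+1) : ℝ)
      = (cntGe (D.levM q) (p+1) : ℝ) + (cntGe (D'.levM q) (p+1) : ℝ) := by
    exact_mod_cast congrArg (fun x : ℕ => (x : ℝ)) e2
  linarith

end FlowData

end SuperTP4


namespace SuperTP4

open FlowData

variable {n N m' : ℕ}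

/-- The crossing-heights list for the `i`-th path of a flow data. -/
def hsOf (D : FlowData n N) (i : ℕ) : List ℕ := List.ofFn (fun t : Fin i => D.H i ((t : ℕ) + 1))

lemma heights_hsOf (D : FlowData n N) (i : ℕ) (q : ℕ) :
    heights (D.H i 0) (hsOf D i) q = D.H i q := by
  cases q with
  | zero => rfl
  | succ t =>
    rw [heights_succ, hsOf]
    rcases Nat.lt_or_ge t i with h | h
    · rw [List.getD_eq_getElem _ _ (by simpa using h)]
      simp
    · rw [List.getD_eq_default _ _ (by simpa using h)]
      exact (D.top i (t + 1) (by omega)).symm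

lemma hsOf_length (D : FlowData n N) (i : ℕ) : (hsOf D i).length = i := by
  simp [hsOf]

lemma okH_hsOf (D : FlowData n N) (i : ℕ) : okH (D.H i 0) (hsOf D i) := by
  constructor
  · intro t
    rw [heights_hsOf, heights_hsOf]
    exact D.mono i t
  · intro t
    rw [heights_hsOf]
    exact D.one_le i t

lemma mem_dataVerts (D : FlowData n N) (i : ℕ) {v : ℕ × ℕ} :
    v ∈ build 1 (D.H i 0) (hsOf D i) ↔
      1 ≤ v.2 ∧ v.2 ≤ 1 + i ∧ D.H i (v.2 + 1 - 1) ≤ v.1 ∧ v.1 ≤ D.H i (v.2 - 1) := by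
  rw [mem_build (okH_hsOf D i) 1, hsOf_length, heights_hsOf, heights_hsOf]

/-- The `i`-th grid path of a flow data. -/
noncomputable def dataPath (D : FlowData n N) (hm : N ≤ m') (i : ℕ) (hiN : i < N) :
    GridPath n m' where
  verts := build 1 (D.H i 0) (hsOf D i)
  nonempty := build_ne_nil
  range := by
    intro v hv
    rw [mem_dataVerts D i] at hv
    obtain ⟨h1, h2, h3, h4⟩ := hv
    have h5 := D.one_le i (v.2 + 1 - 1)
    have h6 := D.le_n i (v.2 - 1)
    exact ⟨by omega, by omega, by omega, by omega⟩
  chain := chain'_build (okH_hsOf D i) 1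
  src := by
    rw [head_build (okH_hsOf D i) build_ne_nil]
  snk := by
    rw [getLast_build build_ne_nil]

lemma dataPath_verts (D : FlowData n N) (hm : N ≤ m') (i : ℕ) (hiN : i < N) :
    (dataPath D hm i hiN).verts = build 1 (D.H i 0) (hsOf D i) := rfl

lemma dataPath_head (D : FlowData n N) (hm : N ≤ m') (i : ℕ) (hiN : i < N) :
    (dataPath D hm i hiN).verts.head (dataPath D hm i hiN).nonempty = (D.H i 0, 1) :=
  head_build (okH_hsOf D i) _

lemma dataPath_getLast (D : FlowData n N) (hm : N ≤ m') (i : ℕ) (hiN : i < N) :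
    (dataPath D hm i hiN).verts.getLast (dataPath D hm i hiN).nonempty = (1, 1 + i) := by
  have := getLast_build (q := 1) (hi := D.H i 0) (hs := hsOf D i) build_ne_nil
  rw [hsOf_length] at this
  exact this

/-- The flow of grid paths attached to a flow data. -/
noncomputable def dataFlow (D : FlowData n N) (hm : N ≤ m') : List (GridPath n m') :=
  List.ofFn (fun i : Fin N => dataPath D hm (i : ℕ) i.2)

lemma dataFlow_length (D : FlowData n N) (hm : N ≤ m') : (dataFlow D hm).length = N := by
  simp [dataFlow]

lemma dataFlow_get (D : FlowData n N) (hm : N ≤ m') (i : ℕ)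
    (h : i < (dataFlow D hm).length) (hiN : i < N) :
    (dataFlow D hm).get ⟨i, h⟩ = dataPath D hm i hiN :=
  List.get_ofFn _ ⟨i, h⟩

lemma path_congr {P Q : GridPath n m'} (h : P = Q) :
    P.verts.getLast P.nonempty = Q.verts.getLast Q.nonempty ∧
    P.verts.head P.nonempty = Q.verts.head Q.nonempty := by
  subst h; exact ⟨rfl, rfl⟩

/-- Sources of a flow data are strictly increasing along the paths. -/
lemma src_strictMono (D : FlowData n N) {a b : ℕ} (hab : a < b) (hbN : b < N) :
    D.H a 0 < D.H b 0 := by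
  have h1 := D.disj a b 1 hab hbN (le_refl _) (by omega)
  have h2 : D.H b 1 ≤ D.H b 0 := D.mono b 0
  simp only [Nat.sub_self] at h1
  omega

/-- Any two distinct paths of a flow data are vertex-disjoint. -/
lemma dataPath_disjoint (D : FlowData n N) {a b : ℕ} (hab : a < b) (hbN : b < N) (v : ℕ × ℕ)
    (hva : v ∈ build 1 (D.H a 0) (hsOf D a)) (hvb : v ∈ build 1 (D.H b 0) (hsOf D b)) :
    False := by
  rw [mem_dataVerts] at hva hvb
  obtain ⟨ha1, ha2, ha3, ha4⟩ := hva
  obtain ⟨hb1, hb2, hb3, hb4⟩ := hvb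
  have key : ∀ c, a < c → c ≤ b → D.H a (v.2 - 1) < D.H c v.2 := by
    intro c
    induction c with
    | zero => omega
    | succ c ih =>
      intro hc1 hc2
      rcases Nat.lt_or_ge a c with h | h
      · have hmid := ih h (by omega)
        calc D.H a (v.2 - 1) < D.H c v.2 := hmid
          _ ≤ D.H c (v.2 - 1) := D.mono' c (by omega)
          _ < D.H (c + 1) v.2 := D.disj c (c + 1) v.2 (by omega) (by omega) (by omega) (by omega)
      · have : a = c := by omega
        subst this
        exact D.disj a (a + 1) v.2 (by omega) (by omega) (by omega) (by omega)
  have h5 := key b (by omega) (le_refl b)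
  have h6 : v.2 + 1 - 1 = v.2 := by omega
  rw [h6] at hb3
  omega

/-- The flow attached to a flow data is admissible for its source set. -/
lemma dataFlow_admissible (D : FlowData n N) (hm : N ≤ m')
    (T : Finset ℕ) (hT : T = Finset.image (fun i => D.H i 0) (Finset.range N)) :
    AdmissibleFor n m' T (dataFlow D hm) := by
  have hL := dataFlow_length D hm
  have hinj : Set.InjOn (fun i => D.H i 0) (Finset.range N) := by
    intro a ha b hb hab
    simp only [Finset.coe_sort_coe, Finset.mem_coe, Finset.mem_range] at ha hb
    simp only at hab
    by_contra hne
    rcases Nat.lt_or_ge a b with h | h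
    · have := src_strictMono D h hb; omega
    · have := src_strictMono D (show b < a by omega) ha; omega
  have hcard : T.card = N := by
    rw [hT, Finset.card_image_of_injOn hinj, Finset.card_range]
  refine ⟨?_, ?_, ?_, ?_⟩
  · -- pairwise disjoint
    rw [List.pairwise_iff_get]
    intro a b hab v hva hvb
    have haN : (a : ℕ) < N := by have := a.2; omega
    have hbN : (b : ℕ) < N := by have := b.2; omega
    rw [show (dataFlow D hm).get a = (dataFlow D hm).get ⟨(a : ℕ), a.2⟩ from by congr,
      dataFlow_get D hm (a : ℕ) a.2 haN, dataPath_verts] at hva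
    rw [show (dataFlow D hm).get b = (dataFlow D hm).get ⟨(b : ℕ), b.2⟩ from by congr,
      dataFlow_get D hm (b : ℕ) b.2 hbN, dataPath_verts] at hvb
    exact dataPath_disjoint D (show (a : ℕ) < (b : ℕ) from hab) hbN v hva hvb
  · -- sinks
    intro i h
    have hiN : i < N := by omega
    have e := dataFlow_get D hm i h hiN
    rw [(path_congr e).1, dataPath_getLast]
    simp
    omega
  · rw [hL, hcard]
  · intro p
    rw [hT, Finset.mem_image]
    constructor
    · rintro ⟨i, hi, rfl⟩
      have hiN : i < N := Finset.mem_range.1 hi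
      refine ⟨dataPath D hm i hiN, ?_, ?_⟩
      · rw [dataFlow, List.mem_ofFn]
        exact ⟨⟨i, hiN⟩, rfl⟩
      · rw [dataPath_head]
    · rintro ⟨P, hPF, hPp⟩
      rw [dataFlow, List.mem_ofFn] at hPF
      obtain ⟨i, rfl⟩ := hPF
      refine ⟨(i : ℕ), Finset.mem_range.2 i.2, ?_⟩
      rw [dataPath_head] at hPp
      exact hPp

/-- The weight of the flow attached to a flow data. -/
lemma dataFlow_weight (D : FlowData n N) (hm : N ≤ m') (w : ℕ → ℕ → ℝ) :
    flowWeight w (dataFlow D hm) = ∑ i ∈ Finset.range N, D.pathW w i := by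
  apply flowWeight_eq w (dataFlow D hm) (dataFlow_length D hm) D
  intro i
  have hiN : (i : ℕ) < N := by
    have := i.2
    have hL := dataFlow_length D hm
    omega
  refine ⟨D.H (i : ℕ) 0, hsOf D (i : ℕ), okH_hsOf D (i : ℕ), hsOf_length D (i : ℕ),
    fun q => heights_hsOf D (i : ℕ) q, ?_⟩
  rw [show (dataFlow D hm).get i = (dataFlow D hm).get ⟨(i : ℕ), i.2⟩ from by congr,
    dataFlow_get D hm (i : ℕ) i.2 hiN, dataPath_verts]

end SuperTP4


namespace SuperTP4

lemma sel_antitone {M : Multiset ℕ} {t t' : ℕ} (h : t ≤ t') : sel M t' ≤ sel M t :=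
  sel_le_of_cntGt (le_trans sel_spec1 h)

lemma sel_strict {M : Multiset ℕ} {t : ℕ} (h2 : M.count (sel M (t + 2)) ≤ 2)
    (ht : t + 2 < Multiset.card M) : sel M (t + 2) < sel M t := by
  have ha := sel_spec2 (M := M) (t := t + 2) ht
  rw [cntGe_eq_add_count] at ha
  exact lt_sel_of_cntGt (by omega)

lemma cntGt_cons {a v : ℕ} {s : Multiset ℕ} :
    cntGt (a ::ₘ s) v = (if v < a then 1 else 0) + cntGt s v := by
  rw [cntGt, cntGt, Multiset.filter_cons, Multiset.card_add]
  split_ifs <;> simp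

lemma union_pair_val {X : Finset ℕ} {a b : ℕ} (ha : a ∉ X) (hb : b ∉ X) (hab : a ≠ b) :
    (X ∪ {a, b}).val = a ::ₘ b ::ₘ X.val := by
  have h1 : X ∪ {a, b} = insert a (insert b X) := by
    ext x; simp [Finset.mem_insert, Finset.mem_union]
  rw [h1, Finset.insert_val_of_notMem (by simp [ha, hab]),
    Finset.insert_val_of_notMem hb]

lemma image_sel_core {N off : ℕ} (M0 : Multiset ℕ) (hcard : Multiset.card M0 = 2 * N)
    (hcnt2 : ∀ v, M0.count v ≤ 2) (T : Finset ℕ) (hTcard : T.card = N)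
    (hsub : ∀ a, a < N → sel M0 (2 * (N - 1 - a) + off) ∈ T) (hoff : off ≤ 1) :
    Finset.image (fun a => sel M0 (2 * (N - 1 - a) + off)) (Finset.range N) = T := by
  have hstrict : ∀ a b, a < b → b < N →
      sel M0 (2 * (N - 1 - a) + off) < sel M0 (2 * (N - 1 - b) + off) := by
    intro a b hab hbN
    have hta : 2 * (N - 1 - b) + off + 2 ≤ 2 * (N - 1 - a) + off := by omega
    have h1 : sel M0 (2 * (N - 1 - a) + off) ≤ sel M0 (2 * (N - 1 - b) + off + 2) :=
      sel_antitone hta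
    have h2 : sel M0 (2 * (N - 1 - b) + off + 2) < sel M0 (2 * (N - 1 - b) + off) :=
      sel_strict (hcnt2 _) (by rw [hcard]; omega)
    omega
  have hinj : Set.InjOn (fun a => sel M0 (2 * (N - 1 - a) + off)) (Finset.range N) := by
    intro a ha b hb hab
    simp only [Finset.coe_sort_coe, Finset.mem_coe, Finset.mem_range] at ha hb
    simp only at hab
    by_contra hne
    rcases Nat.lt_or_ge a b with h | h
    · have := hstrict a b h hb; omega
    · have := hstrict b a (by omega) ha; omega
  apply Finset.eq_of_subset_of_card_le
  · intro v hv
    obtain ⟨a, ha, rfl⟩ := Finset.mem_image.1 hv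
    exact hsub a (Finset.mem_range.1 ha)
  · rw [hTcard, Finset.card_image_of_injOn hinj, Finset.card_range]

/-- The parity computation: the odd order statistics of the merged source
multiset form `X ∪ {i,k}`, and the even ones form `X ∪ {j,l}`. -/
lemma image_sel_spec (X : Finset ℕ) {i j k l : ℕ} (h1i : 1 ≤ i) (hij : i < j) (hjk : j < k)
    (hkl : k < l) (hi : i ∉ X) (hj : j ∉ X) (hk : k ∉ X) (hl : l ∉ X)
    (M0 : Multiset ℕ) (hM0 : M0 = i ::ₘ j ::ₘ X.val + (k ::ₘ l ::ₘ X.val)) :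
    Finset.image (fun a => sel M0 (2 * (X.card + 2 - 1 - a) + 1))
      (Finset.range (X.card + 2)) = X ∪ {i, k} ∧
    Finset.image (fun a => sel M0 (2 * (X.card + 2 - 1 - a) + 0))
      (Finset.range (X.card + 2)) = X ∪ {j, l} := by
  set N := X.card + 2 with hN
  have hXcount : ∀ v, X.val.count v ≤ 1 :=
    fun v => Multiset.nodup_iff_count_le_one.mp X.nodup v
  have hXcount0 : ∀ v, v ∉ X → X.val.count v = 0 := by
    intro v hv
    exact Multiset.count_eq_zero_of_notMem hv
  have hcard : Multiset.card M0 = 2 * N := by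
    rw [hM0]
    simp [hN]
    omega
  have hcnt2 : ∀ v, M0.count v ≤ 2 := by
    intro v
    rw [hM0]
    simp only [Multiset.count_add, Multiset.count_cons]
    have := hXcount v
    by_cases hvi : v = i
    · subst hvi; rw [hXcount0 _ hi]; split_ifs <;> omega
    · by_cases hvj : v = j
      · subst hvj; rw [hXcount0 _ hj]; split_ifs <;> omega
      · by_cases hvk : v = k
        · subst hvk; rw [hXcount0 _ hk]; split_ifs <;> omega
        · by_cases hvl : v = l
          · subst hvl; rw [hXcount0 _ hl]; split_ifs <;> omega
          · split_ifs <;> omega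
  have hmemM0 : ∀ v, v ∈ M0 → v = i ∨ v = j ∨ v = k ∨ v = l ∨ v ∈ X := by
    intro v hv
    rw [hM0, Multiset.mem_add, Multiset.mem_cons, Multiset.mem_cons,
      Multiset.mem_cons, Multiset.mem_cons] at hv
    rcases hv with (h | h | h) | (h | h | h)
    · exact Or.inl h
    · exact Or.inr (Or.inl h)
    · exact Or.inr (Or.inr (Or.inr (Or.inr h)))
    · exact Or.inr (Or.inr (Or.inl h))
    · exact Or.inr (Or.inr (Or.inr (Or.inl h)))
    · exact Or.inr (Or.inr (Or.inr (Or.inr h)))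
  have hGt : ∀ v, cntGt M0 v = (if v < i then 1 else 0) + (if v < j then 1 else 0)
      + (if v < k then 1 else 0) + (if v < l then 1 else 0) + 2 * cntGt X.val v := by
    intro v
    rw [hM0, cntGt_add, cntGt_cons, cntGt_cons, cntGt_cons, cntGt_cons]
    omega
  have hC : ∀ v, v ∈ ({i, j, k, l} : Finset ℕ) → M0.count v = 1 := by
    intro v hv
    simp only [Finset.mem_insert, Finset.mem_singleton] at hv
    rw [hM0]
    simp only [Multiset.count_add, Multiset.count_cons]
    rcases hv with rfl | rfl | rfl | rfl
    · rw [hXcount0 _ hi]; split_ifs <;> omega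
    · rw [hXcount0 _ hj]; split_ifs <;> omega
    · rw [hXcount0 _ hk]; split_ifs <;> omega
    · rw [hXcount0 _ hl]; split_ifs <;> omega
  have hcardik : (X ∪ {i, k}).card = N := by
    have h1 : X ∪ {i, k} = insert i (insert k X) := by
      ext x; simp [Finset.mem_insert, Finset.mem_union]
    rw [h1, Finset.card_insert_of_notMem (by simp [hi]; omega),
      Finset.card_insert_of_notMem hk]
  have hcardjl : (X ∪ {j, l}).card = N := by
    have h1 : X ∪ {j, l} = insert j (insert l X) := by
      ext x; simp [Finset.mem_insert, Finset.mem_union]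
    rw [h1, Finset.card_insert_of_notMem (by simp [hj]; omega),
      Finset.card_insert_of_notMem hl]
  constructor
  · apply image_sel_core M0 hcard hcnt2 _ hcardik _ (by omega)
    intro a haN
    set t := 2 * (N - 1 - a) + 1 with hts
    have htc : t < Multiset.card M0 := by rw [hcard]; omega
    have hvmem := sel_mem htc
    have h1 := sel_spec1 (M := M0) (t := t)
    have h2 := sel_spec2 htc
    rw [cntGe_eq_add_count] at h2
    rcases hmemM0 _ hvmem with hv | hv | hv | hv | hv
    · rw [Finset.mem_union]; right; simp [hv]
    · -- impossible: parity
      exfalso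
      have hgt := hGt (sel M0 t)
      have hcnt := hC (sel M0 t) (by simp [hv])
      rw [hv] at hgt hcnt
      rw [hv] at h1 h2
      have : cntGt M0 j = 2 * cntGt X.val j + 2 := by
        rw [hgt]; split_ifs <;> omega
      omega
    · rw [Finset.mem_union]; right; simp [hv]
    · exfalso
      have hgt := hGt (sel M0 t)
      have hcnt := hC (sel M0 t) (by simp [hv])
      rw [hv] at hgt hcnt
      rw [hv] at h1 h2
      have : cntGt M0 l = 2 * cntGt X.val l + 0 := by
        rw [hgt]; split_ifs <;> omega
      omega
    · rw [Finset.mem_union]; left; exact hv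
  · apply image_sel_core M0 hcard hcnt2 _ hcardjl _ (by omega)
    intro a haN
    set t := 2 * (N - 1 - a) + 0 with hts
    have htc : t < Multiset.card M0 := by rw [hcard]; omega
    have hvmem := sel_mem htc
    have h1 := sel_spec1 (M := M0) (t := t)
    have h2 := sel_spec2 htc
    rw [cntGe_eq_add_count] at h2
    rcases hmemM0 _ hvmem with hv | hv | hv | hv | hv
    · exfalso
      have hgt := hGt (sel M0 t)
      have hcnt := hC (sel M0 t) (by simp [hv])
      rw [hv] at hgt hcnt
      rw [hv] at h1 h2
      have : cntGt M0 i = 2 * cntGt X.val i + 3 := by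
        rw [hgt]; split_ifs <;> omega
      omega
    · rw [Finset.mem_union]; right; simp [hv]
    · exfalso
      have hgt := hGt (sel M0 t)
      have hcnt := hC (sel M0 t) (by simp [hv])
      rw [hv] at hgt hcnt
      rw [hv] at h1 h2
      have : cntGt M0 k = 2 * cntGt X.val k + 1 := by
        rw [hgt]; split_ifs <;> omega
      omega
    · rw [Finset.mem_union]; right; simp [hv]
    · rw [Finset.mem_union]; left; exact hv

lemma exists_flowData' {n m' : ℕ} (hn : 1 ≤ n) (w : ℕ → ℕ → ℝ) (S : Finset ℕ)
    (F : List (GridPath n m')) (hadm : AdmissibleFor n m' S F) (N : ℕ) (hS : S.card = N) :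
    ∃ D : FlowData n N, flowWeight w F = ∑ i ∈ Finset.range N, D.pathW w i ∧
      D.levM 0 = S.val := by
  subst hS
  exact exists_flowData hn w S F hadm

/-- The exchange argument: two admissible flows can be re-split along the merged
order statistics, preserving total weight. -/
lemma exchange {n m' : ℕ} (hn : 1 ≤ n) (w : ℕ → ℕ → ℝ) (f : Finset ℕ → ℝ)
    (hf : ∀ S : Finset ℕ, S ⊆ Finset.Icc 1 n → S.card ≤ m' →
      IsGreatest (flowValues n m' w S) (f S))
    (A B : Finset ℕ) (N : ℕ) (hNA : A.card = N) (hNB : B.card = N)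
    (hA : A ⊆ Finset.Icc 1 n) (hB : B ⊆ Finset.Icc 1 n) (hNm : N ≤ m') :
    f A + f B ≤
      f (Finset.image (fun a => sel (A.val + B.val) (2 * (N - 1 - a) + 1)) (Finset.range N)) +
      f (Finset.image (fun a => sel (A.val + B.val) (2 * (N - 1 - a) + 0)) (Finset.range N)) := by
  obtain ⟨FA, admA, hwA⟩ := (hf A hA (by omega)).1
  obtain ⟨FB, admB, hwB⟩ := (hf B hB (by omega)).1
  obtain ⟨DA, hWA, hlevA⟩ := exists_flowData' hn w A FA admA N hNA
  obtain ⟨DB, hWB, hlevB⟩ := exists_flowData' hn w B FB admB N hNB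
  have hM0 : FlowData.mlev DA DB 0 = A.val + B.val := by
    rw [FlowData.mlev, hlevA, hlevB]
  have key : ∀ (off : ℕ) (hoff : off ≤ 1),
      AdmissibleFor n m'
        (Finset.image (fun a => sel (A.val + B.val) (2 * (N - 1 - a) + off)) (Finset.range N))
        (dataFlow (FlowData.merged DA DB hn off hoff) hNm) ∧
      (Finset.image (fun a => sel (A.val + B.val) (2 * (N - 1 - a) + off)) (Finset.range N))
        ⊆ Finset.Icc 1 n ∧
      (Finset.image (fun a => sel (A.val + B.val) (2 * (N - 1 - a) + off))
        (Finset.range N)).card ≤ m' := by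
    intro off hoff
    set G := FlowData.merged DA DB hn off hoff with hG
    have hGH : ∀ a, a < N → G.H a 0 = sel (A.val + B.val) (2 * (N - 1 - a) + off) := by
      intro a haN
      show FlowData.gsel DA DB off a 0 = _
      rw [FlowData.gsel_pos_branch DA DB (Nat.zero_le a) haN, hM0]
    have hTim : Finset.image (fun a => sel (A.val + B.val) (2 * (N - 1 - a) + off))
        (Finset.range N) = Finset.image (fun a => G.H a 0) (Finset.range N) := by
      apply Finset.image_congr
      intro a ha
      simp only [Finset.mem_coe, Finset.mem_range] at ha
      exact (hGH a ha).symm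
    refine ⟨?_, ?_, ?_⟩
    · rw [hTim]
      exact dataFlow_admissible G hNm _ rfl
    · intro v hv
      obtain ⟨a, ha, rfl⟩ := Finset.mem_image.1 hv
      have haN := Finset.mem_range.1 ha
      rw [← hM0]
      have hmm : sel (FlowData.mlev DA DB 0) (2 * (N - 1 - a) + off) ∈ FlowData.mlev DA DB 0 :=
        sel_mem (by rw [FlowData.card_mlev]; omega)
      have := FlowData.mem_mlev_imp DA DB hmm
      simp only [Finset.mem_Icc]
      omega
    · exact le_trans (le_trans (Finset.card_image_le) (by rw [Finset.card_range])) hNm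
  obtain ⟨adm1, sub1, cm1⟩ := key 1 (by omega)
  obtain ⟨adm0, sub0, cm0⟩ := key 0 (by omega)
  have hub1 := (hf _ sub1 cm1).2 ⟨_, adm1, rfl⟩
  have hub0 := (hf _ sub0 cm0).2 ⟨_, adm0, rfl⟩
  have e1 : flowWeight w (dataFlow (FlowData.merged DA DB hn 1 (by omega)) hNm)
      = (FlowData.merged DA DB hn 1 (by omega)).Eterm w := by
    rw [dataFlow_weight, FlowData.sum_pathW _ hn w]
  have e0 : flowWeight w (dataFlow (FlowData.merged DA DB hn 0 (by omega)) hNm)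
      = (FlowData.merged DA DB hn 0 (by omega)).Eterm w := by
    rw [dataFlow_weight, FlowData.sum_pathW _ hn w]
  have eA : f A = DA.Eterm w := by
    rw [← hwA, hWA, FlowData.sum_pathW _ hn w]
  have eB : f B = DB.Eterm w := by
    rw [← hwB, hWB, FlowData.sum_pathW _ hn w]
  have hmw := FlowData.merged_weight DA DB hn w
  rw [e1] at hub1
  rw [e0] at hub0
  rw [eA, eB]
  linarith

end SuperTP4


/-- **Super-TP4 inequality for flow-generated functions** (Lemma 2): for any
real `n × m'` matrix `W` and the function `f = f_w` on `C_0^{m'}`,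
`f(Xik) + f(Xjl) ≥ max{f(Xij)+f(Xkl), f(Xil)+f(Xjk)}` holds for all
`i < j < k < l` and `X ⊆ [n] ∖ {i,j,k,l}` with `|X| ≤ m' − 2`. -/
theorem super_tp4 (n m' : ℕ) (hm' : m' ≤ n) (w : ℕ → ℕ → ℝ)
    (f : Finset ℕ → ℝ)
    (hf : ∀ S : Finset ℕ, S ⊆ Finset.Icc 1 n → S.card ≤ m' →
      IsGreatest (flowValues n m' w S) (f S)) :
    ∀ (X : Finset ℕ) (i j k l : ℕ), X ⊆ Finset.Icc 1 n →
      1 ≤ i → i < j → j < k → k < l → l ≤ n →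
      i ∉ X → j ∉ X → k ∉ X → l ∉ X → X.card + 2 ≤ m' →
      max (f (X ∪ {i, j}) + f (X ∪ {k, l})) (f (X ∪ {i, l}) + f (X ∪ {j, k})) ≤
        f (X ∪ {i, k}) + f (X ∪ {j, l}) := by
  intro X i j k l hX h1i hij hjk hkl hln hiX hjX hkX hlX hm2
  have hn1 : 1 ≤ n := by omega
  have hneik : i ≠ k := by omega
  have hboundIcc : ∀ a b : ℕ, 1 ≤ a → a ≤ n → 1 ≤ b → b ≤ n →
      X ∪ {a, b} ⊆ Finset.Icc 1 n := by
    intro a b h1 h2 h3 h4 x hx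
    rcases Finset.mem_union.1 hx with h | h
    · exact hX h
    · simp only [Finset.mem_insert, Finset.mem_singleton] at h
      rcases h with rfl | rfl <;> (simp only [Finset.mem_Icc]; omega)
  have hcardU : ∀ a b : ℕ, a ∉ X → b ∉ X → a ≠ b → (X ∪ {a, b}).card = X.card + 2 := by
    intro a b ha hb hab
    have h1 : X ∪ {a, b} = insert a (insert b X) := by
      ext x; simp [Finset.mem_insert, Finset.mem_union]
    rw [h1, Finset.card_insert_of_notMem (by simp [ha, hab]),
      Finset.card_insert_of_notMem hb]
  have hcanon : (X ∪ {i, j}).val + (X ∪ {k, l}).val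
      = i ::ₘ j ::ₘ X.val + (k ::ₘ l ::ₘ X.val) := by
    rw [SuperTP4.union_pair_val hiX hjX (by omega), SuperTP4.union_pair_val hkX hlX (by omega)]
  have hcanon2 : (X ∪ {i, l}).val + (X ∪ {j, k}).val
      = i ::ₘ j ::ₘ X.val + (k ::ₘ l ::ₘ X.val) := by
    rw [SuperTP4.union_pair_val hiX hlX (by omega), SuperTP4.union_pair_val hjX hkX (by omega)]
    apply Multiset.ext.2
    intro v
    simp only [Multiset.count_add, Multiset.count_cons]
    split_ifs <;> omega
  apply max_le
  · -- branch (i,j), (k,l)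
    have hE := SuperTP4.exchange hn1 w f hf (X ∪ {i, j}) (X ∪ {k, l}) (X.card + 2)
      (hcardU i j hiX hjX (by omega)) (hcardU k l hkX hlX (by omega))
      (hboundIcc i j h1i (by omega) (by omega) (by omega))
      (hboundIcc k l (by omega) (by omega) (by omega) hln) (by omega)
    obtain ⟨hodd, heven⟩ := SuperTP4.image_sel_spec X h1i hij hjk hkl hiX hjX hkX hlX
      ((X ∪ {i, j}).val + (X ∪ {k, l}).val) hcanon
    rw [hodd, heven] at hE
    exact hE
  · -- branch (i,l), (j,k)
    have hE := SuperTP4.exchange hn1 w f hf (X ∪ {i, l}) (X ∪ {j, k}) (X.card + 2)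
      (hcardU i l hiX hlX (by omega)) (hcardU j k hjX hkX (by omega))
      (hboundIcc i l h1i (by omega) (by omega) hln)
      (hboundIcc j k (by omega) (by omega) (by omega) (by omega)) (by omega)
    obtain ⟨hodd, heven⟩ := SuperTP4.image_sel_spec X h1i hij hjk hkl hiX hjX hkX hlX
      ((X ∪ {i, l}).val + (X ∪ {j, k}).val) hcanon2
    rw [hodd, heven] at hE
    exact hE
end

section
/- Induction step for surjectivity: Let 0 < m ≤ m' ≤ |a| and suppose the restriction map res' : 𝒯(B_{m−1}^{m'}(a)) → ℝ^{𝓑'} is surjective, where 𝓑' = Sint(a;m−1) ∪ Int(a;m−1) ∪ Int(a;m) ∪ … ∪ Int(a;m') (with the zero vector added when m−1 = 0). Then the restriction map res : 𝒯(B_m^{m'}(a)) → ℝ^{𝓑} is surjective as well, where 𝓑 = Sint(a;m) ∪ Int(a;m) ∪ … ∪ Int(a;m'). -/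
section Helpers
variable {n : ℕ}

lemma vsize_add_unitv (x : Fin n → ℕ) (q : Fin n) :
    vsize (x + unitv n q) = vsize x + 1 := by
  unfold vsize unitv
  rw [show (x + fun i => if i = q then 1 else 0) = fun i => x i + (if i = q then 1 else 0) from rfl]
  rw [Finset.sum_add_distrib]
  simp

/-- the "spine" of a shape -/
def spine (a : Fin n → ℕ) (i j e : Fin n) : Fin n → ℕ :=
  fun q => if q < i ∨ (j < q ∧ q < e) then a q else 0

/-- the canonical two-block shapes -/
def shape (a : Fin n → ℕ) (i j e : Fin n) (s t w : ℕ) : Fin n → ℕ :=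
  fun q => spine a i j e q +
    ((if q = i then s else 0) + (if q = j then t else 0) + (if q = e then w else 0))

lemma shape_add_unitv_i (a : Fin n → ℕ) (i j e : Fin n) (s t w : ℕ) :
    shape a i j e s t w + unitv n i = shape a i j e (s+1) t w := by
  funext q
  by_cases h : q = i <;> simp [shape, unitv, h] <;> ring

lemma shape_add_unitv_j (a : Fin n → ℕ) (i j e : Fin n) (hij : i < j) (s t w : ℕ) :
    shape a i j e s t w + unitv n j = shape a i j e s (t+1) w := by
  funext q
  by_cases h : q = j
  · subst h; simp [shape, unitv, (ne_of_gt hij : q ≠ i)]; ring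
  · simp [shape, unitv, h]

lemma shape_add_unitv_e (a : Fin n → ℕ) (i j e : Fin n) (hie : i < e) (hje : j < e)
    (s t w : ℕ) :
    shape a i j e s t w + unitv n e = shape a i j e s t (w+1) := by
  funext q
  by_cases h : q = e
  · subst h; simp [shape, unitv, (ne_of_gt hie : q ≠ i), (ne_of_gt hje : q ≠ j)]; ring
  · simp [shape, unitv, h]

end Helpers
section ShapeEval
variable {n : ℕ} (a : Fin n → ℕ) {i j e : Fin n} (s t w : ℕ)

lemma shape_lt_i (hij : i < j) (hje : j < e) {q : Fin n} (hq : q < i) : shape a i j e s t w q = a q := by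
  have h1 : q ≠ i := ne_of_lt hq
  have h2 : q ≠ j := ne_of_lt (hq.trans hij)
  have h3 : q ≠ e := ne_of_lt ((hq.trans hij).trans hje)
  simp [shape, spine, hq, h1, h2, h3]

lemma shape_at_i (hij : i < j) (hje : j < e) : shape a i j e s t w i = s := by
  have h2 : i ≠ j := ne_of_lt hij
  have h3 : i ≠ e := ne_of_lt (hij.trans hje)
  simp [shape, spine, h2, h3, lt_irrefl, not_lt_of_gt hij]

lemma shape_ioo_ij (hij : i < j) (hje : j < e) {q : Fin n} (h1 : i < q) (h2 : q < j) : shape a i j e s t w q = 0 := by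
  have g1 : q ≠ i := ne_of_gt h1
  have g2 : q ≠ j := ne_of_lt h2
  have g3 : q ≠ e := ne_of_lt (h2.trans hje)
  simp [shape, spine, g1, g2, g3, not_lt_of_gt h1, not_lt_of_gt h2]

lemma shape_at_j (hij : i < j) (hje : j < e) : shape a i j e s t w j = t := by
  have g1 : j ≠ i := ne_of_gt hij
  have g3 : j ≠ e := ne_of_lt hje
  simp [shape, spine, g1, g3, lt_irrefl, not_lt_of_gt hij]

lemma shape_ioo_je (hij : i < j) (hje : j < e) {q : Fin n} (h1 : j < q) (h2 : q < e) : shape a i j e s t w q = a q := by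
  have g1 : q ≠ i := ne_of_gt (hij.trans h1)
  have g2 : q ≠ j := ne_of_gt h1
  have g3 : q ≠ e := ne_of_lt h2
  simp [shape, spine, g1, g2, g3, not_lt_of_gt (hij.trans h1), h1, h2]

lemma shape_at_e (hij : i < j) (hje : j < e) : shape a i j e s t w e = w := by
  have g1 : e ≠ i := ne_of_gt (hij.trans hje)
  have g2 : e ≠ j := ne_of_gt hje
  simp [shape, spine, g1, g2, lt_irrefl, not_lt_of_gt (hij.trans hje)]

lemma shape_gt_e (hij : i < j) (hje : j < e) {q : Fin n} (hq : e < q) : shape a i j e s t w q = 0 := by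
  have g1 : q ≠ i := ne_of_gt (hij.trans (hje.trans hq))
  have g2 : q ≠ j := ne_of_gt (hje.trans hq)
  have g3 : q ≠ e := ne_of_gt hq
  simp [shape, spine, g1, g2, g3, not_lt_of_gt (hij.trans (hje.trans hq)), not_lt_of_gt hq,
    not_lt_of_gt (hje.trans hq)]

lemma shape_le (hij : i < j) (hje : j < e) (hs : s ≤ a i) (ht : t ≤ a j) (hw : w ≤ a e) :
    ∀ q, shape a i j e s t w q ≤ a q := by
  intro q
  rcases lt_trichotomy q i with h|h|h
  · rw [shape_lt_i a s t w hij hje h]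
  · subst h; rw [shape_at_i a s t w hij hje]; exact hs
  rcases lt_trichotomy q j with h2|h2|h2
  · rw [shape_ioo_ij a s t w hij hje h h2]; exact Nat.zero_le _
  · subst h2; rw [shape_at_j a s t w hij hje]; exact ht
  rcases lt_trichotomy q e with h3|h3|h3
  · rw [shape_ioo_je a s t w hij hje h2 h3]
  · subst h3; rw [shape_at_e a s t w hij hje]; exact hw
  · rw [shape_gt_e a s t w hij hje h3]; exact Nat.zero_le _

lemma vsize_spine_add (hij : i < j) (hje : j < e) (s t w : ℕ) :
    vsize (shape a i j e s t w) = vsize (spine a i j e) + (s + t + w) := by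
  have g1 : i ≠ j := ne_of_lt hij
  have g2 : i ≠ e := ne_of_lt (hij.trans hje)
  have g3 : j ≠ e := ne_of_lt hje
  unfold vsize shape
  rw [Finset.sum_add_distrib, Finset.sum_add_distrib, Finset.sum_add_distrib]
  simp [Finset.sum_ite_eq']

/-- vsize of shapes with the same spine differ only in the extra values -/
lemma vsize_shape_sub (hij : i < j) (hje : j < e) (s t w s' t' w' : ℕ)
    (h : vsize (shape a i j e s t w) = vsize (shape a i j e s' t' w')) :
    s + t + w = s' + t' + w' := by
  rw [vsize_spine_add a hij hje s t w, vsize_spine_add a hij hje s' t' w'] at h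
  omega

end ShapeEval
section GP
variable {n : ℕ}

lemma shape_fint_or_sint (a : Fin n → ℕ) (ha : ∀ q, 0 < a q) {i j e : Fin n}
    (hij : i < j) (hje : j < e) {s t w : ℕ}
    (hs : s ≤ a i) (ht : t ≤ a j) (hw : w ≤ a e)
    (hne : shape a i j e s t w ≠ 0) :
    IsFint a (shape a i j e s t w) ∨ IsSint a (shape a i j e s t w) := by
  set y := shape a i j e s t w with hy
  have hle : ∀ q, y q ≤ a q := shape_le a s t w hij hje hs ht hw
  by_cases hf : IsFint a y
  · exact Or.inl hf
  right
  refine ⟨hf, ?_⟩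
  set x1 : Fin n → ℕ := fun q => if q < i then a q else if q = i then s else 0 with hx1
  set x2 : Fin n → ℕ := fun q => if q ≤ i then 0 else y q with hx2
  have hsplit : y = x1 + x2 := by
    funext q
    rcases lt_trichotomy q i with h|h|h
    · have e1 : x1 q = a q := by simp [hx1, h]
      have e2 : x2 q = 0 := by simp [hx2, le_of_lt h]
      rw [Pi.add_apply, e1, e2, hy, shape_lt_i a s t w hij hje h]
      omega
    · subst h
      have e1 : x1 q = s := by simp [hx1]
      have e2 : x2 q = 0 := by simp [hx2]
      rw [Pi.add_apply, e1, e2, hy, shape_at_i a s t w hij hje]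
      omega
    · have e1 : x1 q = 0 := by simp [hx1, not_lt_of_gt h, (ne_of_gt h : q ≠ i)]
      have e2 : x2 q = y q := by simp [hx2, not_le_of_gt h]
      rw [Pi.add_apply, e1, e2]
      omega
  -- supports
  have hx1supp : ∀ q, x1 q ≠ 0 → q ≤ i := by
    intro q hq
    by_contra hcon
    push_neg at hcon
    simp [hx1, not_lt_of_gt hcon, (ne_of_gt hcon : q ≠ i)] at hq
  have hx2supp : ∀ q, x2 q ≠ 0 → i < q := by
    intro q hq
    by_contra hcon
    push_neg at hcon
    simp [hx2, hcon] at hq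
  have hx2supp2 : ∀ q, x2 q ≠ 0 → j ≤ q := by
    intro q hq
    have h1 := hx2supp q hq
    by_contra hcon
    push_neg at hcon
    rw [hx2] at hq
    simp [not_le_of_gt h1, hy, shape_ioo_ij a s t w hij hje h1 hcon] at hq
  have hx2supp3 : ∀ q, x2 q ≠ 0 → q ≤ e := by
    intro q hq
    have h1 := hx2supp q hq
    by_contra hcon
    push_neg at hcon
    rw [hx2] at hq
    simp [not_le_of_gt h1, hy, shape_gt_e a s t w hij hje hcon] at hq
  -- x2 values in the full zone
  have hx2full : ∀ q, j < q → q < e → x2 q = a q := by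
    intro q h1 h2
    rw [hx2]
    simp [not_le_of_gt (lt_trans hij h1), hy, shape_ioo_je a s t w hij hje h1 h2]
  -- case x1 = 0
  by_cases h10 : x1 = 0
  · exfalso
    apply hf
    refine ⟨hle, hne, ?_⟩
    intro q1 q2 q3 h12 h23 hq1 hq3
    have : x1 q1 = 0 := by rw [h10]; rfl
    have hq1' : x2 q1 ≠ 0 := by
      intro hc; apply hq1; rw [hsplit]; simp [this, hc]
    have hq3' : x2 q3 ≠ 0 := by
      intro hc
      apply hq3; rw [hsplit]
      have : x1 q3 = 0 := by rw [h10]; rfl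
      simp [this, hc]
    have h1 : j ≤ q1 := hx2supp2 q1 hq1'
    have h3 : q3 ≤ e := hx2supp3 q3 hq3'
    have : x2 q2 = a q2 := hx2full q2 (lt_of_le_of_lt h1 h12) (lt_of_lt_of_le h23 h3)
    have hx1q2 : x1 q2 = 0 := by rw [h10]; rfl
    rw [hsplit]; simp [hx1q2, this]
  by_cases h20 : x2 = 0
  · exfalso
    apply hf
    refine ⟨hle, hne, ?_⟩
    intro q1 q2 q3 h12 h23 hq1 hq3
    have hq3' : x1 q3 ≠ 0 := by
      intro hc
      apply hq3; rw [hsplit]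
      have : x2 q3 = 0 := by rw [h20]; rfl
      simp [this, hc]
    have h3 : q3 ≤ i := hx1supp q3 hq3'
    have h2 : q2 < i := lt_of_lt_of_le h23 h3
    rw [hsplit, hx1]
    have : x2 q2 = 0 := by rw [h20]; rfl
    simp [this, h2]
  -- main case : genuine sint decomposition
  refine ⟨x1, x2, ⟨?_, h10, ?_⟩, ⟨?_, h20, ?_⟩, hsplit, ?_, ?_⟩
  · -- x1 ≤ a
    intro q
    rcases lt_trichotomy q i with h|h|h
    · simp [hx1, h]
    · subst h; simp [hx1, hs]
    · simp [hx1, not_lt_of_gt h, (ne_of_gt h : q ≠ i)]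
  · -- x1 fint axiom
    intro q1 q2 q3 h12 h23 _ hq3
    have h3 : q3 ≤ i := hx1supp q3 hq3
    have h2 : q2 < i := lt_of_lt_of_le h23 h3
    simp [hx1, h2]
  · -- x2 ≤ a
    intro q
    by_cases h : q ≤ i
    · simp [hx2, h]
    · simp [hx2, h]; exact hle q
  · -- x2 fint axiom
    intro q1 q2 q3 h12 h23 hq1 hq3
    have h1 : j ≤ q1 := hx2supp2 q1 hq1
    have h3 : q3 ≤ e := hx2supp3 q3 hq3
    exact hx2full q2 (lt_of_le_of_lt h1 h12) (lt_of_lt_of_le h23 h3)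
  · -- ordering
    intro q1 q2 hq1 hq2
    exact lt_of_le_of_lt (hx1supp q1 hq1) (hx2supp q2 hq2)
  · -- prefix condition
    intro q ⟨q', hqq', hq'⟩
    have : q' ≤ i := hx1supp q' hq'
    have hqi : q < i := lt_of_lt_of_le hqq' this
    simp [hx1, hqi]
end GP
section Struct
variable {n : ℕ}

lemma sint_le (a : Fin n → ℕ) {x : Fin n → ℕ} (hx : IsSint a x) : ∀ q, x q ≤ a q := by
  obtain ⟨hnf, x1, x2, hf1, hf2, hxe, hord, hpre⟩ := hx
  intro q
  by_cases h1 : x1 q = 0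
  · rw [hxe]; simpa [Pi.add_apply, h1] using hf2.1 q
  by_cases h2 : x2 q = 0
  · rw [hxe]; simpa [Pi.add_apply, h2] using hf1.1 q
  · exact absurd (hord q q h1 h2) (lt_irrefl q)

lemma sint_ne_zero (a : Fin n → ℕ) {x : Fin n → ℕ} (hx : IsSint a x) : x ≠ 0 := by
  obtain ⟨hnf, x1, x2, hf1, hf2, hxe, hord, hpre⟩ := hx
  obtain ⟨q, hq⟩ := Function.ne_iff.1 hf1.2.1
  simp only [Pi.zero_apply] at hq
  rw [Function.ne_iff]
  exact ⟨q, by rw [hxe]; simp [Pi.add_apply]; omega⟩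

lemma sint_shape (a : Fin n → ℕ) (ha : ∀ q, 0 < a q) {x : Fin n → ℕ} (hx : IsSint a x) :
    ∃ (i j e : Fin n) (s t w : ℕ), i < j ∧ j < e ∧ s + 1 ≤ a i ∧ t < a j ∧ w + 1 ≤ a e ∧
      x = shape a i j e (s+1) t (w+1) := by
  have hxle := sint_le a hx
  have hxne := sint_ne_zero a hx
  obtain ⟨hnf, x1, x2, hf1, hf2, hxe, hord, hpre⟩ := hx
  -- e := max support
  have hSx : (Finset.univ.filter (fun q => x q ≠ 0)).Nonempty := by
    obtain ⟨q, hq⟩ := Function.ne_iff.1 hxne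
    exact ⟨q, by simpa using hq⟩
  set e := (Finset.univ.filter (fun q => x q ≠ 0)).max' hSx with hedef
  have he1 : x e ≠ 0 := by
    have := (Finset.univ.filter (fun q => x q ≠ 0)).max'_mem hSx
    simpa using this
  have he2 : ∀ q, e < q → x q = 0 := by
    intro q hq
    by_contra hc
    exact absurd (Finset.le_max' _ q (by simpa using hc)) (not_le_of_gt hq)
  -- not a fint: get a slack witness
  have hnf' := hnf
  unfold IsFint at hnf'
  push_neg at hnf'
  obtain ⟨i0, j0, k0, h01, h02, h03, h04, h05⟩ := hnf' hxle hxne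
  have hk0e : k0 ≤ e := by
    apply Finset.le_max'
    simpa using h04
  have hSj : (Finset.univ.filter (fun q => q < e ∧ x q < a q)).Nonempty :=
    ⟨j0, by simp [lt_of_lt_of_le h02 hk0e, lt_of_le_of_ne (hxle j0) h05]⟩
  set j := (Finset.univ.filter (fun q => q < e ∧ x q < a q)).max' hSj with hjdef
  have hj1 : j < e ∧ x j < a j := by
    have h := (Finset.univ.filter (fun q => q < e ∧ x q < a q)).max'_mem hSj
    rw [← hjdef, Finset.mem_filter] at h
    exact h.2
  have hj2 : ∀ q, j < q → q < e → x q = a q := by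
    intro q hq1 hq2
    by_contra hc
    have : x q < a q := lt_of_le_of_ne (hxle q) hc
    exact absurd (Finset.le_max' _ q (by simp [hq2, this])) (not_le_of_gt hq1)
  have hj0j : j0 ≤ j := Finset.le_max' _ j0
    (by simp [lt_of_lt_of_le h02 hk0e, lt_of_le_of_ne (hxle j0) h05])
  have hSi : (Finset.univ.filter (fun q => q < j ∧ x q ≠ 0)).Nonempty :=
    ⟨i0, by simp [lt_of_lt_of_le h01 hj0j, h03]⟩
  set i := (Finset.univ.filter (fun q => q < j ∧ x q ≠ 0)).max' hSi with hidef
  have hi1 : i < j ∧ x i ≠ 0 := by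
    have h := (Finset.univ.filter (fun q => q < j ∧ x q ≠ 0)).max'_mem hSi
    rw [← hidef, Finset.mem_filter] at h
    exact h.2
  have hi2 : ∀ q, i < q → q < j → x q = 0 := by
    intro q hq1 hq2
    by_contra hc
    exact absurd (Finset.le_max' _ q (by simp [hq2, hc])) (not_le_of_gt hq1)
  -- full below i
  have hfull : ∀ q, q < i → x q = a q := by
    intro q hq
    by_cases hA : ∃ q2, q < q2 ∧ x1 q2 ≠ 0
    · have h1 := hpre q hA
      have h2 : x2 q = 0 := by
        by_contra h2
        obtain ⟨q2, hq2, hq2'⟩ := hA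
        exact absurd (hord q2 q hq2' h2) (not_lt_of_gt hq2)
      rw [hxe]; simp [Pi.add_apply, h1, h2]
    · push_neg at hA
      exfalso
      have hx1i : x1 i = 0 := hA i hq
      have hx2i : x2 i ≠ 0 := by
        intro hc; apply hi1.2; rw [hxe]; simp [Pi.add_apply, hx1i, hc]
      have hx1e : x1 e = 0 := hA e (hq.trans (hi1.1.trans hj1.1))
      have hx2e : x2 e ≠ 0 := by
        intro hc; apply he1; rw [hxe]; simp [Pi.add_apply, hx1e, hc]
      have hx2j : x2 j = a j := hf2.2.2 i j e hi1.1 hj1.1 hx2i hx2e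
      have : a j ≤ x j := by
        rw [hxe]; simp only [Pi.add_apply]; omega
      omega
  -- assemble the shape equality
  have hshape : x = shape a i j e (x i) (x j) (x e) := by
    funext q
    rcases lt_trichotomy q i with h|h|h
    · rw [shape_lt_i a _ _ _ hi1.1 hj1.1 h]; exact hfull q h
    · subst h; rw [shape_at_i a _ _ _ hi1.1 hj1.1]
    rcases lt_trichotomy q j with h2|h2|h2
    · rw [shape_ioo_ij a _ _ _ hi1.1 hj1.1 h h2]; exact hi2 q h h2
    · subst h2; rw [shape_at_j a _ _ _ hi1.1 hj1.1]
    rcases lt_trichotomy q e with h3|h3|h3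
    · rw [shape_ioo_je a _ _ _ hi1.1 hj1.1 h2 h3]; exact hj2 q h2 h3
    · subst h3; rw [shape_at_e a _ _ _ hi1.1 hj1.1]
    · rw [shape_gt_e a _ _ _ hi1.1 hj1.1 h3]; exact he2 q h3
  have hine : x i ≠ 0 := hi1.2
  obtain ⟨s, hs⟩ : ∃ s, x i = s + 1 := ⟨x i - 1, by omega⟩
  obtain ⟨w, hw⟩ : ∃ w, x e = w + 1 := ⟨x e - 1, by omega⟩
  refine ⟨i, j, e, s, x j, w, hi1.1, hj1.1, ?_, hj1.2, ?_, ?_⟩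
  · have := hxle i; omega
  · have := hxle e; omega
  · rw [hs, hw] at hshape; exact hshape
end Struct
section K1
variable {n : ℕ}

lemma W_inj_j (a : Fin n → ℕ) {i j e i' j' e' : Fin n} {s t w s' t' w' : ℕ}
    (hij : i < j) (hje : j < e) (hij' : i' < j') (hje' : j' < e')
    (hsa : s < a i)
    (heq : shape a i j e s (t+1) w = shape a i' j' e' s' (t'+1) w')
    (hjj : j < j') : False := by
  have hji' : j ≤ i' := by
    by_contra hc
    push_neg at hc
    have hL : shape a i j e s (t+1) w j = t + 1 := shape_at_j a s (t+1) w hij hje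
    have hR : shape a i' j' e' s' (t'+1) w' j = 0 :=
      shape_ioo_ij a s' (t'+1) w' hij' hje' hc hjj
    rw [heq, hR] at hL
    omega
  have hii' : i < i' := lt_of_lt_of_le hij hji'
  have hL : shape a i j e s (t+1) w i = s := shape_at_i a s (t+1) w hij hje
  have hR : shape a i' j' e' s' (t'+1) w' i = a i :=
    shape_lt_i a s' (t'+1) w' hij' hje' hii'
  rw [heq, hR] at hL
  omega

lemma W_inj (a : Fin n → ℕ) {i j e i' j' e' : Fin n} {s t w s' t' w' : ℕ}
    (hij : i < j) (hje : j < e) (hij' : i' < j') (hje' : j' < e')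
    (hsa : s < a i) (hwa : w < a e) (hsa' : s' < a i') (hwa' : w' < a e')
    (heq : shape a i j e s (t+1) w = shape a i' j' e' s' (t'+1) w') :
    i = i' ∧ j = j' ∧ e = e' ∧ s = s' ∧ t = t' ∧ w = w' := by
  have hj : j = j' := by
    rcases lt_trichotomy j j' with h|h|h
    · exact absurd (W_inj_j a hij hje hij' hje' hsa heq h) (fun f => f)
    · exact h
    · exact absurd (W_inj_j a hij' hje' hij hje hsa' heq.symm h) (fun f => f)
  subst hj
  have he : e = e' := by
    rcases lt_trichotomy e e' with h|h|h
    · exfalso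
      have hL : shape a i j e s (t+1) w e = w := shape_at_e a s (t+1) w hij hje
      have hR : shape a i' j e' s' (t'+1) w' e = a e :=
        shape_ioo_je a s' (t'+1) w' hij' hje' hje h
      rw [heq, hR] at hL
      omega
    · exact h
    · exfalso
      have hL : shape a i' j e' s' (t'+1) w' e' = w' := shape_at_e a s' (t'+1) w' hij' hje'
      have hR : shape a i j e s (t+1) w e' = a e' :=
        shape_ioo_je a s (t+1) w hij hje hje' h
      rw [← heq, hR] at hL
      omega
  subst he
  have hi : i = i' := by
    rcases lt_trichotomy i i' with h|h|h
    · exfalso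
      have hL : shape a i j e s (t+1) w i = s := shape_at_i a s (t+1) w hij hje
      have hR : shape a i' j e s' (t'+1) w' i = a i :=
        shape_lt_i a s' (t'+1) w' hij' hje' h
      rw [heq, hR] at hL
      omega
    · exact h
    · exfalso
      have hL : shape a i' j e s' (t'+1) w' i' = s' := shape_at_i a s' (t'+1) w' hij' hje'
      have hR : shape a i j e s (t+1) w i' = a i' :=
        shape_lt_i a s (t+1) w hij hje h
      rw [← heq, hR] at hL
      omega
  subst hi
  have h1 : s = s' := by
    have hL : shape a i j e s (t+1) w i = s := shape_at_i a s (t+1) w hij hje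
    have hR : shape a i j e s' (t'+1) w' i = s' := shape_at_i a s' (t'+1) w' hij' hje'
    rw [heq, hR] at hL
    omega
  have h2 : t = t' := by
    have hL : shape a i j e s (t+1) w j = t+1 := shape_at_j a s (t+1) w hij hje
    have hR : shape a i j e s' (t'+1) w' j = t'+1 := shape_at_j a s' (t'+1) w' hij' hje'
    rw [heq, hR] at hL
    omega
  have h3 : w = w' := by
    have hL : shape a i j e s (t+1) w e = w := shape_at_e a s (t+1) w hij hje
    have hR : shape a i j e s' (t'+1) w' e = w' := shape_at_e a s' (t'+1) w' hij' hje'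
    rw [heq, hR] at hL
    omega
  exact ⟨rfl, rfl, rfl, h1, h2, h3⟩
end K1
section Measures
variable {n : ℕ}

/-- weighted sum `σ` -/
def wsum (y : Fin n → ℕ) : ℕ := ∑ q, q.val * y q

/-- mass above the first slack position -/
def Pmass (a y : Fin n → ℕ) : ℕ :=
  ∑ q ∈ Finset.univ.filter (fun q => ∃ q', q' < q ∧ y q' < a q'), y q

/-- deficiency below the top of the support -/
def Gdef (a y : Fin n → ℕ) : ℕ :=
  ∑ q ∈ Finset.univ.filter (fun q => ∃ q', q < q' ∧ y q' ≠ 0), (a q - y q)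

/-- mass up to the first slack position -/
def Qmass (a y : Fin n → ℕ) : ℕ :=
  ∑ q ∈ Finset.univ.filter (fun q => ∀ q', q' < q → a q' ≤ y q'), y q

lemma wsum_add_unitv (y : Fin n → ℕ) (q0 : Fin n) :
    wsum (y + unitv n q0) = wsum y + q0.val := by
  unfold wsum unitv
  rw [show (y + fun i => if i = q0 then 1 else 0) = fun i => y i + (if i = q0 then 1 else 0)
    from rfl]
  have : ∀ q : Fin n, q.val * (y q + (if q = q0 then 1 else 0)) =
      q.val * y q + (if q = q0 then q0.val else 0) := by
    intro q
    by_cases h : q = q0 <;> simp [h, Nat.mul_add]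
  rw [Finset.sum_congr rfl (fun q _ => this q), Finset.sum_add_distrib]
  simp

lemma wsum_le (y : Fin n → ℕ) : wsum y ≤ n * vsize y := by
  unfold wsum vsize
  rw [Finset.mul_sum]
  apply Finset.sum_le_sum
  intro q _
  exact Nat.mul_le_mul_right _ (le_of_lt q.isLt)

lemma Qmass_le (a y : Fin n → ℕ) : Qmass a y ≤ vsize y := by
  unfold Qmass vsize
  exact Finset.sum_le_sum_of_subset (Finset.filter_subset _ _)

/-- sum of a function over a filter set containing/missing a point, after adding a unit -/
lemma sum_filter_add_unitv_mem (y : Fin n → ℕ) (p : Fin n → Prop) [DecidablePred p]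
    (q0 : Fin n) (hq0 : p q0) :
    ∑ q ∈ Finset.univ.filter p, (y + unitv n q0) q
      = (∑ q ∈ Finset.univ.filter p, y q) + 1 := by
  have : ∀ q, (y + unitv n q0) q = y q + (if q = q0 then 1 else 0) := fun q => rfl
  rw [Finset.sum_congr rfl (fun q _ => this q), Finset.sum_add_distrib,
    Finset.sum_ite_eq' (Finset.univ.filter p) q0 (fun _ => 1)]
  rw [if_pos (Finset.mem_filter.2 ⟨Finset.mem_univ _, hq0⟩)]

lemma sum_filter_add_unitv_not_mem (y : Fin n → ℕ) (p : Fin n → Prop) [DecidablePred p]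
    (q0 : Fin n) (hq0 : ¬ p q0) :
    ∑ q ∈ Finset.univ.filter p, (y + unitv n q0) q
      = ∑ q ∈ Finset.univ.filter p, y q := by
  have : ∀ q, (y + unitv n q0) q = y q + (if q = q0 then 1 else 0) := fun q => rfl
  rw [Finset.sum_congr rfl (fun q _ => this q), Finset.sum_add_distrib,
    Finset.sum_ite_eq' (Finset.univ.filter p) q0 (fun _ => 1)]
  rw [if_neg (fun hc => hq0 (Finset.mem_filter.1 hc).2), Nat.add_zero]

/-- first-slack set for a function that is full below `i` and slack at `i` -/
lemma Pmass_eq (a y : Fin n → ℕ) (i : Fin n) (hfull : ∀ q, q < i → y q = a q)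
    (hslack : y i < a i) :
    Pmass a y = ∑ q ∈ Finset.univ.filter (fun q => i < q), y q := by
  unfold Pmass
  congr 1
  apply Finset.filter_congr
  intro q _
  constructor
  · rintro ⟨q', h1, h2⟩
    rcases lt_or_ge q' i with h|h
    · rw [hfull q' h] at h2; omega
    · exact lt_of_le_of_lt h h1
  · intro h
    exact ⟨i, h, hslack⟩

lemma Pmass_le (a y : Fin n → ℕ) (i : Fin n) (hfull : ∀ q, q < i → y q = a q) :
    Pmass a y ≤ ∑ q ∈ Finset.univ.filter (fun q => i < q), y q := by
  unfold Pmass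
  apply Finset.sum_le_sum_of_subset
  intro q hq
  simp only [Finset.mem_filter, Finset.mem_univ, true_and] at hq ⊢
  obtain ⟨q', h1, h2⟩ := hq
  rcases lt_or_ge q' i with h|h
  · rw [hfull q' h] at h2; omega
  · exact lt_of_le_of_lt h h1

/-- support-top set for a function with mass at `e` and nothing above -/
lemma Gdef_eq (a y : Fin n → ℕ) (e : Fin n) (htop : y e ≠ 0) (habove : ∀ q, e < q → y q = 0) :
    Gdef a y = ∑ q ∈ Finset.univ.filter (fun q => q < e), (a q - y q) := by
  unfold Gdef
  congr 1
  apply Finset.filter_congr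
  intro q _
  constructor
  · rintro ⟨q', h1, h2⟩
    rcases lt_or_ge e q' with h|h
    · rw [habove q' h] at h2; omega
    · exact lt_of_lt_of_le h1 h
  · intro h
    exact ⟨e, h, htop⟩

lemma Gdef_le (a y : Fin n → ℕ) (e : Fin n) (habove : ∀ q, e < q → y q = 0) :
    Gdef a y ≤ ∑ q ∈ Finset.univ.filter (fun q => q < e), (a q - y q) := by
  unfold Gdef
  apply Finset.sum_le_sum_of_subset
  intro q hq
  simp only [Finset.mem_filter, Finset.mem_univ, true_and] at hq ⊢
  obtain ⟨q', h1, h2⟩ := hq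
  rcases lt_or_ge e q' with h|h
  · rw [habove q' h] at h2; omega
  · exact lt_of_lt_of_le h1 h

end Measures
section MeasIneq
variable {n : ℕ}

def nuM (a : Fin n → ℕ) (m : ℕ) (y : Fin n → ℕ) : ℕ :=
  (n*m+2) * Pmass a y + (n*m+1 - wsum y)

def lamM (a : Fin n → ℕ) (m : ℕ) (y : Fin n → ℕ) : ℕ :=
  (m+1) * Gdef a y + Qmass a y

variable (a : Fin n → ℕ) {i j e : Fin n} {s t w m : ℕ}

lemma shape_full_below (hij : i < j) (hje : j < e) (s' t' w' : ℕ) :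
    ∀ q, q < i → shape a i j e s' t' w' q = a q := fun _ h => shape_lt_i a s' t' w' hij hje h

lemma shape_zero_above (hij : i < j) (hje : j < e) (s' t' w' : ℕ) :
    ∀ q, e < q → shape a i j e s' t' w' q = 0 := fun _ h => shape_gt_e a s' t' w' hij hje h

lemma nu_c1_lt (hij : i < j) (hje : j < e) (hs : s + 1 ≤ a i) :
    nuM a m (shape a i j e (s+1) t w) < nuM a m (shape a i j e s (t+1) w) := by
  have hWfull := shape_full_below a hij hje s (t+1) w
  have hWslack : shape a i j e s (t+1) w i < a i := by
    rw [shape_at_i a s (t+1) w hij hje]; omega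
  have hW : Pmass a (shape a i j e s (t+1) w)
      = (∑ q ∈ Finset.univ.filter (fun q => i < q), shape a i j e s t w q) + 1 := by
    rw [Pmass_eq a _ i hWfull hWslack, ← shape_add_unitv_j a i j e hij s t w,
      sum_filter_add_unitv_mem _ _ j hij]
  have hc1 : Pmass a (shape a i j e (s+1) t w)
      ≤ ∑ q ∈ Finset.univ.filter (fun q => i < q), shape a i j e s t w q := by
    have h1 := Pmass_le a (shape a i j e (s+1) t w) i (shape_full_below a hij hje (s+1) t w)
    have hsum : (∑ q ∈ Finset.univ.filter (fun q => i < q), shape a i j e (s+1) t w q)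
        = ∑ q ∈ Finset.univ.filter (fun q => i < q), shape a i j e s t w q := by
      rw [← shape_add_unitv_i a i j e s t w]
      exact sum_filter_add_unitv_not_mem _ _ i (lt_irrefl i)
    exact hsum ▸ h1
  unfold nuM
  set S := ∑ q ∈ Finset.univ.filter (fun q => i < q), shape a i j e s t w q
  calc (n*m+2) * Pmass a (shape a i j e (s+1) t w) + (n*m+1 - wsum (shape a i j e (s+1) t w))
      ≤ (n*m+2) * S + (n*m+1) := by
        refine Nat.add_le_add (Nat.mul_le_mul_left _ hc1) (Nat.sub_le _ _)
    _ < (n*m+2) * S + (n*m+2) := by exact Nat.add_lt_add_left (Nat.lt_succ_self _) _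
    _ = (n*m+2) * (S+1) := by ring
    _ = (n*m+2) * Pmass a (shape a i j e s (t+1) w) := by rw [hW]
    _ ≤ _ := Nat.le_add_right _ _

lemma nu_c2_lt (hij : i < j) (hje : j < e) (hs : s + 1 ≤ a i)
    (hm : vsize (shape a i j e (s+1) t (w+1)) = m) :
    nuM a m (shape a i j e s t (w+1)) < nuM a m (shape a i j e s (t+1) w) := by
  have hie : i < e := hij.trans hje
  have hWfull := shape_full_below a hij hje s (t+1) w
  have hWslack : shape a i j e s (t+1) w i < a i := by
    rw [shape_at_i a s (t+1) w hij hje]; omega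
  have hc2full := shape_full_below a hij hje s t (w+1)
  have hc2slack : shape a i j e s t (w+1) i < a i := by
    rw [shape_at_i a s t (w+1) hij hje]; omega
  have hP : Pmass a (shape a i j e s t (w+1)) = Pmass a (shape a i j e s (t+1) w) := by
    rw [Pmass_eq a _ i hWfull hWslack, Pmass_eq a _ i hc2full hc2slack,
      ← shape_add_unitv_j a i j e hij s t w, ← shape_add_unitv_e a i j e hie hje s t w,
      sum_filter_add_unitv_mem _ _ j hij, sum_filter_add_unitv_mem _ _ e hie]
  have hσ : wsum (shape a i j e s (t+1) w) < wsum (shape a i j e s t (w+1)) := by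
    rw [← shape_add_unitv_j a i j e hij s t w, ← shape_add_unitv_e a i j e hie hje s t w,
      wsum_add_unitv, wsum_add_unitv]
    exact Nat.add_lt_add_left hje _
  have hbound : wsum (shape a i j e s t (w+1)) ≤ n*m := by
    have h1 := wsum_le (shape a i j e s t (w+1))
    have h2 := vsize_spine_add a hij hje s t (w+1)
    have h3 := vsize_spine_add a hij hje (s+1) t (w+1)
    rw [hm] at h3
    have : vsize (shape a i j e s t (w+1)) ≤ m := by omega
    calc wsum (shape a i j e s t (w+1)) ≤ n * vsize (shape a i j e s t (w+1)) := h1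
      _ ≤ n * m := Nat.mul_le_mul_left _ this
  unfold nuM
  rw [hP]
  apply Nat.add_lt_add_left
  omega

lemma lam_P1_lt (hij : i < j) (hje : j < e) (ht : t < a j)
    (hm : vsize (shape a i j e (s+1) t (w+1)) = m) :
    lamM a m (shape a i j e (s+1) (t+1) w) < lamM a m (shape a i j e (s+1) t (w+1)) := by
  have hxtop : shape a i j e (s+1) t (w+1) e ≠ 0 := by
    rw [shape_at_e a (s+1) t (w+1) hij hje]; omega
  have hGx : Gdef a (shape a i j e (s+1) t (w+1))
      = ∑ q ∈ Finset.univ.filter (fun q => q < e), (a q - shape a i j e (s+1) t (w+1) q) :=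
    Gdef_eq a _ e hxtop (shape_zero_above a hij hje (s+1) t (w+1))
  have hGP1 : Gdef a (shape a i j e (s+1) (t+1) w) + 1
      ≤ Gdef a (shape a i j e (s+1) t (w+1)) := by
    have h1 := Gdef_le a (shape a i j e (s+1) (t+1) w) e
      (shape_zero_above a hij hje (s+1) (t+1) w)
    have key : (∑ q ∈ Finset.univ.filter (fun q => q < e),
        (a q - shape a i j e (s+1) (t+1) w q)) + 1
        = ∑ q ∈ Finset.univ.filter (fun q => q < e), (a q - shape a i j e (s+1) t (w+1) q) := by
      have hpt : ∀ q ∈ Finset.univ.filter (fun q => q < e),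
          (a q - shape a i j e (s+1) (t+1) w q) + (if q = j then 1 else 0)
          = (a q - shape a i j e (s+1) t (w+1) q) := by
        intro q hq
        simp only [Finset.mem_filter, Finset.mem_univ, true_and] at hq
        by_cases hqj : q = j
        · subst hqj
          rw [shape_at_j a (s+1) (t+1) w hij hje, shape_at_j a (s+1) t (w+1) hij hje,
            if_pos rfl]
          omega
        · rw [if_neg hqj, Nat.add_zero]
          congr 1
          rcases lt_trichotomy q i with h|h|h
          · rw [shape_lt_i a (s+1) (t+1) w hij hje h, shape_lt_i a (s+1) t (w+1) hij hje h]
          · subst h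
            rw [shape_at_i a (s+1) (t+1) w hij hje, shape_at_i a (s+1) t (w+1) hij hje]
          rcases lt_trichotomy q j with h2|h2|h2
          · rw [shape_ioo_ij a (s+1) (t+1) w hij hje h h2,
              shape_ioo_ij a (s+1) t (w+1) hij hje h h2]
          · exact absurd h2 hqj
          · rw [shape_ioo_je a (s+1) (t+1) w hij hje h2 hq,
              shape_ioo_je a (s+1) t (w+1) hij hje h2 hq]
      have hjmem : j ∈ Finset.univ.filter (fun q : Fin n => q < e) :=
        Finset.mem_filter.2 ⟨Finset.mem_univ _, hje⟩
      rw [← Finset.sum_congr rfl hpt, Finset.sum_add_distrib,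
        Finset.sum_ite_eq' (Finset.univ.filter (fun q => q < e)) j (fun _ => 1),
        if_pos hjmem]
    rw [hGx]
    omega
  have hQ : Qmass a (shape a i j e (s+1) (t+1) w) ≤ m := by
    have h1 := Qmass_le a (shape a i j e (s+1) (t+1) w)
    have h2 := vsize_spine_add a hij hje (s+1) (t+1) w
    have h3 := vsize_spine_add a hij hje (s+1) t (w+1)
    rw [hm] at h3
    omega
  unfold lamM
  calc (m+1) * Gdef a (shape a i j e (s+1) (t+1) w) + Qmass a (shape a i j e (s+1) (t+1) w)
      ≤ (m+1) * Gdef a (shape a i j e (s+1) (t+1) w) + m := Nat.add_le_add_left hQ _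
    _ < (m+1) * Gdef a (shape a i j e (s+1) (t+1) w) + (m+1) :=
        Nat.add_lt_add_left (Nat.lt_succ_self _) _
    _ = (m+1) * (Gdef a (shape a i j e (s+1) (t+1) w) + 1) := by ring
    _ ≤ (m+1) * Gdef a (shape a i j e (s+1) t (w+1)) := Nat.mul_le_mul_left _ hGP1
    _ ≤ _ := Nat.le_add_right _ _
end MeasIneq
section MeasIneq2
variable {n : ℕ}

lemma Qmass_eq (a y : Fin n → ℕ) (i : Fin n) (hfull : ∀ q, q < i → y q = a q)
    (hslack : y i < a i) :
    Qmass a y = ∑ q ∈ Finset.univ.filter (fun q => q ≤ i), y q := by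
  unfold Qmass
  congr 1
  apply Finset.filter_congr
  intro q _
  constructor
  · intro hc
    by_contra h
    push_neg at h
    have := hc i h
    omega
  · intro hq q' hq'
    rw [hfull q' (lt_of_lt_of_le hq' hq)]

lemma Qmass_ge (a y : Fin n → ℕ) (i : Fin n) (hfull : ∀ q, q < i → y q = a q) :
    (∑ q ∈ Finset.univ.filter (fun q => q ≤ i), y q) ≤ Qmass a y := by
  unfold Qmass
  apply Finset.sum_le_sum_of_subset
  intro q hq
  simp only [Finset.mem_filter, Finset.mem_univ, true_and] at hq ⊢
  intro q' hq'
  rw [hfull q' (lt_of_lt_of_le hq' hq)]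

lemma sum_filter_le_split (i : Fin n) (f : Fin n → ℕ) :
    ∑ q ∈ Finset.univ.filter (fun q => q ≤ i), f q
      = f i + ∑ q ∈ Finset.univ.filter (fun q => q < i), f q := by
  have hset : Finset.univ.filter (fun q : Fin n => q ≤ i)
      = insert i (Finset.univ.filter (fun q => q < i)) := by
    ext q
    simp [le_iff_lt_or_eq, or_comm]
  rw [hset, Finset.sum_insert (by simp)]

variable (a : Fin n → ℕ) {i j e : Fin n} {s t w m : ℕ}

lemma lam_P2_lt (hij : i < j) (hje : j < e) (hs : s + 1 ≤ a i) (ht : t < a j) :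
    lamM a m (shape a i j e s (t+1) (w+1)) < lamM a m (shape a i j e (s+1) t (w+1)) := by
  have hie : i < e := hij.trans hje
  -- G equal
  have hG : Gdef a (shape a i j e s (t+1) (w+1)) = Gdef a (shape a i j e (s+1) t (w+1)) := by
    have h1 : shape a i j e s (t+1) (w+1) e ≠ 0 := by
      rw [shape_at_e a s (t+1) (w+1) hij hje]; omega
    have h2 : shape a i j e (s+1) t (w+1) e ≠ 0 := by
      rw [shape_at_e a (s+1) t (w+1) hij hje]; omega
    rw [Gdef_eq a _ e h1 (shape_zero_above a hij hje s (t+1) (w+1)),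
      Gdef_eq a _ e h2 (shape_zero_above a hij hje (s+1) t (w+1))]
    have hpt : ∀ q ∈ Finset.univ.filter (fun q : Fin n => q < e),
        (a q - shape a i j e s (t+1) (w+1) q) + (if q = j then 1 else 0)
        = (a q - shape a i j e (s+1) t (w+1) q) + (if q = i then 1 else 0) := by
      intro q hq
      simp only [Finset.mem_filter, Finset.mem_univ, true_and] at hq
      rcases lt_trichotomy q i with h|h|h
      · rw [shape_lt_i a s (t+1) (w+1) hij hje h, shape_lt_i a (s+1) t (w+1) hij hje h,
          if_neg (ne_of_lt h), if_neg (ne_of_lt (h.trans hij))]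
      · subst h
        rw [shape_at_i a s (t+1) (w+1) hij hje, shape_at_i a (s+1) t (w+1) hij hje,
          if_pos rfl, if_neg (ne_of_lt hij)]
        omega
      rcases lt_trichotomy q j with h2|h2|h2
      · rw [shape_ioo_ij a s (t+1) (w+1) hij hje h h2, shape_ioo_ij a (s+1) t (w+1) hij hje h h2,
          if_neg (ne_of_lt h2), if_neg (ne_of_gt h)]
      · subst h2
        rw [shape_at_j a s (t+1) (w+1) hij hje, shape_at_j a (s+1) t (w+1) hij hje,
          if_pos rfl, if_neg (ne_of_gt h)]
        omega
      · rw [shape_ioo_je a s (t+1) (w+1) hij hje h2 hq, shape_ioo_je a (s+1) t (w+1) hij hje h2 hq,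
          if_neg (ne_of_gt h2), if_neg (ne_of_gt h)]
    have himem : i ∈ Finset.univ.filter (fun q : Fin n => q < e) :=
      Finset.mem_filter.2 ⟨Finset.mem_univ _, hie⟩
    have hjmem : j ∈ Finset.univ.filter (fun q : Fin n => q < e) :=
      Finset.mem_filter.2 ⟨Finset.mem_univ _, hje⟩
    have hsums := Finset.sum_congr rfl hpt
    rw [Finset.sum_add_distrib, Finset.sum_add_distrib,
      Finset.sum_ite_eq' (Finset.univ.filter (fun q : Fin n => q < e)) j (fun _ => 1),
      Finset.sum_ite_eq' (Finset.univ.filter (fun q : Fin n => q < e)) i (fun _ => 1),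
      if_pos hjmem, if_pos himem] at hsums
    omega
  -- Q strict
  have hQ : Qmass a (shape a i j e s (t+1) (w+1)) < Qmass a (shape a i j e (s+1) t (w+1)) := by
    have hfullP2 := shape_full_below a hij hje s (t+1) (w+1)
    have hfullx := shape_full_below a hij hje (s+1) t (w+1)
    have hslackP2 : shape a i j e s (t+1) (w+1) i < a i := by
      rw [shape_at_i a s (t+1) (w+1) hij hje]; omega
    have hlow : ∀ v1 v2 v3 : ℕ, ∑ q ∈ Finset.univ.filter (fun q : Fin n => q < i),
        shape a i j e v1 v2 v3 q = ∑ q ∈ Finset.univ.filter (fun q : Fin n => q < i), a q := by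
      intro v1 v2 v3
      apply Finset.sum_congr rfl
      intro q hq
      simp only [Finset.mem_filter, Finset.mem_univ, true_and] at hq
      exact shape_lt_i a v1 v2 v3 hij hje hq
    have h1 : Qmass a (shape a i j e s (t+1) (w+1))
        = s + ∑ q ∈ Finset.univ.filter (fun q : Fin n => q < i), a q := by
      rw [Qmass_eq a _ i hfullP2 hslackP2, sum_filter_le_split,
        shape_at_i a s (t+1) (w+1) hij hje, hlow]
    have h2 : (s+1) + (∑ q ∈ Finset.univ.filter (fun q : Fin n => q < i), a q)
        ≤ Qmass a (shape a i j e (s+1) t (w+1)) := by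
      have := Qmass_ge a (shape a i j e (s+1) t (w+1)) i hfullx
      rw [sum_filter_le_split, shape_at_i a (s+1) t (w+1) hij hje, hlow] at this
      exact this
    omega
  unfold lamM
  rw [hG]
  exact Nat.add_lt_add_left hQ _
end MeasIneq2
section Knob
variable {n : ℕ}

/-- tuple abbreviations -/
abbrev Tu (n : ℕ) := (Fin n × Fin n × Fin n) × ℕ × ℕ × ℕ

def px (a : Fin n → ℕ) (p : Tu n) : Fin n → ℕ :=
  shape a p.1.1 p.1.2.1 p.1.2.2 (p.2.1+1) p.2.2.1 (p.2.2.2+1)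
def pW (a : Fin n → ℕ) (p : Tu n) : Fin n → ℕ :=
  shape a p.1.1 p.1.2.1 p.1.2.2 p.2.1 (p.2.2.1+1) p.2.2.2
def pc1 (a : Fin n → ℕ) (p : Tu n) : Fin n → ℕ :=
  shape a p.1.1 p.1.2.1 p.1.2.2 (p.2.1+1) p.2.2.1 p.2.2.2
def pc2 (a : Fin n → ℕ) (p : Tu n) : Fin n → ℕ :=
  shape a p.1.1 p.1.2.1 p.1.2.2 p.2.1 p.2.2.1 (p.2.2.2+1)
def pt1 (a : Fin n → ℕ) (p : Tu n) : Fin n → ℕ :=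
  shape a p.1.1 p.1.2.1 p.1.2.2 (p.2.1+1) (p.2.2.1+1) p.2.2.2
def pt2 (a : Fin n → ℕ) (p : Tu n) : Fin n → ℕ :=
  shape a p.1.1 p.1.2.1 p.1.2.2 p.2.1 (p.2.2.1+1) (p.2.2.2+1)

def Wcond (a : Fin n → ℕ) (m : ℕ) (y : Fin n → ℕ) (p : Tu n) : Prop :=
  p.1.1 < p.1.2.1 ∧ p.1.2.1 < p.1.2.2 ∧ p.2.1 + 1 ≤ a p.1.1 ∧ p.2.2.1 < a p.1.2.1 ∧
    p.2.2.2 + 1 ≤ a p.1.2.2 ∧ vsize (px a p) = m ∧ y = pW a p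

lemma Wcond_unique (a : Fin n → ℕ) {m : ℕ} {y : Fin n → ℕ} {p p' : Tu n}
    (hp : Wcond a m y p) (hp' : Wcond a m y p') : p = p' := by
  obtain ⟨h1, h2, h3, h4, h5, h6, h7⟩ := hp
  obtain ⟨h1', h2', h3', h4', h5', h6', h7'⟩ := hp'
  have heq : pW a p = pW a p' := by rw [← h7, ← h7']
  unfold pW at heq
  obtain ⟨e1, e2, e3, e4, e5, e6⟩ := W_inj a h1 h2 h1' h2'
    (by omega) (by omega) (by omega) (by omega) heq
  obtain ⟨⟨pi, pj, pe⟩, ps, pt, pw⟩ := p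
  obtain ⟨⟨pi', pj', pe'⟩, ps', pt', pw'⟩ := p'
  simp only at e1 e2 e3 e4 e5 e6
  simp [e1, e2, e3, e4, e5, e6]

open Classical in
noncomputable def Fknob (a : Fin n → ℕ) (m : ℕ) (g : (Fin n → ℕ) → ℝ) :
    ℕ → (Fin n → ℕ) → ℝ
  | 0, _ => 0
  | (k+1), y =>
    if h : ∃ p : Tu n, Wcond a m y p then
      max (g (pt1 a h.choose) + Fknob a m g k (pc2 a h.choose))
          (Fknob a m g k (pc1 a h.choose) + g (pt2 a h.choose))
        - g (px a h.choose)
    else 0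

lemma Wcond_nu_c1 (a : Fin n → ℕ) {m : ℕ} {y : Fin n → ℕ} {p : Tu n}
    (hp : Wcond a m y p) : nuM a m (pc1 a p) < nuM a m y := by
  obtain ⟨h1, h2, h3, h4, h5, h6, h7⟩ := hp
  rw [h7]
  exact nu_c1_lt a h1 h2 h3

lemma Wcond_nu_c2 (a : Fin n → ℕ) {m : ℕ} {y : Fin n → ℕ} {p : Tu n}
    (hp : Wcond a m y p) : nuM a m (pc2 a p) < nuM a m y := by
  obtain ⟨h1, h2, h3, h4, h5, h6, h7⟩ := hp
  rw [h7]
  exact nu_c2_lt a h1 h2 h3 h6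

lemma Fknob_stable (a : Fin n → ℕ) (m : ℕ) (g : (Fin n → ℕ) → ℝ) :
    ∀ k y, nuM a m y < k → Fknob a m g k y = Fknob a m g (nuM a m y + 1) y := by
  intro k
  induction k using Nat.strong_induction_on with
  | _ k IH =>
    intro y hy
    match k, hy with
    | (k+1), hy =>
      rw [Fknob, Fknob]
      by_cases h : ∃ p : Tu n, Wcond a m y p
      · rw [dif_pos h, dif_pos h]
        have hc1 := Wcond_nu_c1 a h.choose_spec
        have hc2 := Wcond_nu_c2 a h.choose_spec
        have e1 : Fknob a m g k (pc2 a h.choose)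
            = Fknob a m g (nuM a m y) (pc2 a h.choose) := by
          rw [IH k (Nat.lt_succ_self _) _ (by omega),
            IH (nuM a m y) hy _ (by omega)]
        have e2 : Fknob a m g k (pc1 a h.choose)
            = Fknob a m g (nuM a m y) (pc1 a h.choose) := by
          rw [IH k (Nat.lt_succ_self _) _ (by omega),
            IH (nuM a m y) hy _ (by omega)]
        rw [e1, e2]
      · rw [dif_neg h, dif_neg h]

noncomputable def Fk (a : Fin n → ℕ) (m : ℕ) (g : (Fin n → ℕ) → ℝ) (y : Fin n → ℕ) : ℝ :=
  Fknob a m g (nuM a m y + 1) y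

lemma Fk_eq (a : Fin n → ℕ) (m : ℕ) (g : (Fin n → ℕ) → ℝ) {y : Fin n → ℕ} {p : Tu n}
    (hp : Wcond a m y p) :
    Fk a m g y = max (g (pt1 a p) + Fk a m g (pc2 a p))
          (Fk a m g (pc1 a p) + g (pt2 a p)) - g (px a p) := by
  have h : ∃ p' : Tu n, Wcond a m y p' := ⟨p, hp⟩
  have hch : h.choose = p := Wcond_unique a h.choose_spec hp
  unfold Fk
  rw [Fknob, dif_pos h, hch]
  have hc1 := Wcond_nu_c1 a hp
  have hc2 := Wcond_nu_c2 a hp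
  rw [Fknob_stable a m g (nuM a m y) (pc2 a p) hc2,
    Fknob_stable a m g (nuM a m y) (pc1 a p) hc1]
end Knob
section Main
variable {n : ℕ}

lemma vsize_pos_ne_zero {y : Fin n → ℕ} (h : 1 ≤ vsize y) : y ≠ 0 := by
  intro hc
  rw [hc] at h
  simp [vsize] at h

lemma shape_mem_tbox (a : Fin n → ℕ) {i j e : Fin n} (hij : i < j) (hje : j < e)
    {s' t' w' mlo mhi : ℕ} (hs' : s' ≤ a i) (ht' : t' ≤ a j) (hw' : w' ≤ a e)
    (h1 : mlo ≤ vsize (shape a i j e s' t' w')) (h2 : vsize (shape a i j e s' t' w') ≤ mhi) :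
    shape a i j e s' t' w' ∈ tbox a mlo mhi :=
  ⟨shape_le a s' t' w' hij hje hs' ht' hw', h1, h2⟩

lemma shape_mem_basis (a : Fin n → ℕ) (ha : ∀ q, 0 < a q) {i j e : Fin n}
    (hij : i < j) (hje : j < e) {s' t' w' mlo mhi : ℕ}
    (hs' : s' ≤ a i) (ht' : t' ≤ a j) (hw' : w' ≤ a e)
    (hv : vsize (shape a i j e s' t' w') = mlo) (h1 : 1 ≤ mlo) (h2 : mlo ≤ mhi) :
    shape a i j e s' t' w' ∈ stdBasis a mlo mhi := by
  rcases shape_fint_or_sint a ha hij hje hs' ht' hw' (vsize_pos_ne_zero (hv ▸ h1)) with h|h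
  · exact Or.inr (Or.inl ⟨h, le_of_eq hv.symm, hv ▸ h2⟩)
  · exact Or.inl ⟨h, hv⟩

lemma shape_fint_mem_basis (a : Fin n → ℕ) {i j e : Fin n}
    (hij : i < j) (hje : j < e) {s' t' w' mlo mhi : ℕ}
    (hf : IsFint a (shape a i j e s' t' w'))
    (h1 : mlo ≤ vsize (shape a i j e s' t' w')) (h2 : vsize (shape a i j e s' t' w') ≤ mhi) :
    shape a i j e s' t' w' ∈ stdBasis a mlo mhi :=
  Or.inr (Or.inl ⟨hf, h1, h2⟩)

/-- The key agreement lemma: any TP function on the lower truncated box whose values on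
the lower standard basis are given by `g'` agrees with `g` on sints of size `m`. -/
lemma sint_agree (a : Fin n → ℕ) (ha : ∀ q, 0 < a q) (m m' : ℕ)
    (hm : 0 < m) (hmm : m ≤ m')
    (g : (Fin n → ℕ) → ℝ) (f : (Fin n → ℕ) → ℝ)
    (hfTP : TP3 (tbox a (m-1) m') f)
    (hfag : ∀ y ∈ stdBasis a (m-1) m', f y =
      if vsize y = m - 1 then Fk a m g y else g y) :
    ∀ x, IsSint a x → vsize x = m → f x = g x := by
  suffices H : ∀ N x, lamM a m x = N → IsSint a x → vsize x = m → f x = g x by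
    intro x hx hv
    exact H (lamM a m x) x rfl hx hv
  intro N
  induction N using Nat.strong_induction_on with
  | _ N IH =>
    intro x hN hsint hvs
    obtain ⟨i, j, e, s, t, w, hij, hje, hs, ht, hw, hxeq⟩ := sint_shape a ha hsint
    -- vsize bookkeeping
    have hb0 := vsize_spine_add a hij hje (s+1) t (w+1)
    rw [hxeq] at hvs
    have hm2 : 2 ≤ m := by omega
    have hv_z : vsize (shape a i j e s t w) = m - 2 := by
      have := vsize_spine_add a hij hje s t w; omega
    have hv_c1 : vsize (shape a i j e (s+1) t w) = m - 1 := by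
      have := vsize_spine_add a hij hje (s+1) t w; omega
    have hv_W : vsize (shape a i j e s (t+1) w) = m - 1 := by
      have := vsize_spine_add a hij hje s (t+1) w; omega
    have hv_c2 : vsize (shape a i j e s t (w+1)) = m - 1 := by
      have := vsize_spine_add a hij hje s t (w+1); omega
    have hv_P1 : vsize (shape a i j e (s+1) (t+1) w) = m := by
      have := vsize_spine_add a hij hje (s+1) (t+1) w; omega
    have hv_P2 : vsize (shape a i j e s (t+1) (w+1)) = m := by
      have := vsize_spine_add a hij hje s (t+1) (w+1); omega
    have hie : i < e := hij.trans hje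
    -- the TP3 instance
    have E1 : shape a i j e s t w + unitv n i = shape a i j e (s+1) t w :=
      shape_add_unitv_i a i j e s t w
    have E2 : shape a i j e s t w + unitv n j = shape a i j e s (t+1) w :=
      shape_add_unitv_j a i j e hij s t w
    have E3 : shape a i j e s t w + unitv n e = shape a i j e s t (w+1) :=
      shape_add_unitv_e a i j e hie hje s t w
    have E4 : shape a i j e (s+1) t w + unitv n j = shape a i j e (s+1) (t+1) w :=
      shape_add_unitv_j a i j e hij (s+1) t w
    have E5 : shape a i j e (s+1) t w + unitv n e = shape a i j e (s+1) t (w+1) :=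
      shape_add_unitv_e a i j e hie hje (s+1) t w
    have E6 : shape a i j e s (t+1) w + unitv n e = shape a i j e s (t+1) (w+1) :=
      shape_add_unitv_e a i j e hie hje s (t+1) w
    have rel := hfTP (shape a i j e s t w) i j e hij hje
      (by rw [E1, E5]; exact shape_mem_tbox a hij hje (by omega) (by omega) (by omega)
            (by omega) (by omega))
      (by rw [E2]; exact shape_mem_tbox a hij hje (by omega) (by omega) (by omega)
            (by omega) (by omega))
      (by rw [E1, E4]; exact shape_mem_tbox a hij hje (by omega) (by omega) (by omega)
            (by omega) (by omega))
      (by rw [E3]; exact shape_mem_tbox a hij hje (by omega) (by omega) (by omega)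
            (by omega) (by omega))
      (by rw [E1]; exact shape_mem_tbox a hij hje (by omega) (by omega) (by omega)
            (by omega) (by omega))
      (by rw [E2, E6]; exact shape_mem_tbox a hij hje (by omega) (by omega) (by omega)
            (by omega) (by omega))
    rw [E1, E2, E3, E4, E5, E6] at rel
    rw [← hxeq] at rel
    -- values at the three level-(m-1) points
    have hlvl : ∀ s' t' w', s' ≤ a i → t' ≤ a j → w' ≤ a e →
        vsize (shape a i j e s' t' w') = m - 1 →
        f (shape a i j e s' t' w') = Fk a m g (shape a i j e s' t' w') := by
      intro s' t' w' hs' ht' hw' hv'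
      rw [hfag _ (shape_mem_basis a ha hij hje hs' ht' hw' hv' (by omega) (by omega)),
        if_pos hv']
    have fW : f (shape a i j e s (t+1) w) = Fk a m g (shape a i j e s (t+1) w) :=
      hlvl s (t+1) w (by omega) (by omega) (by omega) hv_W
    have fc1 : f (shape a i j e (s+1) t w) = Fk a m g (shape a i j e (s+1) t w) :=
      hlvl (s+1) t w (by omega) (by omega) (by omega) hv_c1
    have fc2 : f (shape a i j e s t (w+1)) = Fk a m g (shape a i j e s t (w+1)) :=
      hlvl s t (w+1) (by omega) (by omega) (by omega) hv_c2
    -- values at the two level-m points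
    have hlvm : ∀ s' t' w', s' ≤ a i → t' ≤ a j → w' ≤ a e →
        vsize (shape a i j e s' t' w') = m →
        lamM a m (shape a i j e s' t' w') < N →
        f (shape a i j e s' t' w') = g (shape a i j e s' t' w') := by
      intro s' t' w' hs' ht' hw' hv' hlam
      rcases shape_fint_or_sint a ha hij hje hs' ht' hw' (vsize_pos_ne_zero (by omega)) with h|h
      · rw [hfag _ (shape_fint_mem_basis a hij hje h (by omega) (by omega)),
          if_neg (by omega)]
      · exact IH _ hlam _ rfl h hv'
    have hlam1 : lamM a m (shape a i j e (s+1) (t+1) w) < N := by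
      rw [← hN, hxeq]
      exact lam_P1_lt a hij hje ht hvs
    have hlam2 : lamM a m (shape a i j e s (t+1) (w+1)) < N := by
      rw [← hN, hxeq]
      exact lam_P2_lt a hij hje hs ht
    have fP1 : f (shape a i j e (s+1) (t+1) w) = g (shape a i j e (s+1) (t+1) w) :=
      hlvm (s+1) (t+1) w (by omega) (by omega) (by omega) hv_P1 hlam1
    have fP2 : f (shape a i j e s (t+1) (w+1)) = g (shape a i j e s (t+1) (w+1)) :=
      hlvm s (t+1) (w+1) (by omega) (by omega) (by omega) hv_P2 hlam2
    -- the Fk equation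
    have hWc : Wcond a m (shape a i j e s (t+1) w) ((i,j,e),(s,t,w)) := by
      refine ⟨hij, hje, hs, ht, hw, ?_, rfl⟩
      show vsize (shape a i j e (s+1) t (w+1)) = m
      omega
    have hFeq := Fk_eq a m g hWc
    unfold pt1 pt2 pc1 pc2 px at hFeq
    simp only at hFeq
    rw [fW, fc1, fc2, fP1, fP2] at rel
    rw [hFeq] at rel
    rw [hxeq] at rel ⊢
    linarith [rel]
end Main

/-- **Induction step for surjectivity** (Proposition 4): if the restriction map
`𝒯(B_{m−1}^{m'}(a)) → ℝ^{𝓑'}` to the standard basis of `B_{m-1}^{m'}(a)` is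
surjective (with `0 < m`), then so is the restriction map
`𝒯(B_m^{m'}(a)) → ℝ^{𝓑}` to the standard basis of `B_m^{m'}(a)`. -/
theorem surjectivity_induction_step {n : ℕ} (a : Fin n → ℕ) (ha : ∀ i, 0 < a i)
    (m m' : ℕ) (hm : 0 < m) (hmm : m ≤ m') (hm' : m' ≤ vsize a)
    (hsurj : ∀ g : (Fin n → ℕ) → ℝ, ∃ f : (Fin n → ℕ) → ℝ,
        IsTP (tbox a (m - 1) m') f ∧ ∀ x ∈ stdBasis a (m - 1) m', f x = g x) :
    ∀ g : (Fin n → ℕ) → ℝ, ∃ f : (Fin n → ℕ) → ℝ,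
        IsTP (tbox a m m') f ∧ ∀ x ∈ stdBasis a m m', f x = g x := by
  intro g
  obtain ⟨f, hfTP, hfag⟩ := hsurj (fun y => if vsize y = m - 1 then Fk a m g y else g y)
  have hsub : tbox a m m' ⊆ tbox a (m-1) m' := by
    intro y hy
    exact ⟨hy.1, le_trans (Nat.sub_le m 1) hy.2.1, hy.2.2⟩
  refine ⟨f, ⟨?_, ?_⟩, ?_⟩
  · intro x i j k h1 h2 b1 b2 b3 b4 b5 b6
    exact hfTP.1 x i j k h1 h2 (hsub b1) (hsub b2) (hsub b3) (hsub b4) (hsub b5) (hsub b6)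
  · intro x i j k l h1 h2 h3 b1 b2 b3 b4 b5 b6
    exact hfTP.2 x i j k l h1 h2 h3 (hsub b1) (hsub b2) (hsub b3) (hsub b4) (hsub b5) (hsub b6)
  · intro x hx
    rcases hx with ⟨hsint, hvs⟩ | ⟨hfint, hv1, hv2⟩ | ⟨h0, _⟩
    · exact sint_agree a ha m m' hm hmm g f hfTP.1 hfag x hsint hvs
    · rw [hfag x (Or.inr (Or.inl ⟨hfint, le_trans (by omega) hv1, hv2⟩))]
      exact if_neg (by omega)
    · exact absurd h0 (by omega)
end
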